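/- arXiv:2207.05237 — 7 statements merged into one kernel-verified Lean document; each statement's English description precedes it below -/
import Mathlib

section
/- Let p be a prime, k' a finite field of characteristic p, and A a commutative ℤ_p-algebra that is p-adically complete. Let 𝔖_A := (W(k') ⊗_{ℤ_p} A)[[u]] be the formal power series ring over W(k') ⊗_{ℤ_p} A, regarded as an A[[u]]-algebra via the map induced on coefficients by a ↦ 1 ⊗ a. Then an 𝔖_A-module M is projective as an 𝔖_A-module if and only if it is projective as an A[[u]]-module (via restriction of scalars). -/
open scoped TensorProduct

/-- The canonical `ℤ_p`-algebra structure on the Witt vectors of a ring of characteristic `p`,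
via the identification `W(𝔽_p) ≅ ℤ_p` and functoriality of Witt vectors. -/
noncomputable instance wittPadicAlgebra (p : ℕ) [Fact p.Prime]
    (k' : Type*) [CommRing k'] [CharP k' p] : Algebra ℤ_[p] (WittVector p k') :=
  ((WittVector.map (ZMod.castHom dvd_rfl k')).comp
    (WittVector.equiv p).symm.toRingHom).toAlgebra

set_option linter.unusedSectionVars false

namespace EGaux

variable (p : ℕ) [Fact p.Prime] (k' : Type*) [Field k'] [Fintype k'] [CharP k' p]

local notation "W" => WittVector p k'

lemma eq_mul_p_of_constantCoeff_eq_zero (x : W) (hx : WittVector.constantCoeff x = 0) :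
    ∃ y : W, x = y * (p : W) := by
  haveI : ExpChar k' p := .prime Fact.out
  by_cases h0 : x = 0
  · exact ⟨0, by simp [h0]⟩
  obtain ⟨n, b, hb0, rfl⟩ := WittVector.verschiebung_nonzero h0
  cases n with
  | zero =>
      rw [Function.iterate_zero_apply] at hx
      rw [WittVector.constantCoeff_apply] at hx
      exact absurd hx hb0
  | succ n =>
      obtain ⟨y, hy⟩ := (WittVector.frobenius_bijective p k').surjective
        ((⇑WittVector.verschiebung)^[n] b)
      refine ⟨y, ?_⟩
      rw [Function.iterate_succ_apply', ← hy, WittVector.verschiebung_frobenius]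

lemma mul_pow_p_coeff : ∀ (n : ℕ) (y : W) (i : ℕ), i < n → (y * (p : W) ^ n).coeff i = 0 := by
  intro n
  induction n with
  | zero => exact fun y i hi => absurd hi (Nat.not_lt_zero i)
  | succ n ih =>
      intro y i hi
      have h : y * (p : W) ^ (n + 1) = (y * (p : W) ^ n) * (p : W) := by ring
      rw [h]
      cases i with
      | zero => exact WittVector.mul_charP_coeff_zero _
      | succ i =>
          rw [WittVector.mul_charP_coeff_succ]
          rw [ih y i (Nat.lt_of_succ_lt_succ hi)]
          exact zero_pow (Fact.out : p.Prime).ne_zero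

lemma eq_zero_of_forall_dvd (x : W) (h : ∀ n : ℕ, ∃ y : W, x = y * (p : W) ^ n) : x = 0 := by
  ext i
  obtain ⟨y, hy⟩ := h (i + 1)
  rw [hy, mul_pow_p_coeff p k' (i + 1) y i (Nat.lt_succ_self i)]
  simp

lemma constantCoeff_algebraMap (c : ℤ_[p]) :
    WittVector.constantCoeff (algebraMap ℤ_[p] W c)
      = ZMod.castHom dvd_rfl k' (PadicInt.toZMod c) := by
  have hspec := PadicInt.toZMod_spec c
  rw [PadicInt.maximalIdeal_eq_span_p, Ideal.mem_span_singleton] at hspec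
  obtain ⟨t, ht⟩ := hspec
  have hc : c = ((PadicInt.toZMod c).val : ℤ_[p]) + (p : ℤ_[p]) * t := by
    have h1 : (ZMod.cast (PadicInt.toZMod c) : ℤ_[p]) = ((PadicInt.toZMod c).val : ℤ_[p]) :=
      (ZMod.natCast_val _).symm
    have h2 : c = (ZMod.cast (PadicInt.toZMod c) : ℤ_[p]) + (p : ℤ_[p]) * t := by
      rw [← ht]; ring
    rw [h1] at h2
    exact h2
  have : WittVector.constantCoeff (algebraMap ℤ_[p] W c)
      = ((WittVector.constantCoeff).comp (algebraMap ℤ_[p] W)) c := rfl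
  rw [this]
  conv_lhs => rw [hc]
  rw [map_add, map_mul, map_natCast, map_natCast, CharP.cast_eq_zero k' p, zero_mul,
    add_zero, ZMod.castHom_apply, ← ZMod.natCast_val]
lemma exists_basis : ∃ s : Set k', Nonempty (Module.Basis s ℤ_[p] W) := by
  classical
  haveI : ExpChar k' p := .prime Fact.out
  letI : Algebra (ZMod p) k' := ZMod.algebra k' p
  set ι : Set k' := Module.Basis.ofVectorSpaceIndex (ZMod p) k' with hι
  haveI : Fintype ι := Fintype.ofFinite _
  let β : Module.Basis ι (ZMod p) k' := Module.Basis.ofVectorSpace (ZMod p) k'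
  let x : ι → W := fun i => WittVector.teichmuller p (β i)
  have hx0 : ∀ i, WittVector.constantCoeff (x i) = β i := fun i => by
    rw [WittVector.constantCoeff_apply]
    exact WittVector.teichmuller_coeff_zero p (β i)
  have halg : ∀ a : ZMod p, (algebraMap (ZMod p) k') a = ZMod.castHom dvd_rfl k' a := fun a => rfl
  -- constant coefficient of a ℤ_p-linear combination
  have hπsum : ∀ c : ι → ℤ_[p], WittVector.constantCoeff (∑ i, c i • x i)
      = ∑ i, (PadicInt.toZMod (c i)) • β i := by
    intro c
    rw [map_sum]
    refine Finset.sum_congr rfl fun i _ => ?_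
    rw [Algebra.smul_def, map_mul, constantCoeff_algebraMap, hx0,
      Algebra.smul_def, halg]
  -- linear independence
  have hdvd : ∀ (n : ℕ) (c : ι → ℤ_[p]), (∑ i, c i • x i) = 0 →
      ∀ i, c i ∈ Ideal.span {(p : ℤ_[p]) ^ n} := by
    intro n
    induction n with
    | zero =>
        intro c _ i
        rw [pow_zero, Ideal.span_singleton_one]
        exact Submodule.mem_top
    | succ n ih =>
        intro c hc i
        have h0 : ∀ j, PadicInt.toZMod (c j) = 0 := by
          have hcc := congrArg WittVector.constantCoeff hc
          rw [hπsum, map_zero] at hcc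
          exact fun j =>
            Fintype.linearIndependent_iff.mp β.linearIndependent _ hcc j
        have hdiv : ∀ j, ∃ d, c j = (p : ℤ_[p]) * d := by
          intro j
          have hker : c j ∈ RingHom.ker (PadicInt.toZMod (p := p)) := h0 j
          rw [PadicInt.ker_toZMod, PadicInt.maximalIdeal_eq_span_p,
            Ideal.mem_span_singleton] at hker
          exact hker
        choose d hd using hdiv
        have hterm : ∀ j, (p : W) * (d j • x j) = c j • x j := fun j => by
          rw [hd j, mul_smul, ← map_natCast (algebraMap ℤ_[p] W) p, ← Algebra.smul_def]
        have hrel : (p : W) * ∑ j, d j • x j = 0 := by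
          rw [Finset.mul_sum, Finset.sum_congr rfl (fun j _ => hterm j), hc]
        have hsum0 : ∑ j, d j • x j = 0 := by
          rcases mul_eq_zero.mp hrel with h | h
          · exact absurd h (WittVector.p_nonzero p k')
          · exact h
        obtain ⟨e, he⟩ := Ideal.mem_span_singleton.mp (ih d hsum0 i)
        rw [Ideal.mem_span_singleton]
        exact ⟨e, by rw [hd i, he, pow_succ]; ring⟩
  have hindep : LinearIndependent ℤ_[p] x := by
    rw [Fintype.linearIndependent_iff]
    intro c hc i
    by_contra hne
    have hpos : 0 < ‖c i‖ := norm_pos_iff.mpr hne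
    have hplt : ((p : ℝ))⁻¹ < 1 := by
      rw [inv_lt_one_iff₀]
      right
      exact_mod_cast (Fact.out : p.Prime).one_lt
    obtain ⟨n, hn'⟩ := exists_pow_lt_of_lt_one hpos hplt
    have hle := (PadicInt.norm_le_pow_iff_mem_span_pow (c i) n).mpr (hdvd n c hc i)
    have : ((p : ℝ)) ^ (-(n : ℤ)) = ((p : ℝ))⁻¹ ^ n := by
      rw [zpow_neg, zpow_natCast, inv_pow]
    rw [this] at hle
    exact absurd (lt_of_le_of_lt hle hn') (lt_irrefl _)
  -- spanning
  have hstep : ∀ w : W, ∃ (δ : ι → ℤ_[p]) (w' : W),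
      w = (∑ i, δ i • x i) + w' * (p : W) := by
    intro w
    set a := β.repr (WittVector.constantCoeff w) with ha
    refine ⟨fun i => ((a i).val : ℤ_[p]), ?_⟩
    have hcoeff : WittVector.constantCoeff (w - ∑ i, ((a i).val : ℤ_[p]) • x i) = 0 := by
      rw [map_sub, hπsum]
      have htz : ∀ i : ι, PadicInt.toZMod (((a i).val : ℤ_[p])) = a i := fun i => by
        rw [map_natCast, ZMod.natCast_val, ZMod.cast_id]
      rw [Finset.sum_congr rfl (fun i _ => by rw [htz i]), Module.Basis.sum_repr]
      exact sub_self _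
    obtain ⟨w', hw'⟩ := eq_mul_p_of_constantCoeff_eq_zero p k' _ hcoeff
    refine ⟨w', ?_⟩
    have := sub_eq_iff_eq_add.mp hw'
    rw [this]; ring
  choose δf wf hstepf using hstep
  have hspan : ⊤ ≤ Submodule.span ℤ_[p] (Set.range x) := by
    intro w _
    let Wn : ℕ → W := fun n => wf^[n] w
    have hWn : ∀ n, Wn (n + 1) = wf (Wn n) := fun n => Function.iterate_succ_apply' wf n w
    let part : ι → ℕ → ℤ_[p] := fun i n => ∑ k ∈ Finset.range n, (p : ℤ_[p]) ^ k * δf (Wn k) i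
    have hterm2 : ∀ (k : ℕ) (z : ℤ_[p]) (j : ι),
        ((p : ℤ_[p]) ^ k * z) • x j = ((z • x j) * (p : W) ^ k) := fun k z j => by
      rw [mul_smul, Algebra.smul_def, map_pow, map_natCast, mul_comm]
    have hpart : ∀ n, w = (∑ i, part i n • x i) + Wn n * (p : W) ^ n := by
      intro n
      induction n with
      | zero => simp [part, Wn]
      | succ n ihn =>
          have hexp : (∑ i, part i (n + 1) • x i)
              = (∑ i, part i n • x i) + ∑ i, ((p : ℤ_[p]) ^ n * δf (Wn n) i) • x i := by
            rw [← Finset.sum_add_distrib]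
            refine Finset.sum_congr rfl fun i _ => ?_
            show (∑ k ∈ Finset.range (n+1), (p : ℤ_[p]) ^ k * δf (Wn k) i) • x i = _
            rw [Finset.sum_range_succ, add_smul]
          have hs := hstepf (Wn n)
          calc w = (∑ i, part i n • x i) + Wn n * (p : W) ^ n := ihn
            _ = (∑ i, part i n • x i)
                + ((∑ i, δf (Wn n) i • x i) + wf (Wn n) * (p : W)) * (p : W) ^ n := by rw [← hs]
            _ = (∑ i, part i (n + 1) • x i) + Wn (n + 1) * (p : W) ^ (n + 1) := by
                have h3 : (∑ i, δf (Wn n) i • x i + wf (Wn n) * (p : W)) * (p : W) ^ n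
                    = (∑ i, ((p : ℤ_[p]) ^ n * δf (Wn n) i) • x i)
                      + wf (Wn n) * (p : W) ^ (n + 1) := by
                  rw [add_mul, Finset.sum_mul,
                    Finset.sum_congr rfl fun i _ => (hterm2 n (δf (Wn n) i) i).symm]
                  ring
                rw [hexp, hWn n, h3]
                ring
    have hcauchy : ∀ i, ∃ L : ℤ_[p], ∀ n, part i n ≡ L
        [SMOD ((IsLocalRing.maximalIdeal ℤ_[p]) ^ n • ⊤ : Submodule ℤ_[p] ℤ_[p])] := by
      intro i
      refine IsPrecomplete.prec inferInstance ?_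
      intro m n hmn
      rw [SModEq.sub_mem]
      have hid : ((IsLocalRing.maximalIdeal ℤ_[p]) ^ m • ⊤ : Submodule ℤ_[p] ℤ_[p])
          = Ideal.span {(p : ℤ_[p]) ^ m} := by
        rw [smul_eq_mul, Ideal.mul_top, PadicInt.maximalIdeal_eq_span_p,
          Ideal.span_singleton_pow]
      rw [hid, Ideal.mem_span_singleton]
      have hsub : part i n - part i m = ∑ k ∈ Finset.Ico m n, (p : ℤ_[p]) ^ k * δf (Wn k) i :=
        (Finset.sum_Ico_eq_sub _ hmn).symm
      have : (p : ℤ_[p]) ^ m ∣ part i n - part i m := by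
        rw [hsub]
        refine Finset.dvd_sum fun k hk => ?_
        exact Dvd.dvd.mul_right (pow_dvd_pow _ (Finset.mem_Ico.mp hk).1) _
      rw [← neg_sub]
      exact this.neg_right
    choose cc hcc using hcauchy
    have hfin : w = ∑ i, cc i • x i := by
      have hdiff : ∀ n : ℕ, ∃ y : W, w - ∑ i, cc i • x i = y * (p : W) ^ n := by
        intro n
        have hmem : ∀ i, ∃ t, cc i - part i n = (p : ℤ_[p]) ^ n * t := by
          intro i
          have := (hcc i n).symm
          rw [SModEq.sub_mem] at this
          have hid : ((IsLocalRing.maximalIdeal ℤ_[p]) ^ n • ⊤ : Submodule ℤ_[p] ℤ_[p])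
              = Ideal.span {(p : ℤ_[p]) ^ n} := by
            rw [smul_eq_mul, Ideal.mul_top, PadicInt.maximalIdeal_eq_span_p,
              Ideal.span_singleton_pow]
          rw [hid, Ideal.mem_span_singleton] at this
          exact this
        choose t ht using hmem
        refine ⟨Wn n - ∑ i, t i • x i, ?_⟩
        have h1 : ∑ i, cc i • x i = (∑ i, part i n • x i) + ∑ i, ((p : ℤ_[p]) ^ n * t i) • x i := by
          rw [← Finset.sum_add_distrib]
          refine Finset.sum_congr rfl fun i _ => ?_
          rw [← add_smul, ← ht i]
          congr 1
          ring
        have h2 : ∑ i, ((p : ℤ_[p]) ^ n * t i) • x i = (∑ i, t i • x i) * (p : W) ^ n := by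
          rw [Finset.sum_mul]
          exact Finset.sum_congr rfl fun i _ => hterm2 n (t i) i
        rw [hpart n, h1, h2]
        ring
      have := eq_zero_of_forall_dvd p k' _ hdiff
      exact sub_eq_zero.mp this
    rw [hfin]
    exact Submodule.sum_mem _ fun i _ =>
      Submodule.smul_mem _ _ (Submodule.subset_span ⟨i, rfl⟩)
  exact ⟨ι, ⟨Module.Basis.mk hindep hspan⟩⟩
lemma formallyUnramified : Algebra.FormallyUnramified ℤ_[p] W := by
  haveI : ExpChar k' p := .prime Fact.out
  obtain ⟨s, ⟨b⟩⟩ := exists_basis p k'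
  haveI : Fintype s := Fintype.ofFinite _
  haveI : Module.Finite ℤ_[p] W := Module.Finite.of_basis b
  haveI : Algebra.FiniteType ℤ_[p] W := Module.Finite.finiteType W
  haveI : Algebra.EssFiniteType ℤ_[p] W := Algebra.EssFiniteType.of_finiteType _ _
  haveI : Module.Finite W (Ω[W⁄ℤ_[p]]) := KaehlerDifferential.finite ℤ_[p] W
  have htop : (⊤ : Submodule W (Ω[W⁄ℤ_[p]])) = ⊥ := by
    refine Submodule.eq_bot_of_le_smul_of_le_jacobson_bot (Ideal.span {(p : W)}) ⊤
      (Module.finite_def.mp inferInstance) ?_ ?_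
    · have hgen : Submodule.span W (Set.range (KaehlerDifferential.D ℤ_[p] W))
          ≤ Ideal.span {(p : W)} • (⊤ : Submodule W (Ω[W⁄ℤ_[p]])) := by
        rw [Submodule.span_le]
        rintro _ ⟨y0, rfl⟩
        obtain ⟨y, rfl⟩ := (WittVector.frobenius_bijective p k').surjective y0
        have hcz : WittVector.constantCoeff (WittVector.frobenius y - y ^ p) = 0 := by
          rw [map_sub, map_pow, WittVector.constantCoeff_apply, WittVector.constantCoeff_apply,
            WittVector.coeff_frobenius_charP, sub_self]
        obtain ⟨z, hz⟩ := eq_mul_p_of_constantCoeff_eq_zero p k' _ hcz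
        have hy : WittVector.frobenius y = y ^ p + z * (p : W) := by rw [← hz]; ring
        rw [SetLike.mem_coe, hy, map_add]
        have h1 : (KaehlerDifferential.D ℤ_[p] W) (y ^ p)
            ∈ Ideal.span {(p : W)} • (⊤ : Submodule W (Ω[W⁄ℤ_[p]])) := by
          rw [Derivation.leibniz_pow, ← Nat.cast_smul_eq_nsmul W]
          exact Submodule.smul_mem_smul (Ideal.subset_span (Set.mem_singleton _))
            Submodule.mem_top
        have h2 : (KaehlerDifferential.D ℤ_[p] W) (z * (p : W))
            ∈ Ideal.span {(p : W)} • (⊤ : Submodule W (Ω[W⁄ℤ_[p]])) := by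
          rw [Derivation.leibniz, Derivation.map_natCast, smul_zero, zero_add]
          exact Submodule.smul_mem_smul (Ideal.subset_span (Set.mem_singleton _))
            Submodule.mem_top
        exact Submodule.add_mem _ h1 h2
      exact le_trans (le_of_eq (KaehlerDifferential.span_range_derivation ℤ_[p] W).symm) hgen
    · rw [Ideal.span_le]
      intro q hq
      rw [Set.mem_singleton_iff] at hq
      subst hq
      rw [SetLike.mem_coe, Ideal.mem_jacobson_bot]
      intro y
      apply WittVector.isUnit_of_coeff_zero_ne_zero
      have hone : WittVector.constantCoeff ((p : W) * y + 1) = 1 := by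
        rw [map_add, map_mul, map_natCast, CharP.cast_eq_zero k' p, zero_mul, zero_add, map_one]
      rw [WittVector.constantCoeff_apply] at hone
      rw [hone]
      exact one_ne_zero
  constructor
  refine subsingleton_of_forall_eq 0 fun ω => ?_
  have hω : ω ∈ (⊥ : Submodule W (Ω[W⁄ℤ_[p]])) := htop ▸ Submodule.mem_top
  simpa using hω

theorem projective_of_projective_of_free (R S M : Type*) [CommRing R] [CommRing S] [Algebra R S]
    [AddCommGroup M] [Module R M] [Module S M] [IsScalarTower R S M]
    [Module.Free R S] [Module.Projective S M] : Module.Projective R M := by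
  obtain ⟨sec, hsec⟩ := Module.projective_def'.mp ‹Module.Projective S M›
  refine Module.Projective.of_split (R := R) (M := M →₀ S)
    (sec.restrictScalars R) ((Finsupp.linearCombination S id).restrictScalars R) ?_
  ext m
  exact DFunLike.congr_fun hsec m

end EGaux

set_option maxHeartbeats 1000000 in
set_option synthInstance.maxHeartbeats 400000 in
/-- Let `p` be a prime, `k'` a finite field of characteristic `p`, and `A` a commutative,
`p`-adically complete `ℤ_p`-algebra.  Let `𝔖_A := (W(k') ⊗_{ℤ_p} A)[[u]]`, regarded as an
`A[[u]]`-algebra via the map induced on coefficients by `a ↦ 1 ⊗ a`.  Then an `𝔖_A`-module `M`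
is projective over `𝔖_A` if and only if it is projective as an `A[[u]]`-module via restriction
of scalars. -/
theorem projective_SA_iff_projective_AU
    (p : ℕ) [Fact p.Prime] (k' : Type*) [Field k'] [Fintype k'] [CharP k' p]
    (A : Type*) [CommRing A] [Algebra ℤ_[p] A]
    (hA : IsAdicComplete (Ideal.span {(p : A)}) A)
    (M : Type*) [AddCommGroup M]
    [Module (PowerSeries (WittVector p k' ⊗[ℤ_[p]] A)) M]
    [Module (PowerSeries A) M]
    (hcompat : ∀ (g : PowerSeries A) (m : M),
      g • m = (PowerSeries.map (Algebra.TensorProduct.includeRight :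
        A →ₐ[ℤ_[p]] WittVector p k' ⊗[ℤ_[p]] A).toRingHom g) • m) :
    Module.Projective (PowerSeries (WittVector p k' ⊗[ℤ_[p]] A)) M ↔
      Module.Projective (PowerSeries A) M := by
  classical
  obtain ⟨s, ⟨βW⟩⟩ := EGaux.exists_basis p k'
  haveI : Fintype s := Fintype.ofFinite _
  haveI : Algebra.FormallyUnramified ℤ_[p] (WittVector p k') := EGaux.formallyUnramified p k'
  letI : Algebra A (WittVector p k' ⊗[ℤ_[p]] A) :=
    (Algebra.TensorProduct.includeRight (R := ℤ_[p]) (A := WittVector p k')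
      (B := A)).toRingHom.toAlgebra
  -- the `A`-algebra isomorphism `A ⊗ W ≃ W ⊗ A`
  let eAB : (A ⊗[ℤ_[p]] WittVector p k') ≃ₐ[A] (WittVector p k' ⊗[ℤ_[p]] A) :=
    AlgEquiv.ofRingEquiv (f := (Algebra.TensorProduct.comm ℤ_[p] A (WittVector p k')).toRingEquiv)
      (fun a => by
        rw [RingHom.algebraMap_toAlgebra]
        show (Algebra.TensorProduct.comm ℤ_[p] A (WittVector p k'))
            (algebraMap A (A ⊗[ℤ_[p]] WittVector p k') a)
          = Algebra.TensorProduct.includeRight a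
        rw [Algebra.TensorProduct.algebraMap_apply, Algebra.TensorProduct.comm_tmul,
          Algebra.TensorProduct.includeRight_apply, Algebra.algebraMap_self_apply])
  haveI : Algebra.FormallyUnramified A (WittVector p k' ⊗[ℤ_[p]] A) :=
    Algebra.FormallyUnramified.of_equiv eAB
  let bB : Module.Basis s A (WittVector p k' ⊗[ℤ_[p]] A) := (βW.baseChange A).map eAB.toLinearEquiv
  haveI : Module.Free A (WittVector p k' ⊗[ℤ_[p]] A) := Module.Free.of_basis bB
  -- power series rings
  let ψ : PowerSeries A →+* PowerSeries (WittVector p k' ⊗[ℤ_[p]] A) :=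
    PowerSeries.map (algebraMap A (WittVector p k' ⊗[ℤ_[p]] A))
  letI : Algebra (PowerSeries A) (PowerSeries (WittVector p k' ⊗[ℤ_[p]] A)) := ψ.toAlgebra
  have hψC : ∀ a : A, ψ (PowerSeries.C (R := A) a)
      = PowerSeries.C (R := WittVector p k' ⊗[ℤ_[p]] A) (algebraMap A _ a) := fun a => by
    exact PowerSeries.map_C _ a
  have htower : ∀ a : A, algebraMap A (PowerSeries (WittVector p k' ⊗[ℤ_[p]] A)) a
      = ψ (algebraMap A (PowerSeries A) a) := fun a => by
    rw [PowerSeries.algebraMap_apply (R := A) (A := A), Algebra.algebraMap_self_apply, hψC a,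
      PowerSeries.algebraMap_apply]
  haveI : IsScalarTower A (PowerSeries A) (PowerSeries (WittVector p k' ⊗[ℤ_[p]] A)) :=
    IsScalarTower.of_algebraMap_eq fun a => by
      rw [htower a, RingHom.algebraMap_toAlgebra]
  haveI : IsScalarTower A (WittVector p k' ⊗[ℤ_[p]] A)
      (PowerSeries (WittVector p k' ⊗[ℤ_[p]] A)) :=
    IsScalarTower.of_algebraMap_eq fun a => by
      rw [PowerSeries.algebraMap_apply (R := A), PowerSeries.algebraMap_apply
        (R := WittVector p k' ⊗[ℤ_[p]] A), Algebra.algebraMap_self_apply]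
  -- the R-algebra homomorphism `R ⊗[A] B →ₐ[R] S`
  let gB : (WittVector p k' ⊗[ℤ_[p]] A) →ₐ[A]
      PowerSeries (WittVector p k' ⊗[ℤ_[p]] A) :=
    IsScalarTower.toAlgHom A (WittVector p k' ⊗[ℤ_[p]] A) _
  have hgB : ∀ b, gB b = PowerSeries.C (R := WittVector p k' ⊗[ℤ_[p]] A) b := fun b => by
    show algebraMap _ _ b = _
    rw [PowerSeries.algebraMap_apply (R := WittVector p k' ⊗[ℤ_[p]] A),
      Algebra.algebraMap_self_apply]
  let Ψ : (PowerSeries A ⊗[A] (WittVector p k' ⊗[ℤ_[p]] A)) →ₐ[PowerSeries A]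
      PowerSeries (WittVector p k' ⊗[ℤ_[p]] A) :=
    Algebra.TensorProduct.lift (Algebra.ofId _ _) gB (fun x y => Commute.all _ _)
  have hΨ : ∀ (g : PowerSeries A) (b : WittVector p k' ⊗[ℤ_[p]] A),
      Ψ (g ⊗ₜ[A] b) = ψ g * PowerSeries.C b := fun g b => by
    rw [Algebra.TensorProduct.lift_tmul, hgB]
    rfl
  -- coefficientwise description
  have hcoeff : ∀ (b : WittVector p k' ⊗[ℤ_[p]] A) (g : PowerSeries A) (n : ℕ),
      PowerSeries.coeff n (ψ g * PowerSeries.C b) = (PowerSeries.coeff (R := A) n g) • b := by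
    intro b g n
    rw [mul_comm, PowerSeries.coeff_C_mul, PowerSeries.coeff_map, Algebra.smul_def]
    exact mul_comm _ _
  -- bijectivity of Ψ
  have hsurj : Function.Surjective Ψ := by
    intro f
    refine ⟨∑ i, (PowerSeries.mk fun n => bB.repr (PowerSeries.coeff n f) i) ⊗ₜ[A] bB i, ?_⟩
    rw [map_sum]
    refine PowerSeries.ext fun n => ?_
    rw [map_sum]
    rw [Finset.sum_congr rfl fun i _ => by rw [hΨ, hcoeff, PowerSeries.coeff_mk]]
    exact Module.Basis.sum_repr bB _
  let bT : Module.Basis s (PowerSeries A) (PowerSeries A ⊗[A] (WittVector p k' ⊗[ℤ_[p]] A)) :=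
    bB.baseChange (PowerSeries A)
  have hinj : Function.Injective Ψ := by
    rw [injective_iff_map_eq_zero]
    intro x hx
    have hrepr : x = ∑ i, bT.repr x i • bT i := (Module.Basis.sum_repr bT x).symm
    have hΨx : Ψ x = ∑ i, ψ (bT.repr x i) * PowerSeries.C (bB i) := by
      conv_lhs => rw [hrepr]
      rw [map_sum]
      refine Finset.sum_congr rfl fun i _ => ?_
      rw [map_smul]
      have hbT : bT i = (1 : PowerSeries A) ⊗ₜ[A] bB i := Module.Basis.baseChange_apply _ _ _
      rw [hbT, hΨ, map_one, one_mul, Algebra.smul_def, RingHom.algebraMap_toAlgebra]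
    rw [hΨx] at hx
    have hzero : ∀ n i, PowerSeries.coeff (R := A) n (bT.repr x i) = 0 := by
      intro n i
      have := congrArg (PowerSeries.coeff n) hx
      rw [map_sum, map_zero] at this
      rw [Finset.sum_congr rfl fun j _ => hcoeff (bB j) (bT.repr x j) n] at this
      exact Fintype.linearIndependent_iff.mp bB.linearIndependent _ this i
    have hall : ∀ i, bT.repr x i = 0 := fun i =>
      PowerSeries.ext fun n => by rw [hzero n i, map_zero]
    rw [hrepr]
    simp [hall]
  let ΨE := AlgEquiv.ofBijective Ψ ⟨hinj, hsurj⟩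
  let bS : Module.Basis s (PowerSeries A) (PowerSeries (WittVector p k' ⊗[ℤ_[p]] A)) :=
    bT.map ΨE.toLinearEquiv
  haveI : Module.Free (PowerSeries A) (PowerSeries (WittVector p k' ⊗[ℤ_[p]] A)) :=
    Module.Free.of_basis bS
  haveI : Module.Finite (PowerSeries A) (PowerSeries (WittVector p k' ⊗[ℤ_[p]] A)) :=
    Module.Finite.of_basis bS
  haveI : Algebra.FiniteType (PowerSeries A) (PowerSeries (WittVector p k' ⊗[ℤ_[p]] A)) :=
    Module.Finite.finiteType _
  haveI : Algebra.EssFiniteType (PowerSeries A) (PowerSeries (WittVector p k' ⊗[ℤ_[p]] A)) :=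
    Algebra.EssFiniteType.of_finiteType _ _
  haveI : Algebra.FormallyUnramified (PowerSeries A)
      (PowerSeries A ⊗[A] (WittVector p k' ⊗[ℤ_[p]] A)) := inferInstance
  haveI : Algebra.FormallyUnramified (PowerSeries A)
      (PowerSeries (WittVector p k' ⊗[ℤ_[p]] A)) :=
    Algebra.FormallyUnramified.of_equiv ΨE
  haveI : IsScalarTower (PowerSeries A) (PowerSeries (WittVector p k' ⊗[ℤ_[p]] A)) M := by
    constructor
    intro r t m
    rw [Algebra.smul_def, RingHom.algebraMap_toAlgebra, mul_smul]
    exact (hcompat r (t • m)).symm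
  constructor
  · intro hS
    exact EGaux.projective_of_projective_of_free (PowerSeries A)
      (PowerSeries (WittVector p k' ⊗[ℤ_[p]] A)) M
  · intro hR
    exact Algebra.FormallyUnramified.projective_of_restrictScalars (PowerSeries A)
      (PowerSeries (WittVector p k' ⊗[ℤ_[p]] A)) M
end

section
/- The kernel and cokernel of ∂ : C⁰ → C¹ are finite-dimensional F-vector spaces, and dim_F coker ∂ = dim_F ker ∂ + Σ_{i=0}^{f−1} #{ j ∈ ℤ : 0 ≤ j < r_i and j ≡ r_i + c_i − d_i (mod N) }. (In the paper's formulation: the space Ext¹ of extensions of the rank one Breuil–Kisin module M(r,a,c) by M(s,b,d) has F-dimension Δ + Σ_{i=0}^{f−1} #{ j ∈ [0, r_i) : j ≡ r_i + c_i − d_i (mod e(K'/K)) }, where Δ = dim_F Hom(M(r,a,c), M(s,b,d)) = dim_F ker ∂.) -/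
noncomputable section

open PowerSeries

/-- Tuples of power series whose nonzero coefficients occur only in degrees lying in the
prescribed congruence classes `e i` modulo `N`. -/
def goodTuples (F : Type*) [Field F] (f N : ℕ) (e : ZMod f → ZMod N) :
    Submodule F (ZMod f → PowerSeries F) where
  carrier := { μ | ∀ i n, (PowerSeries.coeff n) (μ i) ≠ 0 → (n : ZMod N) = e i }
  zero_mem' := by intro i n hn; simp at hn
  add_mem' := by
    intro x y hx hy i n hn
    by_cases h1 : (PowerSeries.coeff n) (x i) = 0
    · refine hy i n fun h2 => hn ?_
      simp [Pi.add_apply, map_add, h1, h2]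
    · exact hx i n h1
  smul_mem' := by
    intro t x hx i n hn
    refine hx i n fun h0 => hn ?_
    simp [Pi.smul_apply, map_smul, h0]

/-- The substitution `u ↦ u^p` on power series. -/
def expandPS (F : Type*) [Field F] (p : ℕ) (μ : PowerSeries F) : PowerSeries F :=
  PowerSeries.mk fun n => if p ∣ n then (PowerSeries.coeff (n / p)) μ else 0

theorem coeff_expandPS (F : Type*) [Field F] (p n : ℕ) (μ : PowerSeries F) :
    (PowerSeries.coeff n) (expandPS F p μ) =
      if p ∣ n then (PowerSeries.coeff (n / p)) μ else 0 :=
  PowerSeries.coeff_mk _ _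

theorem expandPS_add (F : Type*) [Field F] (p : ℕ) (μ ν : PowerSeries F) :
    expandPS F p (μ + ν) = expandPS F p μ + expandPS F p ν := by
  ext n
  simp only [map_add, coeff_expandPS]
  split <;> simp

theorem expandPS_smul (F : Type*) [Field F] (p : ℕ) (t : F) (μ : PowerSeries F) :
    expandPS F p (t • μ) = t • expandPS F p μ := by
  ext n
  simp only [map_smul, coeff_expandPS]
  split <;> simp

/-- The map `∂` of the explicit complex computing homomorphisms and extensions of rank one
Breuil–Kisin modules with tame descent data:
`∂((μ_j))_i = -a_i u^{r_i} μ_i + b_i u^{s_i} μ_{i-1}(u^p)`. -/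
def delMap (F : Type*) [Field F] (p f : ℕ) (a b : ZMod f → F) (r s : ZMod f → ℕ) :
    (ZMod f → PowerSeries F) →ₗ[F] (ZMod f → PowerSeries F) where
  toFun μ := fun i => -(PowerSeries.C (a i) * PowerSeries.X ^ r i * μ i)
      + PowerSeries.C (b i) * PowerSeries.X ^ s i * expandPS F p (μ (i - 1))
  map_add' := by
    intro x y
    funext i
    simp only [Pi.add_apply, expandPS_add, mul_add]
    ring
  map_smul' := by
    intro t x
    funext i
    simp only [Pi.smul_apply, RingHom.id_apply]
    rw [expandPS_smul]
    simp only [PowerSeries.smul_eq_C_mul]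
    ring

end


noncomputable section Aux

open PowerSeries Module


open Module

lemma index_lemma {F V W V₀ W₀ : Type*} [Field F]
    [AddCommGroup V] [Module F V] [AddCommGroup W] [Module F W]
    [AddCommGroup V₀] [Module F V₀] [AddCommGroup W₀] [Module F W₀]
    [FiniteDimensional F V₀] [FiniteDimensional F W₀]
    (T : V →ₗ[F] W) (π : V →ₗ[F] V₀) (ρ : W →ₗ[F] W₀)
    (hπ : Function.Surjective π) (hρ : Function.Surjective ρ)
    (h1 : ∀ v, π v = 0 → ρ (T v) = 0)
    (h2 : ∀ v, π v = 0 → T v = 0 → v = 0)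
    (h3 : ∀ w, ρ w = 0 → ∃ v, π v = 0 ∧ T v = w) :
    FiniteDimensional F (LinearMap.ker T) ∧
    FiniteDimensional F (W ⧸ LinearMap.range T) ∧
    finrank F (W ⧸ LinearMap.range T) + finrank F V₀ =
      finrank F (LinearMap.ker T) + finrank F W₀ := by
  -- quotients
  have hle : LinearMap.ker π ≤ (LinearMap.ker ρ).comap T := by
    intro v hv
    simpa [LinearMap.mem_ker] using h1 v hv
  set S : (V ⧸ LinearMap.ker π) →ₗ[F] (W ⧸ LinearMap.ker ρ) :=
    Submodule.mapQ _ _ T hle with hS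
  have eV : (V ⧸ LinearMap.ker π) ≃ₗ[F] V₀ := π.quotKerEquivOfSurjective hπ
  have eW : (W ⧸ LinearMap.ker ρ) ≃ₗ[F] W₀ := ρ.quotKerEquivOfSurjective hρ
  have fdV : FiniteDimensional F (V ⧸ LinearMap.ker π) := Module.Finite.equiv eV.symm
  have fdW : FiniteDimensional F (W ⧸ LinearMap.ker ρ) := Module.Finite.equiv eW.symm
  -- kernel equivalence
  have kerEq : Nonempty ((LinearMap.ker T) ≃ₗ[F] (LinearMap.ker S)) := by
    refine ⟨LinearEquiv.ofBijective ?_ ?_⟩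
    · refine LinearMap.codRestrict _ ((Submodule.mkQ _).comp (LinearMap.ker T).subtype) ?_
      intro x
      simp only [LinearMap.mem_ker, LinearMap.comp_apply, Submodule.mkQ_apply, hS,
        Submodule.mapQ_apply]
      rw [Submodule.subtype_apply, show T x.1 = 0 from x.2]
      simp
    · constructor
      · intro x y hxy
        have : Submodule.mkQ (LinearMap.ker π) x.1 = Submodule.mkQ _ y.1 :=
          congrArg Subtype.val hxy
        have hsub : (x.1 : V) - y.1 ∈ LinearMap.ker π := by
          rwa [Submodule.mkQ_apply, Submodule.mkQ_apply, Submodule.Quotient.eq] at this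
        have : x.1 - y.1 = 0 := h2 _ hsub (by
          rw [map_sub, show T x.1 = 0 from x.2, show T y.1 = 0 from y.2, sub_zero])
        exact Subtype.ext (by rwa [sub_eq_zero] at this)
      · rintro ⟨q, hq⟩
        obtain ⟨v, rfl⟩ := Submodule.mkQ_surjective _ q
        have : ρ (T v) = 0 := by
          have := hq
          simp only [LinearMap.mem_ker, hS, Submodule.mapQ_apply, Submodule.mkQ_apply,
            Submodule.Quotient.mk_eq_zero, LinearMap.mem_ker] at this
          simpa [LinearMap.mem_ker] using this
        obtain ⟨u, hu1, hu2⟩ := h3 (T v) this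
        refine ⟨⟨v - u, by simp [LinearMap.mem_ker, map_sub, hu2]⟩, ?_⟩
        apply Subtype.ext
        simp only [LinearMap.codRestrict_apply, LinearMap.comp_apply, Submodule.subtype_apply,
          Submodule.mkQ_apply, Submodule.Quotient.eq]
        simpa [LinearMap.mem_ker] using hu1
  obtain ⟨ek⟩ := kerEq
  -- range equality
  have rangeEq : LinearMap.range S = (LinearMap.range T).map (Submodule.mkQ (LinearMap.ker ρ)) := by
    apply le_antisymm
    · rintro q ⟨x, rfl⟩
      obtain ⟨v, rfl⟩ := Submodule.mkQ_surjective _ x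
      exact ⟨T v, ⟨v, rfl⟩, by simp [hS, Submodule.mapQ_apply]⟩
    · rintro q ⟨w, ⟨v, rfl⟩, rfl⟩
      exact ⟨Submodule.mkQ _ v, by simp [hS, Submodule.mapQ_apply]⟩
  have hker_range : LinearMap.ker ρ ≤ LinearMap.range T := by
    intro w hw
    obtain ⟨v, _, hv2⟩ := h3 w (by simpa [LinearMap.mem_ker] using hw)
    exact ⟨v, hv2⟩
  have cokerEquiv : ((W ⧸ LinearMap.ker ρ) ⧸ LinearMap.range S) ≃ₗ[F] (W ⧸ LinearMap.range T) := by
    rw [rangeEq]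
    exact Submodule.quotientQuotientEquivQuotient _ _ hker_range
  have fdS : FiniteDimensional F (LinearMap.ker S) := inferInstance
  have fdK : FiniteDimensional F (LinearMap.ker T) := Module.Finite.equiv ek.symm
  have fdQ : FiniteDimensional F ((W ⧸ LinearMap.ker ρ) ⧸ LinearMap.range S) := inferInstance
  have fdC : FiniteDimensional F (W ⧸ LinearMap.range T) := Module.Finite.equiv cokerEquiv
  refine ⟨fdK, fdC, ?_⟩
  have e1 : finrank F (LinearMap.ker S) + finrank F (LinearMap.range S)
      = finrank F (V ⧸ LinearMap.ker π) := by
    rw [Nat.add_comm]; exact LinearMap.finrank_range_add_finrank_ker S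
  have e2 : finrank F ((W ⧸ LinearMap.ker ρ) ⧸ LinearMap.range S)
      + finrank F (LinearMap.range S) = finrank F (W ⧸ LinearMap.ker ρ) :=
    Submodule.finrank_quotient_add_finrank _
  have e3 : finrank F (V ⧸ LinearMap.ker π) = finrank F V₀ := eV.finrank_eq
  have e4 : finrank F (W ⧸ LinearMap.ker ρ) = finrank F W₀ := eW.finrank_eq
  have e5 : finrank F (LinearMap.ker T) = finrank F (LinearMap.ker S) := ek.finrank_eq
  have e6 : finrank F ((W ⧸ LinearMap.ker ρ) ⧸ LinearMap.range S)
      = finrank F (W ⧸ LinearMap.range T) := cokerEquiv.finrank_eq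
  omega

variable {F : Type*} [Field F]

lemma coeff_del_term (p : ℕ) (a b : F) (r s : ℕ) (μ ν : PowerSeries F) (j : ℕ) :
    (coeff j) (-(C a * X ^ r * μ) + C b * X ^ s * expandPS F p ν) =
      -(a * (if r ≤ j then coeff (j - r) μ else 0))
      + b * (if s ≤ j ∧ p ∣ (j - s) then coeff ((j - s)/p) ν else 0) := by
  rw [map_add, map_neg, mul_assoc, mul_assoc, coeff_C_mul, coeff_C_mul,
    coeff_X_pow_mul', coeff_X_pow_mul']
  congr 2
  by_cases h1 : s ≤ j
  · rw [if_pos h1, coeff_expandPS]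
    by_cases h2 : p ∣ j - s
    · rw [if_pos h2, if_pos ⟨h1, h2⟩]
    · rw [if_neg h2, if_neg (by tauto)]
  · rw [if_neg h1, if_neg (by tauto)]

/-- recursive coefficient solver -/
def solveC (F : Type*) [Field F] (p : ℕ) {f : ℕ} (m : ℕ) (a b : ZMod f → F)
    (r s : ZMod f → ℕ) (h : ZMod f → PowerSeries F) (n : ℕ) (i : ZMod f) : F :=
  if m ≤ n then
    (a i)⁻¹ * ((if hk : s i ≤ n + r i ∧ p ∣ (n + r i - s i) ∧ (n + r i - s i) / p < n then
        b i * solveC F p m a b r s h ((n + r i - s i) / p) (i - 1) else 0)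
      - coeff (n + r i) (h i))
  else 0
termination_by n
decreasing_by exact hk.2.2

lemma solveC_eq (p : ℕ) {f : ℕ} (m : ℕ) (a b : ZMod f → F) (r s : ZMod f → ℕ)
    (h : ZMod f → PowerSeries F) (n : ℕ) (i : ZMod f) :
    solveC F p m a b r s h n i =
      if m ≤ n then
        (a i)⁻¹ * ((if s i ≤ n + r i ∧ p ∣ (n + r i - s i) ∧ (n + r i - s i) / p < n then
            b i * solveC F p m a b r s h ((n + r i - s i) / p) (i - 1) else 0)
          - coeff (n + r i) (h i))
      else 0 := by
  rw [solveC]; simp only [dite_eq_ite]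

lemma solveC_of_lt (p : ℕ) {f : ℕ} (m : ℕ) (a b : ZMod f → F) (r s : ZMod f → ℕ)
    (h : ZMod f → PowerSeries F) (n : ℕ) (i : ZMod f) (hn : n < m) :
    solveC F p m a b r s h n i = 0 := by
  rw [solveC_eq, if_neg (by omega)]

section main

variable (p : ℕ) {f N : ℕ} (m : ℕ) (a b : ZMod f → F) (r s : ZMod f → ℕ)

/-- raw form of the differential -/
def Dfun (μ : ZMod f → PowerSeries F) : ZMod f → PowerSeries F :=
  fun i => -(C (a i) * X ^ r i * μ i) + C (b i) * X ^ s i * expandPS F p (μ (i - 1))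

lemma coeff_Dfun (μ : ZMod f → PowerSeries F) (i : ZMod f) (j : ℕ) :
    coeff j (Dfun p a b r s μ i) =
      -(a i * (if r i ≤ j then coeff (j - r i) (μ i) else 0))
      + b i * (if s i ≤ j ∧ p ∣ (j - s i) then coeff ((j - s i)/p) (μ (i-1)) else 0) :=
  coeff_del_term p (a i) (b i) (r i) (s i) (μ i) (μ (i-1)) j

variable (hp2 : 2 ≤ p) (hm : ∀ i, r i < m) (ha : ∀ i, a i ≠ 0)

include hp2 hm ha in
lemma trunc_ker (μ : ZMod f → PowerSeries F)
    (hlow : ∀ i n, n < m → coeff n (μ i) = 0)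
    (hD : ∀ i j, coeff j (Dfun p a b r s μ i) = 0) :
    ∀ n i, coeff n (μ i) = 0 := by
  intro n
  induction n using Nat.strong_induction_on with
  | _ n IH =>
    intro i
    by_cases hn : n < m
    · exact hlow i n hn
    · have hD' := hD i (n + r i)
      rw [coeff_Dfun, if_pos (Nat.le_add_left _ _), Nat.add_sub_cancel] at hD'
      have hBz : (if s i ≤ n + r i ∧ p ∣ (n + r i - s i) then
          coeff ((n + r i - s i)/p) (μ (i-1)) else 0) = 0 := by
        split_ifs with hcond
        · obtain ⟨hs, hdvd⟩ := hcond
          have hpk : p * ((n + r i - s i) / p) = n + r i - s i := Nat.mul_div_cancel' hdvd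
          have h2k : 2 * ((n + r i - s i) / p) ≤ p * ((n + r i - s i) / p) :=
            Nat.mul_le_mul_right _ hp2
          rw [hpk] at h2k
          have hri := hm i
          exact IH _ (by omega) _
        · rfl
      rw [hBz, mul_zero, add_zero, neg_eq_zero] at hD'
      exact (mul_eq_zero.mp hD').resolve_left (ha i)

include hp2 hm in
lemma trunc_maps (μ : ZMod f → PowerSeries F)
    (hlow : ∀ i n, n < m → coeff n (μ i) = 0) :
    ∀ i j, j < m + r i → coeff j (Dfun p a b r s μ i) = 0 := by
  intro i j hj
  rw [coeff_Dfun]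
  have hA : (if r i ≤ j then coeff (j - r i) (μ i) else 0) = 0 := by
    split_ifs with h
    · exact hlow i _ (by omega)
    · rfl
  have hB : (if s i ≤ j ∧ p ∣ (j - s i) then coeff ((j - s i)/p) (μ (i-1)) else 0) = 0 := by
    split_ifs with hcond
    · obtain ⟨hs, hdvd⟩ := hcond
      have hpk : p * ((j - s i) / p) = j - s i := Nat.mul_div_cancel' hdvd
      have h2k : 2 * ((j - s i) / p) ≤ p * ((j - s i) / p) := Nat.mul_le_mul_right _ hp2
      rw [hpk] at h2k
      have hri := hm i
      exact hlow _ _ (by omega)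
    · rfl
  rw [hA, hB, mul_zero, mul_zero, add_zero, neg_zero]

variable (e e' : ZMod f → ZMod N)
  (hA : ∀ i, e' i = e i + (r i : ZMod N))
  (hB : ∀ i, (p : ZMod N) * e (i - 1) + (s i : ZMod N) = e' i)

include hA hB in
lemma good_del (μ : ZMod f → PowerSeries F)
    (hμ : ∀ i n, coeff n (μ i) ≠ 0 → (n : ZMod N) = e i) :
    ∀ i j, coeff j (Dfun p a b r s μ i) ≠ 0 → (j : ZMod N) = e' i := by
  intro i j hj
  rw [coeff_Dfun] at hj
  by_cases hA0 : (if r i ≤ j then coeff (j - r i) (μ i) else 0) = 0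
  · have hB0 : (if s i ≤ j ∧ p ∣ (j - s i) then coeff ((j - s i)/p) (μ (i-1)) else 0) ≠ 0 := by
      intro h0; rw [hA0, h0] at hj; simp at hj
    have hcond : s i ≤ j ∧ p ∣ (j - s i) := by
      by_contra hc; rw [if_neg hc] at hB0; exact hB0 rfl
    rw [if_pos hcond] at hB0
    obtain ⟨hs, hdvd⟩ := hcond
    have hk := hμ (i-1) _ hB0
    have hpk : p * ((j - s i)/p) = j - s i := Nat.mul_div_cancel' hdvd
    have hj' : j = p * ((j - s i)/p) + s i := by omega
    have hcast : ((j : ℕ) : ZMod N) = (p : ZMod N) * (((j - s i)/p : ℕ) : ZMod N)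
        + (s i : ZMod N) := by
      conv_lhs => rw [hj']
      push_cast; ring
    rw [hcast, hk, hB i]
  · have hri : r i ≤ j := by by_contra hc; rw [if_neg hc] at hA0; exact hA0 rfl
    rw [if_pos hri] at hA0
    have hcl := hμ i _ hA0
    have hj' : j = (j - r i) + r i := by omega
    have hcast : ((j : ℕ) : ZMod N) = ((j - r i : ℕ) : ZMod N) + (r i : ZMod N) := by
      conv_lhs => rw [hj']
      push_cast; ring
    rw [hcast, hcl, ← hA i]

include hp2 in
lemma cond_lt {n ri si : ℕ} (hri : ri < m) (hn : m ≤ n) (hs : si ≤ n + ri)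
    (hdvd : p ∣ (n + ri - si)) : (n + ri - si) / p < n := by
  have hpk : p * ((n + ri - si) / p) = n + ri - si := Nat.mul_div_cancel' hdvd
  have h2k : 2 * ((n + ri - si) / p) ≤ p * ((n + ri - si) / p) := Nat.mul_le_mul_right _ hp2
  rw [hpk] at h2k
  omega

include hp2 hm ha hA hB in
lemma solve_surj (h : ZMod f → PowerSeries F)
    (hlow : ∀ i j, j < m + r i → coeff j (h i) = 0)
    (hclh : ∀ i j, coeff j (h i) ≠ 0 → (j : ZMod N) = e' i) :
    ∃ μ : ZMod f → PowerSeries F,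
      (∀ i n, n < m → coeff n (μ i) = 0) ∧
      Dfun p a b r s μ = h ∧
      (∀ i n, coeff n (μ i) ≠ 0 → (n : ZMod N) = e i) := by
  set μ : ZMod f → PowerSeries F := fun i => PowerSeries.mk fun n => solveC F p m a b r s h n i
    with hμdef
  have hcoeff : ∀ n i, coeff n (μ i) = solveC F p m a b r s h n i := fun n i => coeff_mk n _
  have hlowμ : ∀ i n, n < m → coeff n (μ i) = 0 := fun i n hn => by
    rw [hcoeff]; exact solveC_of_lt p m a b r s h n i hn
  refine ⟨μ, hlowμ, ?_, ?_⟩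
  · funext i
    ext j
    by_cases hj : j < m + r i
    · rw [trunc_maps p m a b r s hp2 hm μ hlowμ i j hj, hlow i j hj]
    · push_neg at hj
      obtain ⟨n, rfl⟩ : ∃ n, j = n + r i := ⟨j - r i, by omega⟩
      have hn : m ≤ n := by omega
      rw [coeff_Dfun, if_pos (Nat.le_add_left _ _), Nat.add_sub_cancel, hcoeff n i,
        solveC_eq, if_pos hn]
      by_cases hcond : s i ≤ n + r i ∧ p ∣ (n + r i - s i)
      · have hlt := cond_lt p m hp2 (hm i) hn hcond.1 hcond.2
        rw [if_pos ⟨hcond.1, hcond.2, hlt⟩, if_pos hcond, hcoeff]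
        field_simp [ha i]
        ring
      · rw [if_neg (by tauto), if_neg hcond]
        field_simp [ha i]
        ring
  · intro i n
    induction n using Nat.strong_induction_on generalizing i with
    | _ n IH =>
      intro hne
      rw [hcoeff, solveC_eq] at hne
      by_cases hn : m ≤ n
      swap
      · rw [if_neg hn] at hne; exact absurd rfl hne
      rw [if_pos hn] at hne
      by_cases hBt : (if s i ≤ n + r i ∧ p ∣ (n + r i - s i) ∧ (n + r i - s i) / p < n then
          b i * solveC F p m a b r s h ((n + r i - s i) / p) (i - 1) else 0) = 0
      · have hH : coeff (n + r i) (h i) ≠ 0 := by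
          intro h0; rw [hBt, h0, sub_zero, mul_zero] at hne; exact hne rfl
        have hcl := hclh i _ hH
        rw [hA i] at hcl
        push_cast at hcl
        exact add_right_cancel hcl
      · have hcond : s i ≤ n + r i ∧ p ∣ (n + r i - s i) ∧ (n + r i - s i) / p < n := by
          by_contra hc; rw [if_neg hc] at hBt; exact hBt rfl
        rw [if_pos hcond] at hBt
        have hks : solveC F p m a b r s h ((n + r i - s i) / p) (i - 1) ≠ 0 := by
          intro h0; rw [h0, mul_zero] at hBt; exact hBt rfl
        have hkc : ((((n + r i - s i) / p : ℕ)) : ZMod N) = e (i - 1) :=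
          IH _ hcond.2.2 (i - 1) (by rw [hcoeff]; exact hks)
        obtain ⟨hs, hdvd, hlt⟩ := hcond
        have hpk : p * ((n + r i - s i) / p) = n + r i - s i := Nat.mul_div_cancel' hdvd
        have heq : n + r i = p * ((n + r i - s i) / p) + s i := by omega
        have hcast : (n : ZMod N) + (r i : ZMod N)
            = (p : ZMod N) * ((((n + r i - s i) / p : ℕ)) : ZMod N) + (s i : ZMod N) := by
          have hc2 := congrArg (Nat.cast : ℕ → ZMod N) heq
          push_cast at hc2
          linear_combination hc2
        rw [hkc, hB i, hA i] at hcast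
        exact add_right_cancel hcast

end main

lemma count_split (N m ri : ℕ) (y : ZMod N) :
    ((Finset.range (m + ri)).filter fun n : ℕ => (n : ZMod N) = y).card =
    ((Finset.range ri).filter fun n : ℕ => (n : ZMod N) = y).card +
    ((Finset.range m).filter fun n : ℕ => (n : ZMod N) = y - (ri : ZMod N)).card := by
  rw [Nat.add_comm m ri, Finset.range_add, Finset.filter_union,
    Finset.card_union_of_disjoint, Finset.filter_map, Finset.card_map]
  · congr 1
    apply Finset.card_nbij (fun n => n) ?_ ?_ ?_
    · intro x hx
      simp only [Finset.mem_coe, Finset.mem_filter, Finset.mem_range, Function.comp_apply,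
        addLeftEmbedding_apply] at hx ⊢
      refine ⟨hx.1, ?_⟩
      have : ((ri + x : ℕ) : ZMod N) = y := hx.2
      push_cast at this
      rw [eq_sub_iff_add_eq]
      linear_combination this
    · intro x hx y' hy' hxy; exact hxy
    · intro x hx
      simp only [Finset.mem_filter, Finset.mem_range, Function.comp_apply,
        addLeftEmbedding_apply, Finset.coe_filter, Set.mem_image, Set.mem_setOf_eq] at hx ⊢
      refine ⟨x, ⟨hx.1, ?_⟩, rfl⟩
      push_cast
      rw [eq_sub_iff_add_eq] at hx
      linear_combination hx.2
  · rw [Finset.disjoint_left]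
    intro x hx1 hx2
    simp only [Finset.mem_filter, Finset.mem_range, Finset.mem_map,
      addLeftEmbedding_apply] at hx1 hx2
    obtain ⟨⟨n, hn, rfl⟩, -⟩ := hx2
    omega


section Inst

variable {F : Type*} [Field F] {f N : ℕ}

/-- truncation map recording coefficients indexed by a finite set of pairs. -/
def truncMap (e : ZMod f → ZMod N) (S : Finset ((_ : ZMod f) × ℕ)) :
    ↥(goodTuples F f N e) →ₗ[F] (↥S → F) where
  toFun μ x := PowerSeries.coeff x.1.2 (μ.1 x.1.1)
  map_add' x y := by funext z; simp
  map_smul' t x := by funext z; simp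

open scoped Classical in
/-- the index set of low-degree admissible coefficients -/
def truncSet [NeZero f] (mb : ZMod f → ℕ) (e : ZMod f → ZMod N) : Finset ((_ : ZMod f) × ℕ) :=
  Finset.univ.sigma fun i => (Finset.range (mb i)).filter fun n => (n : ZMod N) = e i

lemma mem_truncSet [NeZero f] (mb : ZMod f → ℕ) (e : ZMod f → ZMod N) (i : ZMod f) (n : ℕ) :
    (⟨i, n⟩ : (_ : ZMod f) × ℕ) ∈ truncSet mb e ↔ n < mb i ∧ (n : ZMod N) = e i := by
  classical
  simp [truncSet, Finset.mem_sigma, Finset.mem_filter, Finset.mem_range]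

lemma truncMap_zero_iff [NeZero f] (e : ZMod f → ZMod N) (mb : ZMod f → ℕ)
    (μ : ↥(goodTuples F f N e)) :
    truncMap e (truncSet mb e) μ = 0 ↔ ∀ i n, n < mb i → PowerSeries.coeff n (μ.1 i) = 0 := by
  constructor
  · intro hz i n hn
    by_cases h0 : PowerSeries.coeff n (μ.1 i) = 0
    · exact h0
    · have hcl : (n : ZMod N) = e i := μ.2 i n h0
      have hx : (⟨i, n⟩ : (_ : ZMod f) × ℕ) ∈ truncSet mb e := (mem_truncSet mb e i n).2 ⟨hn, hcl⟩
      exact congrFun hz ⟨⟨i, n⟩, hx⟩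
  · intro hz
    funext x
    obtain ⟨⟨i, n⟩, hx⟩ := x
    exact hz i n ((mem_truncSet mb e i n).1 hx).1

lemma truncMap_surjective [NeZero f] (e : ZMod f → ZMod N) (mb : ZMod f → ℕ) :
    Function.Surjective (truncMap (F := F) e (truncSet mb e)) := by
  intro g
  refine ⟨⟨fun i => PowerSeries.mk fun n =>
    if hx : (⟨i, n⟩ : (_ : ZMod f) × ℕ) ∈ truncSet mb e then g ⟨⟨i, n⟩, hx⟩ else 0, ?_⟩, ?_⟩
  · intro i n hne
    rw [PowerSeries.coeff_mk] at hne
    by_cases hx : (⟨i, n⟩ : (_ : ZMod f) × ℕ) ∈ truncSet mb e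
    · exact ((mem_truncSet mb e i n).1 hx).2
    · rw [dif_neg hx] at hne; exact absurd rfl hne
  · funext x
    obtain ⟨⟨i, n⟩, hx⟩ := x
    simp only [truncMap, LinearMap.coe_mk, AddHom.coe_mk]
    rw [PowerSeries.coeff_mk, dif_pos hx]

lemma finrank_truncTarget [NeZero f] (mb : ZMod f → ℕ) (e : ZMod f → ZMod N) :
    finrank F (↥(truncSet mb e) → F) =
      ∑ i : ZMod f, ((Finset.range (mb i)).filter fun n : ℕ => (n : ZMod N) = e i).card := by
  classical
  rw [Module.finrank_fintype_fun_eq_card, Fintype.card_coe, truncSet, Finset.card_sigma]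

end Inst

end Aux

set_option synthInstance.maxHeartbeats 1000000
set_option maxHeartbeats 3000000

/-- The kernel and cokernel of `∂ : C⁰ → C¹` are finite-dimensional `F`-vector spaces, and
`dim coker ∂ = dim ker ∂ + Σ_i #{ j ∈ [0, r_i) : j ≡ r_i + c_i - d_i (mod N) }`, where
`N = p^{f'} - 1`. Equivalently: the space `Ext¹` of extensions of the rank one Breuil–Kisin
module `M(r,a,c)` by `M(s,b,d)` has `F`-dimension `Δ + Σ_i #{ j ∈ [0, r_i) :
j ≡ r_i + c_i - d_i (mod e(K'/K)) }` with `Δ = dim Hom(M(r,a,c), M(s,b,d)) = dim ker ∂`. -/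
theorem ext_dimension_formula
    (p f f' : ℕ) (hp : p.Prime) [NeZero f] (hf' : 0 < f') (hff' : f ∣ f')
    (F : Type*) [Field F] [Fintype F] [CharP F p]
    (a b : ZMod f → Fˣ) (r s : ZMod f → ℕ)
    (c d : ZMod f → ZMod (p ^ f' - 1))
    (hc : ∀ i, (p : ZMod (p ^ f' - 1)) * c (i - 1) = c i + (r i : ZMod (p ^ f' - 1)))
    (hd : ∀ i, (p : ZMod (p ^ f' - 1)) * d (i - 1) = d i + (s i : ZMod (p ^ f' - 1))) :
    let N := p ^ f' - 1
    let C0 := goodTuples F f N fun i => c i - d i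
    let C1 := goodTuples F f N fun i => (r i : ZMod N) + c i - d i
    let D := delMap F p f (fun i => (a i : F)) (fun i => (b i : F)) r s
    FiniteDimensional F ↥(C0 ⊓ LinearMap.ker D) ∧
    FiniteDimensional F (↥C1 ⧸ Submodule.comap C1.subtype (Submodule.map D C0)) ∧
    Module.finrank F (↥C1 ⧸ Submodule.comap C1.subtype (Submodule.map D C0)) =
      Module.finrank F ↥(C0 ⊓ LinearMap.ker D) +
      ∑ i : ZMod f, ((Finset.range (r i)).filter
        (fun j : ℕ => ((j : ZMod N) = (r i : ZMod N) + c i - d i))).card := by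
  intro N C0 C1 D
  classical
  have hp2 : 2 ≤ p := hp.two_le
  have ha : ∀ i, ((a i : F)) ≠ 0 := fun i => (a i).ne_zero
  set m : ℕ := Finset.univ.sup r + 1 with hmdef
  have hm : ∀ i, r i < m := fun i => Nat.lt_succ_of_le (Finset.le_sup (Finset.mem_univ i))
  have hAe : ∀ i : ZMod f, ((fun i => (r i : ZMod N) + c i - d i) i)
      = ((fun i => c i - d i) i) + (r i : ZMod N) := fun i => by simp only []; ring
  have hBe : ∀ i : ZMod f, (p : ZMod N) * ((fun i => c i - d i) (i - 1)) + (s i : ZMod N)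
      = ((fun i => (r i : ZMod N) + c i - d i) i) := by
    intro i
    simp only []
    rw [mul_sub, hc i, hd i]
    ring
  have hD : ∀ x ∈ C0, D x ∈ C1 := by
    intro x hx
    exact good_del p (fun i => (a i : F)) (fun i => (b i : F)) r s
      (fun i => c i - d i) (fun i => (r i : ZMod N) + c i - d i) hAe hBe x hx
  set T : ↥C0 →ₗ[F] ↥C1 := D.restrict hD with hTdef
  set π := truncMap (F := F) (fun i : ZMod f => c i - d i)
    (truncSet (fun _ => m) (fun i : ZMod f => c i - d i)) with hπdef
  set ρ := truncMap (F := F) (fun i : ZMod f => (r i : ZMod N) + c i - d i)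
    (truncSet (fun i => m + r i) (fun i : ZMod f => (r i : ZMod N) + c i - d i)) with hρdef
  have hπ : Function.Surjective π := truncMap_surjective _ _
  have hρ : Function.Surjective ρ := truncMap_surjective _ _
  have h1 : ∀ v, π v = 0 → ρ (T v) = 0 := by
    intro v hv
    rw [hπdef, truncMap_zero_iff] at hv
    rw [hρdef, truncMap_zero_iff]
    intro i j hj
    exact trunc_maps p m (fun i => (a i : F)) (fun i => (b i : F)) r s hp2 hm v.1 hv i j hj
  have h2 : ∀ v, π v = 0 → T v = 0 → v = 0 := by
    intro v hv hTv
    rw [hπdef, truncMap_zero_iff] at hv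
    have hDz : D v.1 = 0 := congrArg Subtype.val hTv
    have hzero := trunc_ker p m (fun i => (a i : F)) (fun i => (b i : F)) r s hp2 hm ha v.1 hv
      (fun i j => by
        show PowerSeries.coeff j ((D v.1) i) = 0
        rw [hDz]
        simp)
    apply Subtype.ext
    funext i
    exact PowerSeries.ext fun n => by rw [hzero n i]; simp
  have h3 : ∀ w, ρ w = 0 → ∃ v, π v = 0 ∧ T v = w := by
    intro w hw
    rw [hρdef, truncMap_zero_iff] at hw
    obtain ⟨μ, hlowμ, hDμ, hclμ⟩ := solve_surj p m (fun i => (a i : F)) (fun i => (b i : F)) r s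
      hp2 hm ha (fun i => c i - d i) (fun i => (r i : ZMod N) + c i - d i) hAe hBe w.1 hw w.2
    refine ⟨⟨μ, hclμ⟩, ?_, ?_⟩
    · rw [hπdef, truncMap_zero_iff]
      exact hlowμ
    · apply Subtype.ext
      show D μ = w.1
      exact hDμ
  obtain ⟨fdK, fdC, hrank⟩ := index_lemma T π ρ hπ hρ h1 h2 h3
  have kerT_eq : LinearMap.ker T = Submodule.comap C0.subtype (C0 ⊓ LinearMap.ker D) := by
    ext x
    simp only [LinearMap.mem_ker, Submodule.mem_comap, Submodule.mem_inf]
    constructor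
    · intro hx
      exact ⟨x.2, congrArg Subtype.val hx⟩
    · intro hx
      exact Subtype.ext hx.2
  have eKer : ↥(Submodule.comap C0.subtype (C0 ⊓ LinearMap.ker D)) ≃ₗ[F] ↥(C0 ⊓ LinearMap.ker D) :=
    Submodule.comapSubtypeEquivOfLe inf_le_left
  have fdKc : FiniteDimensional F ↥(Submodule.comap C0.subtype (C0 ⊓ LinearMap.ker D)) :=
    kerT_eq ▸ fdK
  have fdK' : FiniteDimensional F ↥(C0 ⊓ LinearMap.ker D) := Module.Finite.equiv eKer
  have rkK : Module.finrank F ↥(C0 ⊓ LinearMap.ker D) = Module.finrank F (LinearMap.ker T) := by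
    rw [kerT_eq]
    exact eKer.finrank_eq.symm
  have rangeT_eq : Submodule.comap C1.subtype (Submodule.map D C0) = LinearMap.range T := by
    ext y
    simp only [Submodule.mem_comap, Submodule.mem_map, LinearMap.mem_range]
    constructor
    · rintro ⟨x, hx, hxy⟩
      exact ⟨⟨x, hx⟩, Subtype.ext hxy⟩
    · rintro ⟨v, hv⟩
      exact ⟨v.1, v.2, by rw [← hv]; rfl⟩
  rw [rangeT_eq]
  refine ⟨fdK', fdC, ?_⟩
  rw [rkK]
  have hV0 := finrank_truncTarget (F := F) (fun _ : ZMod f => m) (fun i => c i - d i)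
  have hW0 := finrank_truncTarget (F := F) (fun i : ZMod f => m + r i)
    (fun i => (r i : ZMod N) + c i - d i)
  have hsplit : ∀ i : ZMod f,
      ((Finset.range (m + r i)).filter fun n : ℕ => (n : ZMod N) = (r i : ZMod N) + c i - d i).card
      = ((Finset.range (r i)).filter fun n : ℕ =>
          (n : ZMod N) = (r i : ZMod N) + c i - d i).card
        + ((Finset.range m).filter fun n : ℕ => (n : ZMod N) = c i - d i).card := by
    intro i
    have hcs := count_split N m (r i) ((r i : ZMod N) + c i - d i)
    have hy : ((r i : ZMod N) + c i - d i) - (r i : ZMod N) = c i - d i := by ring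
    rw [hy] at hcs
    exact hcs
  have hsum : ∑ i : ZMod f, ((Finset.range (m + r i)).filter fun n : ℕ =>
        (n : ZMod N) = (r i : ZMod N) + c i - d i).card
      = (∑ i : ZMod f, ((Finset.range (r i)).filter fun n : ℕ =>
          (n : ZMod N) = (r i : ZMod N) + c i - d i).card)
        + ∑ i : ZMod f, ((Finset.range m).filter fun n : ℕ => (n : ZMod N) = c i - d i).card := by
    rw [← Finset.sum_add_distrib]
    exact Finset.sum_congr rfl fun i _ => hsplit i
  rw [hV0] at hrank
  rw [hW0] at hrank
  omega
end

section
/- Suppose additionally that e' is an integer with 0 ≤ r_i ≤ e' and 0 ≤ s_i ≤ e' for all i, and let C¹_BT := { (h_i) ∈ C¹ : u^{max(0, r_i + s_i − e')} divides h_i for every i } (the representatives of extension classes of height at most one). Then the image of C¹_BT in coker ∂ is a finite-dimensional F-vector space of dimension dim_F ker ∂ + Σ_{i=0}^{f−1} #{ j ∈ ℤ : max(0, r_i + s_i − e') ≤ j < r_i and j ≡ r_i + c_i − d_i (mod N) }. -/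
/-- Tuples of power series whose `i`-th entry is divisible by `X ^ m i`. -/
noncomputable def dvdTuples (F : Type*) [Field F] (f : ℕ) (m : ZMod f → ℕ) :
    Submodule F (ZMod f → PowerSeries F) where
  carrier := { h | ∀ i, (PowerSeries.X : PowerSeries F) ^ m i ∣ h i }
  zero_mem' := fun i => dvd_zero _
  add_mem' := fun hx hy i => dvd_add (hx i) (hy i)
  smul_mem' := by
    intro t x hx i
    rw [Pi.smul_apply, PowerSeries.smul_eq_C_mul]
    exact Dvd.dvd.mul_left (hx i) _

noncomputable section

namespace BTAux

variable {F : Type*} [Field F] {f : ℕ}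

/-- tuples with support condition -/
def suppSub (F : Type*) [Field F] (f : ℕ) (P : ZMod f → ℕ → Prop) :
    Submodule F (ZMod f → PowerSeries F) where
  carrier := { μ | ∀ i n, (PowerSeries.coeff n) (μ i) ≠ 0 → P i n }
  zero_mem' := by intro i n hn; simp at hn
  add_mem' := by
    intro x y hx hy i n hn
    by_cases h1 : (PowerSeries.coeff n) (x i) = 0
    · refine hy i n fun h2 => hn ?_
      simp [Pi.add_apply, map_add, h1, h2]
    · exact hx i n h1
  smul_mem' := by
    intro t x hx i n hn
    refine hx i n fun h0 => hn ?_
    simp [Pi.smul_apply, map_smul, h0]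

lemma mem_suppSub {P : ZMod f → ℕ → Prop} {h : ZMod f → PowerSeries F} :
    h ∈ suppSub F f P ↔ ∀ i n, (PowerSeries.coeff n) (h i) ≠ 0 → P i n := Iff.rfl

lemma suppSub_mono {P Q : ZMod f → ℕ → Prop} (h : ∀ i n, P i n → Q i n) :
    suppSub F f P ≤ suppSub F f Q := fun x hx i n hn => h i n (hx i n hn)

lemma goodTuples_eq_suppSub (N : ℕ) (e : ZMod f → ZMod N) :
    goodTuples F f N e = suppSub F f (fun i n => (n : ZMod N) = e i) := rfl

lemma dvdTuples_eq_suppSub (m : ZMod f → ℕ) :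
    dvdTuples F f m = suppSub F f (fun i n => m i ≤ n) := by
  ext h
  constructor
  · intro hh i n hn
    by_contra hlt
    exact hn ((PowerSeries.X_pow_dvd_iff.mp (hh i)) n (by omega))
  · intro hh i
    rw [PowerSeries.X_pow_dvd_iff]
    intro k hk
    by_contra h0
    have := hh i k h0
    omega

/-- truncation (cut) operator -/
def cutL (F : Type*) [Field F] (f : ℕ) (P : ZMod f → ℕ → Prop)
    [∀ i n, Decidable (P i n)] :
    (ZMod f → PowerSeries F) →ₗ[F] (ZMod f → PowerSeries F) where
  toFun h := fun i => PowerSeries.mk fun n => if P i n then (PowerSeries.coeff n) (h i) else 0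
  map_add' := by
    intro x y; funext i; ext n
    simp only [Pi.add_apply, map_add, PowerSeries.coeff_mk]
    split <;> simp
  map_smul' := by
    intro t x; funext i; ext n
    simp only [Pi.smul_apply, map_smul, PowerSeries.coeff_mk, RingHom.id_apply, smul_eq_mul]
    split <;> simp

lemma coeff_cutL {P : ZMod f → ℕ → Prop} [∀ i n, Decidable (P i n)]
    (h : ZMod f → PowerSeries F) (i : ZMod f) (n : ℕ) :
    (PowerSeries.coeff n) (cutL F f P h i) =
      if P i n then (PowerSeries.coeff n) (h i) else 0 := by
  simp only [cutL, LinearMap.coe_mk, AddHom.coe_mk, PowerSeries.coeff_mk]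

lemma cutL_mem_suppSub {P Q : ZMod f → ℕ → Prop} [∀ i n, Decidable (P i n)]
    {h : ZMod f → PowerSeries F} (hh : h ∈ suppSub F f Q) :
    cutL F f P h ∈ suppSub F f (fun i n => Q i n ∧ P i n) := by
  intro i n hn
  rw [coeff_cutL] at hn
  split at hn
  · exact ⟨hh i n hn, by assumption⟩
  · exact absurd rfl hn

lemma sub_cutL_mem_suppSub {P Q : ZMod f → ℕ → Prop} [∀ i n, Decidable (P i n)]
    {h : ZMod f → PowerSeries F} (hh : h ∈ suppSub F f Q) :
    h - cutL F f P h ∈ suppSub F f (fun i n => Q i n ∧ ¬ P i n) := by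
  intro i n hn
  simp only [Pi.sub_apply, map_sub, coeff_cutL] at hn
  split at hn
  · simp at hn
  · refine ⟨hh i n (by simpa using hn), by assumption⟩

lemma cutL_eq_self {P : ZMod f → ℕ → Prop} [∀ i n, Decidable (P i n)]
    {h : ZMod f → PowerSeries F} (hh : h ∈ suppSub F f P) :
    cutL F f P h = h := by
  funext i; ext n
  rw [coeff_cutL]
  split
  · rfl
  · by_contra h0
    next hP => exact hP (hh i n (fun h1 => h0 h1.symm))

lemma cutL_eq_zero {P : ZMod f → ℕ → Prop} [∀ i n, Decidable (P i n)]
    {h : ZMod f → PowerSeries F} (hh : h ∈ suppSub F f (fun i n => ¬ P i n)) :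
    cutL F f P h = 0 := by
  funext i; ext n
  rw [coeff_cutL]
  split
  · next hP =>
      by_contra h0
      exact (hh i n (fun h1 => h0 (h1 ▸ (PowerSeries.coeff (R := F) n).map_zero.symm ▸ h1 ▸ rfl))) hP
  · simp

lemma coeff_delMap (p : ℕ) (a b : ZMod f → F) (r s : ZMod f → ℕ)
    (μ : ZMod f → PowerSeries F) (i : ZMod f) (n : ℕ) :
    (PowerSeries.coeff n) (delMap F p f a b r s μ i) =
      -(a i * if r i ≤ n then (PowerSeries.coeff (n - r i)) (μ i) else 0)
      + b i * (if s i ≤ n then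
          (if p ∣ (n - s i) then (PowerSeries.coeff ((n - s i) / p)) (μ (i - 1)) else 0)
          else 0) := by
  show (PowerSeries.coeff n)
      (-(PowerSeries.C (a i) * PowerSeries.X ^ r i * μ i)
        + PowerSeries.C (b i) * PowerSeries.X ^ s i * expandPS F p (μ (i - 1))) = _
  rw [map_add, map_neg, mul_assoc, mul_assoc, PowerSeries.coeff_C_mul,
    PowerSeries.coeff_C_mul, PowerSeries.coeff_X_pow_mul', PowerSeries.coeff_X_pow_mul']
  rw [coeff_expandPS]

end BTAux

namespace BTAux

variable {F : Type*} [Field F] {f : ℕ}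

noncomputable def solveG (F : Type*) [Field F] (f p T : ℕ) (r s : ZMod f → ℕ)
    (a b : ZMod f → F) (h : ZMod f → PowerSeries F) : ℕ → ZMod f → F
  | n, i =>
    if T ≤ n then
      (a i)⁻¹ * (b i * (if hd : p ∣ (r i + n - s i) ∧ (r i + n - s i) / p < n then
          solveG F f p T r s a b h ((r i + n - s i) / p) (i - 1) else 0)
        - (PowerSeries.coeff (r i + n)) (h i))
    else 0
  termination_by n _ => n
  decreasing_by exact hd.2

lemma solveG_low {p T : ℕ} {r s : ZMod f → ℕ} {a b : ZMod f → F}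
    {h : ZMod f → PowerSeries F} {n : ℕ} (hn : n < T) (i : ZMod f) :
    solveG F f p T r s a b h n i = 0 := by
  rw [solveG]
  simp [Nat.not_le.mpr hn]

lemma coeff_delMap_cases {p : ℕ} {a b : ZMod f → F} {r s : ZMod f → ℕ}
    {μ : ZMod f → PowerSeries F} {i : ZMod f} {n : ℕ}
    (hn : (PowerSeries.coeff n) (delMap F p f a b r s μ i) ≠ 0) :
    (r i ≤ n ∧ (PowerSeries.coeff (n - r i)) (μ i) ≠ 0) ∨
    (s i ≤ n ∧ p ∣ (n - s i) ∧ (PowerSeries.coeff ((n - s i) / p)) (μ (i - 1)) ≠ 0) := by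
  rw [coeff_delMap] at hn
  by_cases h1 : (if r i ≤ n then (PowerSeries.coeff (n - r i)) (μ i) else 0) = 0
  · right
    rw [h1] at hn
    simp only [mul_zero, neg_zero, zero_add] at hn
    have h2 : (if s i ≤ n then (if p ∣ (n - s i) then
        (PowerSeries.coeff ((n - s i) / p)) (μ (i - 1)) else 0) else 0) ≠ 0 :=
      fun h0 => hn (by rw [h0, mul_zero])
    split at h2
    · split at h2
      · exact ⟨by assumption, by assumption, h2⟩
      · exact absurd rfl h2
    · exact absurd rfl h2
  · left
    split at h1
    · exact ⟨by assumption, h1⟩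
    · exact absurd rfl h1

lemma delMap_mem_C1 {p N : ℕ} {a b : ZMod f → F} {r s : ZMod f → ℕ}
    {c d : ZMod f → ZMod N}
    (hc : ∀ i, (p : ZMod N) * c (i - 1) = c i + (r i : ZMod N))
    (hd : ∀ i, (p : ZMod N) * d (i - 1) = d i + (s i : ZMod N))
    {μ : ZMod f → PowerSeries F}
    (hμ : μ ∈ suppSub F f (fun i n => (n : ZMod N) = c i - d i)) :
    delMap F p f a b r s μ ∈
      suppSub F f (fun i n => (n : ZMod N) = (r i : ZMod N) + c i - d i) := by
  intro i n hn
  rcases coeff_delMap_cases hn with ⟨hrn, hne⟩ | ⟨hsn, hdvd, hne⟩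
  · have h1 : ((n - r i : ℕ) : ZMod N) = c i - d i := hμ i _ hne
    rw [Nat.cast_sub hrn] at h1
    linear_combination h1
  · have hk : (((n - s i) / p : ℕ) : ZMod N) = c (i - 1) - d (i - 1) := hμ (i - 1) _ hne
    have hpk : p * ((n - s i) / p) = n - s i := Nat.mul_div_cancel' hdvd
    have hnat : n = s i + p * ((n - s i) / p) := by omega
    have hcast := congrArg (Nat.cast : ℕ → ZMod N) hnat
    push_cast at hcast
    rw [hk] at hcast
    linear_combination hcast + (hc i) - (hd i)

lemma delMap_supp_min {p : ℕ} {a b : ZMod f → F} {r s m : ZMod f → ℕ}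
    (hm : ∀ i, m i ≤ r i ∧ m i ≤ s i) (μ : ZMod f → PowerSeries F) :
    delMap F p f a b r s μ ∈ suppSub F f (fun i n => m i ≤ n) := by
  intro i n hn
  rcases coeff_delMap_cases hn with ⟨hrn, -⟩ | ⟨hsn, -, -⟩
  · have := (hm i).1; omega
  · have := (hm i).2; omega

lemma delMap_supp_high {p T e' : ℕ} (hp2 : 2 ≤ p) (hT : T = e' + 1)
    {a b : ZMod f → F} {r s : ZMod f → ℕ} (hr : ∀ i, r i ≤ e') (hs : ∀ i, s i ≤ e')
    {μ : ZMod f → PowerSeries F} (hμ : μ ∈ suppSub F f (fun _ n => T ≤ n)) :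
    delMap F p f a b r s μ ∈ suppSub F f (fun i n => T + r i ≤ n) := by
  intro i n hn
  rcases coeff_delMap_cases hn with ⟨hrn, hne⟩ | ⟨hsn, hdvd, hne⟩
  · have := hμ i _ hne
    omega
  · have hk := hμ (i - 1) _ hne
    have hpk : p * ((n - s i) / p) = n - s i := Nat.mul_div_cancel' hdvd
    have h2k : 2 * ((n - s i) / p) ≤ p * ((n - s i) / p) := Nat.mul_le_mul_right _ hp2
    have := hr i; have := hs i
    omega

lemma delMap_inj_high {p T e' : ℕ} (hp2 : 2 ≤ p) (hT : T = e' + 1)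
    {a b : ZMod f → F} (ha : ∀ i, a i ≠ 0) {r s : ZMod f → ℕ}
    (hr : ∀ i, r i ≤ e') (hs : ∀ i, s i ≤ e')
    {μ : ZMod f → PowerSeries F} (hμ : μ ∈ suppSub F f (fun _ n => T ≤ n))
    (hD : delMap F p f a b r s μ = 0) : μ = 0 := by
  have key : ∀ n i, (PowerSeries.coeff n) (μ i) = 0 := by
    intro n
    induction n using Nat.strong_induction_on with
    | _ n IH =>
      intro i
      by_cases hTn : T ≤ n
      · have h0 : (PowerSeries.coeff (r i + n)) (delMap F p f a b r s μ i) = 0 := by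
          rw [hD]; simp
        rw [coeff_delMap] at h0
        have hcross : (if s i ≤ r i + n then (if p ∣ (r i + n - s i) then
            (PowerSeries.coeff ((r i + n - s i) / p)) (μ (i - 1)) else 0) else 0) = 0 := by
          split
          · split
            · next hsn hdvd =>
                have hpk : p * ((r i + n - s i) / p) = r i + n - s i :=
                  Nat.mul_div_cancel' hdvd
                have h2k : 2 * ((r i + n - s i) / p) ≤ p * ((r i + n - s i) / p) :=
                  Nat.mul_le_mul_right _ hp2
                have hkn : (r i + n - s i) / p < n := by
                  have := hr i; omega
                exact IH _ hkn (i - 1)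
            · rfl
          · rfl
        rw [hcross, mul_zero, add_zero, if_pos (Nat.le_add_right _ _),
          Nat.add_sub_cancel_left] at h0
        have h1 := neg_eq_zero.mp h0
        exact (mul_eq_zero.mp h1).resolve_left (ha i)
      · by_contra hne
        exact hTn (hμ i n hne)
  funext i
  ext n
  rw [key n i]
  simp

lemma solveG_spec {p T e' : ℕ} (hp2 : 2 ≤ p) (hT : T = e' + 1)
    {a b : ZMod f → F} (ha : ∀ i, a i ≠ 0) {r s : ZMod f → ℕ}
    (hr : ∀ i, r i ≤ e') (hs : ∀ i, s i ≤ e')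
    {h : ZMod f → PowerSeries F} (hh : h ∈ suppSub F f (fun i n => T + r i ≤ n)) :
    delMap F p f a b r s (fun j => PowerSeries.mk fun n => solveG F f p T r s a b h n j)
      = h := by
  funext i
  ext dd
  rw [coeff_delMap]
  beta_reduce
  by_cases hd1 : T + r i ≤ dd
  · have hri : r i ≤ dd := by omega
    rw [if_pos hri, PowerSeries.coeff_mk, solveG]
    have hTn : T ≤ dd - r i := by omega
    rw [if_pos hTn]
    have hrn : r i + (dd - r i) = dd := by omega
    rw [hrn]
    have hsd : s i ≤ dd := by have := hs i; omega
    rw [if_pos hsd]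
    by_cases hdvd : p ∣ (dd - s i)
    · have hpk : p * ((dd - s i) / p) = dd - s i := Nat.mul_div_cancel' hdvd
      have h2k : 2 * ((dd - s i) / p) ≤ p * ((dd - s i) / p) := Nat.mul_le_mul_right _ hp2
      have hklt : (dd - s i) / p < dd - r i := by
        have := hs i; have := hr i; omega
      rw [dif_pos ⟨hdvd, hklt⟩, if_pos hdvd, PowerSeries.coeff_mk]
      have hai := ha i
      field_simp
      try ring
    · rw [dif_neg (fun hcc => hdvd hcc.1), if_neg hdvd]
      have hai := ha i
      field_simp
      ring
  · have hh0 : (PowerSeries.coeff dd) (h i) = 0 := by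
      by_contra h0; exact hd1 (hh i dd h0)
    rw [hh0]
    have hmain : (if r i ≤ dd then (PowerSeries.coeff (dd - r i))
        (PowerSeries.mk fun n => solveG F f p T r s a b h n i) else 0) = 0 := by
      split
      · rw [PowerSeries.coeff_mk]; exact solveG_low (by omega) i
      · rfl
    have hcross : (if s i ≤ dd then (if p ∣ (dd - s i) then
        (PowerSeries.coeff ((dd - s i) / p))
          (PowerSeries.mk fun n => solveG F f p T r s a b h n (i - 1)) else 0) else 0)
        = 0 := by
      split
      · split
        · next hsd hdvd =>
            have hpk : p * ((dd - s i) / p) = dd - s i := Nat.mul_div_cancel' hdvd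
            have h2k : 2 * ((dd - s i) / p) ≤ p * ((dd - s i) / p) :=
              Nat.mul_le_mul_right _ hp2
            rw [PowerSeries.coeff_mk]
            refine solveG_low ?_ (i - 1)
            have := hr i; omega
        · rfl
      · rfl
    rw [hmain, hcross]
    simp

lemma solveG_C0 {p T e' N : ℕ} (hp2 : 2 ≤ p) (hT : T = e' + 1)
    {a b : ZMod f → F} {r s : ZMod f → ℕ} (hs : ∀ i, s i ≤ e')
    {c d : ZMod f → ZMod N}
    (hc : ∀ i, (p : ZMod N) * c (i - 1) = c i + (r i : ZMod N))
    (hd : ∀ i, (p : ZMod N) * d (i - 1) = d i + (s i : ZMod N))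
    {h : ZMod f → PowerSeries F}
    (hh : h ∈ suppSub F f (fun i n => (n : ZMod N) = (r i : ZMod N) + c i - d i)) :
    ∀ n i, solveG F f p T r s a b h n i ≠ 0 → (n : ZMod N) = c i - d i := by
  intro n
  induction n using Nat.strong_induction_on with
  | _ n IH =>
    intro i hne
    by_contra hcon
    apply hne
    rw [solveG]
    split
    · next hTn =>
      have hh0 : (PowerSeries.coeff (r i + n)) (h i) = 0 := by
        by_contra h0
        have h1 := hh i _ h0
        push_cast at h1
        exact hcon (by linear_combination h1)
      have hcross : (if hd' : p ∣ (r i + n - s i) ∧ (r i + n - s i) / p < n then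
          solveG F f p T r s a b h ((r i + n - s i) / p) (i - 1) else 0) = 0 := by
        split
        · next hd' =>
            by_contra hk0
            have hkc := IH _ hd'.2 (i - 1) hk0
            have hsn : s i ≤ r i + n := by have := hs i; omega
            have hpk : p * ((r i + n - s i) / p) = r i + n - s i := Nat.mul_div_cancel' hd'.1
            have hnat : r i + n = s i + p * ((r i + n - s i) / p) := by omega
            have hcast := congrArg (Nat.cast : ℕ → ZMod N) hnat
            push_cast at hcast
            rw [hkc] at hcast
            exact hcon (by linear_combination hcast + (hc i) - (hd i))
        · rfl
      rw [hcross, hh0]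
      simp
    · rfl

end BTAux

namespace BTAux

variable {F : Type*} [Field F] {f : ℕ}

/-- tuples supported on finite sets are isomorphic to a finite product -/
def suppEquiv (F : Type*) [Field F] (f : ℕ) (S : ZMod f → Finset ℕ) :
    ↥(suppSub F f (fun i n => n ∈ S i)) ≃ₗ[F] ((i : ZMod f) → (↥(S i) → F)) where
  toFun x := fun i n => (PowerSeries.coeff n.1) (x.1 i)
  map_add' x y := by
    funext i n
    simp [Submodule.coe_add, Pi.add_apply, map_add]
  map_smul' t x := by
    funext i n
    simp [Submodule.coe_smul, Pi.smul_apply, map_smul]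
  invFun g := ⟨fun i => PowerSeries.mk fun n => if hn : n ∈ S i then g i ⟨n, hn⟩ else 0, by
    intro i n hn
    rw [PowerSeries.coeff_mk] at hn
    by_contra h'
    rw [dif_neg h'] at hn
    exact hn rfl⟩
  left_inv x := by
    apply Subtype.ext
    funext i
    ext n
    rw [PowerSeries.coeff_mk]
    split
    · rfl
    · next h' =>
        by_contra h0
        exact h' (x.2 i n (fun h1 => h0 h1.symm))
  right_inv g := by
    funext i n
    simp only [PowerSeries.coeff_mk, n.2, dif_pos]

lemma finiteDimensional_suppSub (S : ZMod f → Finset ℕ) [NeZero f] :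
    FiniteDimensional F ↥(suppSub F f (fun i n => n ∈ S i)) :=
  LinearEquiv.finiteDimensional (suppEquiv F f S).symm

lemma finrank_suppSub (S : ZMod f → Finset ℕ) [NeZero f] :
    Module.finrank F ↥(suppSub F f (fun i n => n ∈ S i)) = ∑ i, (S i).card := by
  rw [(suppEquiv F f S).finrank_eq, Module.finrank_pi_fintype]
  congr 1
  funext i
  rw [Module.finrank_pi, Fintype.card_coe]

lemma card_Ico_split (N ri si T e' : ℕ) (cc dd : ZMod N) (hT : T = e' + 1) (hsi : si ≤ e') :
    ((Finset.Ico (ri + si - e') (T + ri)).filter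
        (fun n : ℕ => ((n : ZMod N) = (ri : ZMod N) + cc - dd))).card
      = ((Finset.Ico (ri + si - e') ri).filter
          (fun n : ℕ => ((n : ZMod N) = (ri : ZMod N) + cc - dd))).card
        + ((Finset.range T).filter (fun n : ℕ => ((n : ZMod N) = cc - dd))).card := by
  have h1 : ri + si - e' ≤ ri := by omega
  have h2 : ri ≤ T + ri := by omega
  rw [← Finset.Ico_union_Ico_eq_Ico h1 h2, Finset.filter_union,
    Finset.card_union_of_disjoint
      (Finset.disjoint_filter_filter (Finset.Ico_disjoint_Ico_consecutive _ _ _))]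
  congr 1
  have h3 : Finset.Ico ri (T + ri) = (Finset.range T).map (addRightEmbedding ri) := by
    rw [Finset.range_eq_Ico, Finset.map_add_right_Ico, zero_add]
  rw [h3, Finset.filter_map, Finset.card_map]
  apply Finset.card_bij (fun x _ => x)
  · intro x hx
    simp only [Finset.mem_filter, Finset.mem_range, Function.comp_apply,
      addRightEmbedding_apply] at hx ⊢
    refine ⟨hx.1, ?_⟩
    have := hx.2
    push_cast at this
    linear_combination this
  · intro x y _ _ h; exact h
  · intro x hx
    refine ⟨x, ?_, rfl⟩
    simp only [Finset.mem_filter, Finset.mem_range, Function.comp_apply,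
      addRightEmbedding_apply] at hx ⊢
    refine ⟨hx.1, ?_⟩
    have := hx.2
    push_cast
    linear_combination this

end BTAux

namespace BTAux

variable {F : Type*} [Field F] {f : ℕ}

set_option maxHeartbeats 2000000 in
lemma master [NeZero f] (p N e' : ℕ) (hp2 : 2 ≤ p)
    (a b : ZMod f → F) (ha : ∀ i, a i ≠ 0) (r s : ZMod f → ℕ)
    (hr : ∀ i, r i ≤ e') (hs : ∀ i, s i ≤ e')
    (c d : ZMod f → ZMod N)
    (hc : ∀ i, (p : ZMod N) * c (i - 1) = c i + (r i : ZMod N))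
    (hd : ∀ i, (p : ZMod N) * d (i - 1) = d i + (s i : ZMod N)) :
    FiniteDimensional F
      ↥(Submodule.map
        (Submodule.comap (goodTuples F f N fun i => (r i : ZMod N) + c i - d i).subtype
          (Submodule.map (delMap F p f a b r s) (goodTuples F f N fun i => c i - d i))).mkQ
        (Submodule.comap (goodTuples F f N fun i => (r i : ZMod N) + c i - d i).subtype
          (dvdTuples F f fun i => r i + s i - e'))) ∧
    Module.finrank F
      ↥(Submodule.map
        (Submodule.comap (goodTuples F f N fun i => (r i : ZMod N) + c i - d i).subtype
          (Submodule.map (delMap F p f a b r s) (goodTuples F f N fun i => c i - d i))).mkQ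
        (Submodule.comap (goodTuples F f N fun i => (r i : ZMod N) + c i - d i).subtype
          (dvdTuples F f fun i => r i + s i - e'))) =
      Module.finrank F
        ↥((goodTuples F f N fun i => c i - d i) ⊓ LinearMap.ker (delMap F p f a b r s)) +
      ∑ i : ZMod f, ((Finset.Ico (r i + s i - e') (r i)).filter
        (fun j : ℕ => ((j : ZMod N) = (r i : ZMod N) + c i - d i))).card := by
  classical
  set T := e' + 1 with hT
  set D := delMap F p f a b r s with hD
  set C0 := goodTuples F f N (fun i => c i - d i) with hC0
  set C1 := goodTuples F f N (fun i => (r i : ZMod N) + c i - d i) with hC1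
  set BT := dvdTuples F f (fun i => r i + s i - e') with hBT
  set q := Submodule.comap C1.subtype (Submodule.map D C0) with hq
  have hC0s : C0 = suppSub F f (fun i n => (n : ZMod N) = c i - d i) :=
    hC0.trans (goodTuples_eq_suppSub _ _)
  have hC1s : C1 = suppSub F f (fun i n => (n : ZMod N) = (r i : ZMod N) + c i - d i) :=
    hC1.trans (goodTuples_eq_suppSub _ _)
  have hBTs : BT = suppSub F f (fun i n => r i + s i - e' ≤ n) :=
    hBT.trans (dvdTuples_eq_suppSub _)
  set SS : ZMod f → Finset ℕ := fun i => (Finset.Ico (r i + s i - e') (T + r i)).filter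
      (fun n : ℕ => (n : ZMod N) = (r i : ZMod N) + c i - d i) with hSS
  set S0 : ZMod f → Finset ℕ := fun i => (Finset.range T).filter
      (fun n : ℕ => (n : ZMod N) = c i - d i) with hS0
  set FinS := suppSub F f (fun i n => n ∈ SS i) with hFinS
  set C0low := suppSub F f (fun i n => n ∈ S0 i) with hC0low
  -- basic facts about D
  have haD : ∀ μ, μ ∈ C0 → D μ ∈ C1 := by
    intro μ hμ
    rw [hC1s]
    rw [hC0s] at hμ
    exact delMap_mem_C1 hc hd hμ
  have hDmin : ∀ μ, D μ ∈ suppSub F f (fun i n => r i + s i - e' ≤ n) := by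
    intro μ
    exact delMap_supp_min (fun i => ⟨by have := hs i; omega, by have := hr i; omega⟩) μ
  have hDhigh : ∀ μ, μ ∈ suppSub F f (fun _ n => T ≤ n) →
      D μ ∈ suppSub F f (fun i n => T + r i ≤ n) :=
    fun μ hμ => delMap_supp_high hp2 hT hr hs hμ
  have hsurj : ∀ h, h ∈ suppSub F f (fun i n => (n : ZMod N) = (r i : ZMod N) + c i - d i) →
      h ∈ suppSub F f (fun i n => T + r i ≤ n) →
      ∃ μ, μ ∈ C0 ∧ μ ∈ suppSub F f (fun _ n => T ≤ n) ∧ D μ = h := by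
    intro h h1 h2
    refine ⟨fun j => PowerSeries.mk fun n => solveG F f p T r s a b h n j, ?_, ?_, ?_⟩
    · rw [hC0s]
      intro i n hn
      rw [PowerSeries.coeff_mk] at hn
      exact solveG_C0 hp2 hT hs hc hd h1 n i hn
    · intro i n hn
      rw [PowerSeries.coeff_mk] at hn
      by_contra hlt
      exact hn (solveG_low (by omega) i)
    · exact solveG_spec hp2 hT ha hr hs h2
  have hinj : ∀ μ, μ ∈ suppSub F f (fun _ n => T ≤ n) → D μ = 0 → μ = 0 :=
    fun μ h1 h2 => delMap_inj_high hp2 hT ha hr hs h1 h2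
  -- inclusions
  have hFinC1 : FinS ≤ C1 := by
    rw [hFinS, hC1s]
    refine suppSub_mono ?_
    intro i n hn
    exact (Finset.mem_filter.mp hn).2
  have hFinBT : FinS ≤ BT := by
    rw [hFinS, hBTs]
    refine suppSub_mono ?_
    intro i n hn
    have := Finset.mem_Ico.mp (Finset.mem_filter.mp hn).1
    omega
  have hFinlow : FinS ≤ suppSub F f (fun i n => n < T + r i) := by
    rw [hFinS]
    refine suppSub_mono ?_
    intro i n hn
    have := Finset.mem_Ico.mp (Finset.mem_filter.mp hn).1
    omega
  have hC0lowC0 : C0low ≤ C0 := by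
    rw [hC0low, hC0s]
    refine suppSub_mono ?_
    intro i n hn
    exact (Finset.mem_filter.mp hn).2
  have hC0lowlow : C0low ≤ suppSub F f (fun _ n => n < T) := by
    rw [hC0low]
    refine suppSub_mono ?_
    intro i n hn
    exact Finset.mem_range.mp (Finset.mem_filter.mp hn).1
  -- the map Ψ
  set Ψ : ↥FinS →ₗ[F] (↥C1 ⧸ q) := q.mkQ ∘ₗ Submodule.inclusion hFinC1 with hΨ
  have hhighC1 : ∀ h : ZMod f → PowerSeries F,
      h ∈ C1 → h ∈ suppSub F f (fun i n => ¬ n < T + r i) → h ∈ Submodule.map D C0 := by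
    intro h h1 h2
    obtain ⟨μ, hμC0, -, hμeq⟩ := hsurj h (hC1s.le h1)
      (suppSub_mono (fun i n hn => by omega) h2)
    exact ⟨μ, hμC0, hμeq⟩
  have hrangeΨ : LinearMap.range Ψ = Submodule.map q.mkQ (Submodule.comap C1.subtype BT) := by
    apply le_antisymm
    · rw [hΨ, LinearMap.range_comp, Submodule.range_inclusion]
      exact Submodule.map_mono (Submodule.comap_mono hFinBT)
    · rintro y ⟨x, hx, rfl⟩
      have hxBT : (x : ZMod f → PowerSeries F) ∈ BT := hx
      have hxC1 : (x : ZMod f → PowerSeries F) ∈ C1 := x.2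
      have hzC1 : cutL F f (fun i n => n < T + r i) (x : ZMod f → PowerSeries F) ∈ C1 :=
        hC1s.ge (suppSub_mono (fun i n hn => hn.1) (cutL_mem_suppSub (hC1s.le hxC1)))
      have hzFin : cutL F f (fun i n => n < T + r i) (x : ZMod f → PowerSeries F) ∈ FinS := by
        rw [hFinS]
        intro i n hn
        rw [coeff_cutL] at hn
        split at hn
        · next hlt =>
            have h1 := (hBTs.le hxBT) i n hn
            have h2 := (hC1s.le hxC1) i n hn
            rw [hSS]
            simp only [Finset.mem_filter, Finset.mem_Ico]
            exact ⟨⟨h1, hlt⟩, h2⟩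
        · exact absurd rfl hn
      have hdiff : (x : ZMod f → PowerSeries F)
          - cutL F f (fun i n => n < T + r i) (x : ZMod f → PowerSeries F)
          ∈ Submodule.map D C0 := by
        refine hhighC1 _ ?_ ?_
        · exact hC1s.ge (suppSub_mono (fun i n hn => hn.1)
            (sub_cutL_mem_suppSub (hC1s.le hxC1)))
        · exact suppSub_mono (fun i n hn => hn.2) (sub_cutL_mem_suppSub (hC1s.le hxC1))
      refine ⟨⟨_, hzFin⟩, ?_⟩
      show q.mkQ ⟨_, hFinC1 hzFin⟩ = q.mkQ x
      rw [← sub_eq_zero, ← map_sub, Submodule.mkQ_apply, Submodule.Quotient.mk_eq_zero]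
      rw [hq, Submodule.mem_comap]
      have hcoe : (C1.subtype) ((⟨_, hFinC1 hzFin⟩ : ↥C1) - x)
          = cutL F f (fun i n => n < T + r i) (x : ZMod f → PowerSeries F)
            - (x : ZMod f → PowerSeries F) := rfl
      rw [hcoe]
      have := Submodule.neg_mem _ hdiff
      rw [neg_sub] at this
      exact this
  have hkerΨ : LinearMap.ker Ψ = Submodule.comap FinS.subtype (Submodule.map D C0) := by
    ext x
    rw [LinearMap.mem_ker, hΨ, LinearMap.comp_apply, Submodule.mkQ_apply,
      Submodule.Quotient.mk_eq_zero, hq, Submodule.mem_comap, Submodule.mem_comap]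
    have hcoe : C1.subtype (Submodule.inclusion hFinC1 x) = FinS.subtype x := rfl
    rw [hcoe]
  -- the map ρ
  set ρ : ↥C0low →ₗ[F] (ZMod f → PowerSeries F) :=
    (cutL F f (fun i n => n < T + r i)) ∘ₗ (D ∘ₗ C0low.subtype) with hρ
  have hρ_apply : ∀ x : ↥C0low, ρ x = cutL F f (fun i n => n < T + r i)
      (D (x : ZMod f → PowerSeries F)) := fun x => rfl
  have hrangeρ : LinearMap.range ρ = FinS ⊓ Submodule.map D C0 := by
    apply le_antisymm
    · rintro y ⟨⟨μ, hμ⟩, rfl⟩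
      rw [hρ_apply]
      constructor
      · rw [hFinS]
        intro i n hn
        rw [coeff_cutL] at hn
        split at hn
        · next hlt =>
            have h1 := hDmin μ i n hn
            have h2 := (hC1s.le (haD μ (hC0lowC0 hμ))) i n hn
            rw [hSS]
            simp only [Finset.mem_filter, Finset.mem_Ico]
            exact ⟨⟨h1, hlt⟩, h2⟩
        · exact absurd rfl hn
      · have hbig : D μ - cutL F f (fun i n => n < T + r i) (D μ) ∈ Submodule.map D C0 := by
          refine hhighC1 _ ?_ ?_
          · have h0 := hC1s.le (haD μ (hC0lowC0 hμ))
            exact hC1s.ge (suppSub_mono (fun i n hn => hn.1) (sub_cutL_mem_suppSub h0))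
          · have h0 := hC1s.le (haD μ (hC0lowC0 hμ))
            exact suppSub_mono (fun i n hn => hn.2) (sub_cutL_mem_suppSub h0)
        have hid : cutL F f (fun i n => n < T + r i) (D μ)
            = D μ - (D μ - cutL F f (fun i n => n < T + r i) (D μ)) := by abel
        rw [hid]
        exact Submodule.sub_mem _ ⟨μ, hC0lowC0 hμ, rfl⟩ hbig
    · rintro y ⟨hyF, μ, hμ, rfl⟩
      have hμl : cutL F f (fun _ n => n < T) μ ∈ C0low := by
        rw [hC0low]
        intro i n hn
        rw [coeff_cutL] at hn
        split at hn
        · next hlt =>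
            have h1 := (hC0s.le hμ) i n hn
            rw [hS0]
            simp only [Finset.mem_filter, Finset.mem_range]
            exact ⟨hlt, h1⟩
        · exact absurd rfl hn
      refine ⟨⟨_, hμl⟩, ?_⟩
      rw [hρ_apply]
      have hμhigh : μ - cutL F f (fun _ n => n < T) μ ∈ suppSub F f (fun _ n => T ≤ n) := by
        have := sub_cutL_mem_suppSub (P := fun _ n => n < T) (hC0s.le hμ)
        exact suppSub_mono (fun i n hn => by omega) this
      have hsplit : D ((cutL F f (fun _ n => n < T) μ : ZMod f → PowerSeries F))
          = D μ - D (μ - cutL F f (fun _ n => n < T) μ) := by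
        rw [map_sub]; abel
      show cutL F f (fun i n => n < T + r i) (D _) = D μ
      rw [hsplit, map_sub]
      rw [cutL_eq_self (hFinlow hyF)]
      rw [cutL_eq_zero (suppSub_mono (fun i n hn => by omega) (hDhigh _ hμhigh)), sub_zero]
  -- the map θ
  set θ : ↥(C0 ⊓ LinearMap.ker D) →ₗ[F] (ZMod f → PowerSeries F) :=
    (cutL F f (fun _ n => n < T)) ∘ₗ (C0 ⊓ LinearMap.ker D).subtype with hθ
  have hθ_apply : ∀ x : ↥(C0 ⊓ LinearMap.ker D),
      θ x = cutL F f (fun _ n => n < T) (x : ZMod f → PowerSeries F) := fun x => rfl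
  have hkerθ : LinearMap.ker θ = ⊥ := by
    rw [LinearMap.ker_eq_bot']
    intro κ hκ0
    rw [hθ_apply] at hκ0
    have hκC0 : (κ : ZMod f → PowerSeries F) ∈ C0 := (Submodule.mem_inf.mp κ.2).1
    have hκker : D (κ : ZMod f → PowerSeries F) = 0 := (Submodule.mem_inf.mp κ.2).2
    have h1 : (κ : ZMod f → PowerSeries F)
        - cutL F f (fun _ n => n < T) (κ : ZMod f → PowerSeries F)
        ∈ suppSub F f (fun _ n => T ≤ n) := by
      have := sub_cutL_mem_suppSub (P := fun _ n => n < T) (hC0s.le hκC0)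
      exact suppSub_mono (fun i n hn => by omega) this
    rw [hκ0, sub_zero] at h1
    have h2 := hinj _ h1 hκker
    exact Subtype.ext (by rw [h2]; rfl)
  have hθinj : Function.Injective θ := LinearMap.ker_eq_bot.mp hkerθ
  have hrangeθ : LinearMap.range θ = Submodule.map C0low.subtype (LinearMap.ker ρ) := by
    apply le_antisymm
    · rintro y ⟨κ, rfl⟩
      rw [hθ_apply]
      have hκC0 : (κ : ZMod f → PowerSeries F) ∈ C0 := (Submodule.mem_inf.mp κ.2).1
      have hκker : D (κ : ZMod f → PowerSeries F) = 0 := (Submodule.mem_inf.mp κ.2).2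
      have hmC0low : cutL F f (fun _ n => n < T) (κ : ZMod f → PowerSeries F) ∈ C0low := by
        rw [hC0low]
        intro i n hn
        rw [coeff_cutL] at hn
        split at hn
        · next hlt =>
            have h1 := (hC0s.le hκC0) i n hn
            rw [hS0]
            simp only [Finset.mem_filter, Finset.mem_range]
            exact ⟨hlt, h1⟩
        · exact absurd rfl hn
      refine ⟨⟨_, hmC0low⟩, ?_, rfl⟩
      show ρ ⟨_, hmC0low⟩ = 0
      rw [hρ_apply]
      have hκhigh : (κ : ZMod f → PowerSeries F)
          - cutL F f (fun _ n => n < T) (κ : ZMod f → PowerSeries F)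
          ∈ suppSub F f (fun _ n => T ≤ n) := by
        have := sub_cutL_mem_suppSub (P := fun _ n => n < T) (hC0s.le hκC0)
        exact suppSub_mono (fun i n hn => by omega) this
      have hsplit : D ((cutL F f (fun _ n => n < T) (κ : ZMod f → PowerSeries F)))
          = - D ((κ : ZMod f → PowerSeries F)
              - cutL F f (fun _ n => n < T) (κ : ZMod f → PowerSeries F)) := by
        rw [map_sub, hκker]; abel
      show cutL F f (fun i n => n < T + r i) (D _) = 0
      rw [hsplit, map_neg]
      rw [cutL_eq_zero (suppSub_mono (fun i n hn => by omega) (hDhigh _ hκhigh))]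
      simp
    · rintro y ⟨⟨m, hm⟩, hker, rfl⟩
      have hker2 : (cutL F f fun i n => n < T + r i) (D m) = 0 := hker
      have hmC0 : m ∈ C0 := hC0lowC0 hm
      have hDmhigh : D m ∈ suppSub F f (fun i n => T + r i ≤ n) := by
        intro i n hn
        by_contra hlt
        have h0 : (PowerSeries.coeff n) (cutL F f (fun i n => n < T + r i) (D m) i) ≠ 0 := by
          rw [coeff_cutL, if_pos (by omega)]
          exact hn
        rw [hker2] at h0
        simp at h0
      obtain ⟨ν, hνC0, hνhigh, hνeq⟩ := hsurj (D m) (hC1s.le (haD m hmC0)) hDmhigh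
      have hκmem : m - ν ∈ C0 ⊓ LinearMap.ker D :=
        Submodule.mem_inf.mpr ⟨Submodule.sub_mem _ hmC0 hνC0, by
          rw [LinearMap.mem_ker, map_sub, hνeq, sub_self]⟩
      refine ⟨⟨m - ν, hκmem⟩, ?_⟩
      rw [hθ_apply]
      show cutL F f (fun _ n => n < T) (m - ν) = m
      rw [map_sub]
      rw [cutL_eq_self (suppSub_mono (fun i n hn => Finset.mem_range.mp
        (Finset.mem_filter.mp hn).1) (hC0low.le hm))]
      rw [cutL_eq_zero (suppSub_mono (fun i n hn => by omega) hνhigh), sub_zero]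
  -- finite dimensionality
  haveI instF : FiniteDimensional F ↥FinS := finiteDimensional_suppSub SS
  haveI instC0low : FiniteDimensional F ↥C0low := finiteDimensional_suppSub S0
  -- dimension counts
  have eF : Module.finrank F ↥FinS = ∑ i, (SS i).card := finrank_suppSub SS
  have eC0low : Module.finrank F ↥C0low = ∑ i, (S0 i).card := finrank_suppSub S0
  have ecard : ∑ i, (SS i).card
      = (∑ i : ZMod f, ((Finset.Ico (r i + s i - e') (r i)).filter
          (fun j : ℕ => ((j : ZMod N) = (r i : ZMod N) + c i - d i))).card)
        + ∑ i, (S0 i).card := by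
    rw [← Finset.sum_add_distrib]
    refine Finset.sum_congr rfl (fun i _ => ?_)
    exact card_Ico_split N (r i) (s i) T e' (c i) (d i) hT (hs i)
  have n1 := LinearMap.finrank_range_add_finrank_ker Ψ
  have n2 := LinearMap.finrank_range_add_finrank_ker ρ
  have e1 : Module.finrank F ↥(LinearMap.ker Ψ)
      = Module.finrank F ↥(FinS ⊓ Submodule.map D C0) := by
    rw [hkerΨ, ← Submodule.map_comap_subtype]
    exact LinearEquiv.finrank_eq
      (Submodule.equivMapOfInjective _ (Submodule.injective_subtype _) _)
  have e2 : Module.finrank F ↥(LinearMap.range ρ)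
      = Module.finrank F ↥(FinS ⊓ Submodule.map D C0) := by rw [hrangeρ]
  have e3 : Module.finrank F ↥(C0 ⊓ LinearMap.ker D)
      = Module.finrank F ↥(LinearMap.ker ρ) := by
    calc Module.finrank F ↥(C0 ⊓ LinearMap.ker D)
        = Module.finrank F ↥(LinearMap.range θ) :=
          LinearEquiv.finrank_eq (LinearEquiv.ofInjective θ hθinj)
      _ = Module.finrank F ↥(Submodule.map C0low.subtype (LinearMap.ker ρ)) := by
          rw [hrangeθ]
      _ = Module.finrank F ↥(LinearMap.ker ρ) :=
          (LinearEquiv.finrank_eq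
            (Submodule.equivMapOfInjective _ (Submodule.injective_subtype _) _)).symm
  constructor
  · rw [← hrangeΨ]
    infer_instance
  · have e4 : Module.finrank F ↥(Submodule.map q.mkQ (Submodule.comap C1.subtype BT))
        = Module.finrank F ↥(LinearMap.range Ψ) := by rw [hrangeΨ]
    rw [e4]
    omega

end BTAux

end

/-- With `C¹_BT ⊆ C¹` the subspace of tuples `h` with `u^{max(0, r_i + s_i - e')} ∣ h_i` for all
`i` (representing the extension classes of height at most one), the image of `C¹_BT` in
`coker ∂` is a finite-dimensional `F`-vector space of dimension
`dim ker ∂ + Σ_i #{ j ∈ [max(0, r_i + s_i - e'), r_i) : j ≡ r_i + c_i - d_i (mod N) }`. -/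
theorem ext_BT_dimension_formula
    (p f f' e' : ℕ) (hp : p.Prime) [NeZero f] (hf' : 0 < f') (hff' : f ∣ f')
    (F : Type*) [Field F] [Fintype F] [CharP F p]
    (a b : ZMod f → Fˣ) (r s : ZMod f → ℕ)
    (c d : ZMod f → ZMod (p ^ f' - 1))
    (hc : ∀ i, (p : ZMod (p ^ f' - 1)) * c (i - 1) = c i + (r i : ZMod (p ^ f' - 1)))
    (hd : ∀ i, (p : ZMod (p ^ f' - 1)) * d (i - 1) = d i + (s i : ZMod (p ^ f' - 1)))
    (hr : ∀ i, r i ≤ e') (hs : ∀ i, s i ≤ e') :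
    let N := p ^ f' - 1
    let C0 := goodTuples F f N fun i => c i - d i
    let C1 := goodTuples F f N fun i => (r i : ZMod N) + c i - d i
    let D := delMap F p f (fun i => (a i : F)) (fun i => (b i : F)) r s
    let BT := dvdTuples F f fun i => r i + s i - e'
    let q := Submodule.comap C1.subtype (Submodule.map D C0)
    let img := Submodule.map q.mkQ (Submodule.comap C1.subtype BT)
    FiniteDimensional F ↥img ∧
    Module.finrank F ↥img =
      Module.finrank F ↥(C0 ⊓ LinearMap.ker D) +
      ∑ i : ZMod f, ((Finset.Ico (r i + s i - e') (r i)).filter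
        (fun j : ℕ => ((j : ZMod N) = (r i : ZMod N) + c i - d i))).card := by
  intro N C0 C1 D BT q img
  exact BTAux.master p N e' hp.two_le (fun i => ((a i : F))) (fun i => ((b i : F)))
    (fun i => Units.ne_zero (a i)) r s hr hs c d hc hd
end

section
/- Then: (a) for every i, p^f − 1 divides Σ_{j=1}^{f} p^{f−j} r_{i+j} (indices taken mod f), so that α_i(r) := (Σ_{j=1}^{f} p^{f−j} r_{i+j})/(p^f − 1) is an integer, and likewise α_i(s); (b) dim_F ker ∂ ≤ 1; and (c) ker ∂ ≠ 0 if and only if ∏_{i=0}^{f−1} a_i = ∏_{i=0}^{f−1} b_i, α_i(r) ≥ α_i(s) for all i, and c_0 − α_0(r) = d_0 − α_0(s) in ℤ/Nℤ. (ker ∂ is the space of homomorphisms of Breuil–Kisin modules with descent data M(r,a,c) → M(s,b,d); the criterion in (c) says that a nonzero such map exists exactly when the associated Galois characters agree and α_i(M) ≥ α_i(N) for all i.) -/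
namespace HomRankOne

open Finset

/-- `wsum p f r i = ∑_{j<f} p^j r_{i-j}`. -/
def wsum (p f : ℕ) (r : ZMod f → ℕ) (i : ZMod f) : ℕ :=
  ∑ j ∈ Finset.range f, p ^ j * r (i - (j : ℕ))

lemma Sr_eq_wsum (p f : ℕ) [NeZero f] (r : ZMod f → ℕ) (i : ZMod f) :
    (∑ j ∈ Finset.range f, p ^ (f - 1 - j) * r (i + ((j + 1 : ℕ) : ZMod f)))
      = wsum p f r i := by
  rw [wsum, ← Finset.sum_range_reflect (fun j => p ^ j * r (i - (j : ℕ))) f]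
  refine Finset.sum_congr rfl fun j hj => ?_
  have hj' : j < f := Finset.mem_range.mp hj
  have key : ((f - 1 - j : ℕ) : ZMod f) = -((j + 1 : ℕ) : ZMod f) := by
    have h : (f - 1 - j) + (j + 1) = f := by omega
    have h0 : (((f - 1 - j) + (j + 1) : ℕ) : ZMod f) = 0 := by
      rw [h]; exact_mod_cast ZMod.natCast_self f
    push_cast at h0 ⊢
    linear_combination h0
  rw [key, sub_neg_eq_add]

lemma keyA (p f : ℕ) [NeZero f] (r : ZMod f → ℕ) (i : ZMod f) :
    p * wsum p f r (i - 1) + r i = wsum p f r i + p ^ f * r i := by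
  have hf : f ≠ 0 := NeZero.ne f
  have h1 : p * wsum p f r (i - 1)
      = ∑ j ∈ Finset.range f, p ^ (j + 1) * r (i - ((j + 1 : ℕ) : ZMod f)) := by
    rw [wsum, Finset.mul_sum]
    refine Finset.sum_congr rfl fun j hj => ?_
    have : i - ((j + 1 : ℕ) : ZMod f) = i - 1 - (j : ℕ) := by push_cast; ring
    rw [this, pow_succ]; ring
  have h2 := Finset.sum_range_succ' (fun j => p ^ j * r (i - (j : ℕ))) f
  have h3 := Finset.sum_range_succ (fun j => p ^ j * r (i - (j : ℕ))) f
  have h4 : i - ((f : ℕ) : ZMod f) = i := by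
    rw [ZMod.natCast_self]; ring
  rw [h1]
  have h2' : (∑ j ∈ Finset.range (f+1), p ^ j * r (i - (j : ℕ)))
      = (∑ j ∈ Finset.range f, p ^ (j+1) * r (i - ((j + 1 : ℕ) : ZMod f))) + p ^ 0 * r (i - ((0:ℕ) : ZMod f)) := h2
  have h3' : (∑ j ∈ Finset.range (f+1), p ^ j * r (i - (j : ℕ)))
      = wsum p f r i + p ^ f * r (i - ((f : ℕ) : ZMod f)) := h3
  rw [h4] at h3'
  have h5 : i - ((0:ℕ) : ZMod f) = i := by push_cast; ring
  rw [h5] at h2'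
  simp only [pow_zero, one_mul] at h2'
  omega

lemma pow_mul_c {N : ℕ} (p f : ℕ) [NeZero f] (r : ZMod f → ℕ) (c : ZMod f → ZMod N)
    (hc : ∀ i, (p : ZMod N) * c (i - 1) = c i + (r i : ZMod N)) :
    ∀ (k : ℕ) (i : ZMod f), (p : ZMod N) ^ k * c (i - (k : ℕ))
      = c i + ((∑ j ∈ Finset.range k, p ^ j * r (i - (j : ℕ)) : ℕ) : ZMod N) := by
  intro k
  induction k with
  | zero => intro i; simp
  | succ k ih =>
    intro i
    have hidx : i - ((k + 1 : ℕ) : ZMod f) = (i - (k : ℕ)) - 1 := by push_cast; ring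
    rw [hidx, pow_succ, mul_assoc, hc (i - (k : ℕ)), mul_add, Finset.sum_range_succ]
    rw [mul_comm ((p : ZMod N) ^ k) ((r (i - (k:ℕ)) : ZMod N))]
    push_cast
    rw [ih i]
    push_cast
    ring



lemma q_dvd_wsum {N : ℕ} (p f : ℕ) [NeZero f] [NeZero N]
    (hp : 1 ≤ p ^ f) (hqN : p ^ f - 1 ∣ N) (r : ZMod f → ℕ) (c : ZMod f → ZMod N)
    (hc : ∀ i, (p : ZMod N) * c (i - 1) = c i + (r i : ZMod N)) (i : ZMod f) :
    p ^ f - 1 ∣ wsum p f r i := by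
  have h := pow_mul_c p f r c hc f i
  have h4 : i - ((f : ℕ) : ZMod f) = i := by rw [ZMod.natCast_self]; ring
  rw [h4] at h
  -- (p^f : ZMod N) * c i = c i + wsum
  have hv : ((c i).val : ZMod N) = c i := by
    rw [ZMod.natCast_val, ZMod.cast_id]
  push_cast at h
  have h2 : ((wsum p f r i : ℕ) : ZMod N) = (((p ^ f - 1) * (c i).val : ℕ) : ZMod N) := by
    have hw : ((wsum p f r i : ℕ) : ZMod N)
        = ∑ x ∈ Finset.range f, (p : ZMod N) ^ x * ((r (i - (x : ℕ)) : ℕ) : ZMod N) := by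
      rw [wsum]; push_cast; ring
    rw [hw]
    push_cast [Nat.cast_sub hp]
    rw [hv]
    linear_combination -h
  have h3 := (ZMod.natCast_eq_natCast_iff _ _ _).mp h2
  have h5 : (N : ℤ) ∣ ((p ^ f - 1 : ℕ) * (c i).val : ℤ) - (wsum p f r i : ℤ) := by
    exact_mod_cast Nat.ModEq.dvd h3
  push_cast at h5
  have hq : ((p ^ f - 1 : ℕ) : ℤ) ∣ (N : ℤ) := Int.natCast_dvd_natCast.mpr hqN
  have h6 : ((p ^ f - 1 : ℕ) : ℤ) ∣ (wsum p f r i : ℤ) := by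
    have hA : ((p ^ f - 1 : ℕ) : ℤ) ∣ ((p ^ f - 1 : ℕ) : ℤ) * ((c i).val : ℤ) := Dvd.intro _ rfl
    have hB : ((p ^ f - 1 : ℕ) : ℤ) ∣ ((p ^ f - 1 : ℕ) : ℤ) * ((c i).val : ℤ) - (wsum p f r i : ℤ) := dvd_trans hq h5
    simpa using dvd_sub hA hB
  exact_mod_cast h6

open Finset PowerSeries

variable {F : Type*} [Field F] {p f : ℕ} [NeZero f]
  {a b : ZMod f → Fˣ} {r s : ZMod f → ℕ}

lemma coeff_C_X_pow_mul (t : F) (k n : ℕ) (g : PowerSeries F) :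
    coeff n (C t * X ^ k * g) = if k ≤ n then t * coeff (n - k) g else 0 := by
  rw [mul_assoc, mul_comm ((X : F⟦X⟧) ^ k) g, PowerSeries.coeff_C_mul,
    PowerSeries.coeff_mul_X_pow']
  split <;> simp

lemma mem_ker_iff (μ : ZMod f → PowerSeries F) :
    μ ∈ LinearMap.ker (delMap F p f (fun i => (a i : F)) (fun i => (b i : F)) r s) ↔
      ∀ i, C (a i : F) * X ^ r i * μ i = C (b i : F) * X ^ s i * expandPS F p (μ (i - 1)) := by
  rw [LinearMap.mem_ker]
  constructor
  · intro h i
    have := congrFun h i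
    simp only [delMap, LinearMap.coe_mk, AddHom.coe_mk, Pi.zero_apply] at this
    linear_combination -this
  · intro h
    funext i
    simp only [delMap, LinearMap.coe_mk, AddHom.coe_mk, Pi.zero_apply]
    linear_combination -(h i)

lemma step_back {μ : ZMod f → PowerSeries F}
    (hμ : μ ∈ LinearMap.ker (delMap F p f (fun i => (a i : F)) (fun i => (b i : F)) r s))
    (hp0 : 0 < p) (i : ZMod f) (m : ℕ) (h : coeff m (μ i) ≠ 0) :
    ∃ m', coeff m' (μ (i - 1)) ≠ 0 ∧ p * m' + s i = m + r i ∧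
      (a i : F) * coeff m (μ i) = (b i : F) * coeff m' (μ (i - 1)) := by
  have e := (mem_ker_iff μ).mp hμ i
  have e2 := congrArg (coeff (m + r i)) e
  rw [coeff_C_X_pow_mul, coeff_C_X_pow_mul] at e2
  rw [if_pos (Nat.le_add_left _ _)] at e2
  have hm : m + r i - r i = m := by omega
  rw [hm] at e2
  by_cases hs : s i ≤ m + r i
  · rw [if_pos hs, coeff_expandPS] at e2
    by_cases hd : p ∣ m + r i - s i
    · rw [if_pos hd] at e2
      refine ⟨(m + r i - s i) / p, ?_, ?_, e2⟩
      · intro h0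
        rw [h0, mul_zero] at e2
        exact (mul_ne_zero (Units.ne_zero (a i)) h) e2
      · rw [Nat.mul_div_cancel' hd]
        omega
    · rw [if_neg hd, mul_zero] at e2
      exact absurd e2 (mul_ne_zero (Units.ne_zero (a i)) h)
  · rw [if_neg hs] at e2
    exact absurd e2 (mul_ne_zero (Units.ne_zero (a i)) h)

lemma chain {μ : ZMod f → PowerSeries F}
    (hμ : μ ∈ LinearMap.ker (delMap F p f (fun i => (a i : F)) (fun i => (b i : F)) r s))
    (hp0 : 0 < p) :
    ∀ (k : ℕ) (i : ZMod f) (m : ℕ), coeff m (μ i) ≠ 0 →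
      ∃ m', coeff m' (μ (i - (k : ℕ))) ≠ 0 ∧
        p ^ k * m' + ∑ j ∈ Finset.range k, p ^ j * s (i - (j : ℕ))
          = m + ∑ j ∈ Finset.range k, p ^ j * r (i - (j : ℕ)) := by
  intro k
  induction k with
  | zero => intro i m h; exact ⟨m, by simpa using h, by simp⟩
  | succ k ih =>
    intro i m h
    obtain ⟨m₁, h₁, e₁, -⟩ := step_back hμ hp0 i m h
    obtain ⟨m', h', e'⟩ := ih (i - 1) m₁ h₁
    have hidx : i - ((k + 1 : ℕ) : ZMod f) = i - 1 - ((k : ℕ) : ZMod f) := by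
      push_cast; ring
    refine ⟨m', by rwa [hidx], ?_⟩
    have hsum : ∀ t : ZMod f → ℕ,
        ∑ j ∈ Finset.range (k + 1), p ^ j * t (i - (j : ℕ))
          = p * (∑ j ∈ Finset.range k, p ^ j * t (i - 1 - (j : ℕ))) + t i := by
      intro t
      rw [Finset.sum_range_succ' (fun j => p ^ j * t (i - (j : ℕ))) k, Finset.mul_sum]
      simp only [pow_zero, one_mul, Nat.cast_zero, sub_zero]
      congr 1
      refine Finset.sum_congr rfl fun j hj => ?_
      have : i - ((j + 1 : ℕ) : ZMod f) = i - 1 - (j : ℕ) := by push_cast; ring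
      rw [this, pow_succ]; ring
    rw [hsum r, hsum s]
    zify
    zify at e₁ e'
    linear_combination (p : ℤ) * e' + e₁

lemma loop_e {μ : ZMod f → PowerSeries F}
    (hμ : μ ∈ LinearMap.ker (delMap F p f (fun i => (a i : F)) (fun i => (b i : F)) r s))
    (hp0 : 0 < p) (i : ZMod f) :
    ∀ (k : ℕ) (m : ℕ), coeff m (μ i) ≠ 0 →
      ∃ m', coeff m' (μ i) ≠ 0 ∧
        ((p : ℤ) ^ f - 1) * m - ((wsum p f r i : ℤ) - (wsum p f s i : ℤ))
          = (p : ℤ) ^ (f * k) *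
            (((p : ℤ) ^ f - 1) * m' - ((wsum p f r i : ℤ) - (wsum p f s i : ℤ))) := by
  intro k
  induction k with
  | zero => intro m h; exact ⟨m, h, by ring⟩
  | succ k ih =>
    intro m h
    -- one loop of length f
    obtain ⟨m₁, h₁, e₁⟩ := chain hμ hp0 f i m h
    have h4 : i - ((f : ℕ) : ZMod f) = i := by rw [ZMod.natCast_self]; ring
    rw [h4] at h₁
    obtain ⟨m', h', e'⟩ := ih m₁ h₁
    refine ⟨m', h', ?_⟩
    have e₁' : (p : ℤ) ^ f * m₁ + (wsum p f s i : ℤ) = m + (wsum p f r i : ℤ) := by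
      rw [wsum, wsum]
      zify at e₁
      convert e₁ using 2 <;> push_cast <;> ring
    have hstep : ((p : ℤ) ^ f - 1) * m - ((wsum p f r i : ℤ) - (wsum p f s i : ℤ))
        = (p : ℤ) ^ f * (((p : ℤ) ^ f - 1) * m₁ - ((wsum p f r i : ℤ) - (wsum p f s i : ℤ))) := by
      linear_combination (1 - (p : ℤ) ^ f) * e₁'
    rw [hstep, e', ← mul_assoc, ← pow_add]
    ring_nf

lemma support_eq {μ : ZMod f → PowerSeries F}
    (hμ : μ ∈ LinearMap.ker (delMap F p f (fun i => (a i : F)) (fun i => (b i : F)) r s))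
    (hp2 : 2 ≤ p) (i : ZMod f) (m : ℕ) (h : coeff m (μ i) ≠ 0) :
    ((p : ℤ) ^ f - 1) * m = (wsum p f r i : ℤ) - (wsum p f s i : ℤ) := by
  have hf : 1 ≤ f := Nat.one_le_iff_ne_zero.mpr (NeZero.ne f)
  by_contra hne
  set E : ℤ := ((p : ℤ) ^ f - 1) * m - ((wsum p f r i : ℤ) - (wsum p f s i : ℤ)) with hE
  have hE0 : E ≠ 0 := fun h0 => hne (by linarith [sub_eq_zero.mp h0])
  obtain ⟨m', h', e'⟩ := loop_e hμ (by omega) i E.natAbs m h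
  rw [← hE] at e'
  have hE0' : ((p : ℤ) ^ f - 1) * m' - ((wsum p f r i : ℤ) - (wsum p f s i : ℤ)) ≠ 0 := by
    intro h0
    rw [h0, mul_zero] at e'
    exact hE0 e'
  have habs : E.natAbs = p ^ (f * E.natAbs) *
      (((p : ℤ) ^ f - 1) * m' - ((wsum p f r i : ℤ) - (wsum p f s i : ℤ))).natAbs := by
    have h0 := congrArg Int.natAbs e'
    rwa [Int.natAbs_mul, Int.natAbs_pow, Int.natAbs_natCast] at h0
  have h1 : 1 ≤ (((p : ℤ) ^ f - 1) * m' - ((wsum p f r i : ℤ) - (wsum p f s i : ℤ))).natAbs :=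
    Nat.one_le_iff_ne_zero.mpr (Int.natAbs_ne_zero.mpr hE0')
  have h2 : p ^ (f * E.natAbs) ≤ E.natAbs := by
    calc p ^ (f * E.natAbs) = p ^ (f * E.natAbs) * 1 := by ring
    _ ≤ p ^ (f * E.natAbs) * _ := Nat.mul_le_mul_left _ h1
    _ = E.natAbs := habs.symm
  have h3 : 2 ^ E.natAbs ≤ p ^ (f * E.natAbs) := by
    calc 2 ^ E.natAbs ≤ 2 ^ (f * E.natAbs) := Nat.pow_le_pow_right (by omega) (Nat.le_mul_of_pos_left _ (by omega))
    _ ≤ p ^ (f * E.natAbs) := Nat.pow_le_pow_left hp2 _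
  have := Nat.lt_two_pow_self (n := E.natAbs)
  omega

lemma reach {μ : ZMod f → PowerSeries F}
    (hμ : μ ∈ LinearMap.ker (delMap F p f (fun i => (a i : F)) (fun i => (b i : F)) r s))
    (hp0 : 0 < p) (i₀ : ZMod f) (m₀ : ℕ) (h : coeff m₀ (μ i₀) ≠ 0) (i : ZMod f) :
    ∃ m, coeff m (μ i) ≠ 0 := by
  obtain ⟨m, hm, -⟩ := chain hμ hp0 (i₀ - i).val i₀ m₀ h
  refine ⟨m, ?_⟩
  have : i₀ - (((i₀ - i).val : ℕ) : ZMod f) = i := by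
    rw [ZMod.natCast_val, ZMod.cast_id]; ring
  rwa [this] at hm

lemma exists_coeff_ne_zero {μ : ZMod f → PowerSeries F} (h : μ ≠ 0) :
    ∃ i m, coeff m (μ i) ≠ 0 := by
  by_contra hc
  push_neg at hc
  exact h (funext fun i => PowerSeries.ext fun n => by simpa using hc i n)

lemma expandPS_C_mul_X_pow (hp0 : 0 < p) (t : F) (m : ℕ) :
    expandPS F p (C t * X ^ m) = C t * X ^ (p * m) := by
  ext n
  have hR : ∀ k, coeff n (C t * X ^ k) = if n = k then t else 0 := by
    intro k; rw [PowerSeries.coeff_C_mul, PowerSeries.coeff_X_pow]; split <;> simp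
  have hR' : ∀ k j, coeff j (C t * X ^ k) = if j = k then t else 0 := by
    intro k j; rw [PowerSeries.coeff_C_mul, PowerSeries.coeff_X_pow]; split <;> simp
  rw [coeff_expandPS, hR]
  by_cases hd : p ∣ n
  · rw [if_pos hd, hR']
    obtain ⟨k, rfl⟩ := hd
    rw [Nat.mul_div_cancel_left k hp0]
    by_cases hk : k = m
    · subst hk; simp
    · rw [if_neg hk, if_neg (fun hh => hk (Nat.eq_of_mul_eq_mul_left hp0 hh))]
  · rw [if_neg hd, if_neg (fun hh => hd ⟨m, hh⟩)]

lemma prod_range_zmod (g : ZMod f → F) :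
    ∏ j ∈ Finset.range f, g ((j : ℕ) : ZMod f) = ∏ i : ZMod f, g i := by
  refine Finset.prod_bij' (fun j _ => ((j : ℕ) : ZMod f)) (fun i _ => i.val)
    (fun j hj => Finset.mem_univ _) (fun i _ => Finset.mem_range.mpr (ZMod.val_lt i))
    (fun j hj => ZMod.val_cast_of_lt (Finset.mem_range.mp hj))
    (fun i _ => by show ((i.val : ℕ) : ZMod f) = i; rw [ZMod.natCast_val, ZMod.cast_id])
    (fun j hj => rfl)

lemma prod_sub_one (g : ZMod f → F) : ∏ i : ZMod f, g (i - 1) = ∏ i : ZMod f, g i :=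
  Equiv.prod_comp (Equiv.subRight (1 : ZMod f)) g

end HomRankOne

open Finset PowerSeries HomRankOne in
/-- (a) For every `i`, `p^f - 1` divides `Σ_{j=1}^{f} p^{f-j} r_{i+j}` (and likewise for `s`),
so that `α_i(r) := (Σ_{j=1}^{f} p^{f-j} r_{i+j})/(p^f - 1)` is an integer, and likewise `α_i(s)`;
(b) `dim_F ker ∂ ≤ 1`; and (c) `ker ∂ ≠ 0` if and only if `∏ a_i = ∏ b_i`,
`α_i(r) ≥ α_i(s)` for all `i`, and `c_0 - α_0(r) = d_0 - α_0(s)` in `ℤ/Nℤ`.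
Here `ker ∂` is the space of homomorphisms `M(r,a,c) → M(s,b,d)` of rank one Breuil–Kisin
modules with tame descent data. -/
theorem hom_rank_one_criterion
    (p f f' : ℕ) (hp : p.Prime) [NeZero f] (hf' : 0 < f') (hff' : f ∣ f')
    (F : Type*) [Field F] [Fintype F] [CharP F p]
    (a b : ZMod f → Fˣ) (r s : ZMod f → ℕ)
    (c d : ZMod f → ZMod (p ^ f' - 1))
    (hc : ∀ i, (p : ZMod (p ^ f' - 1)) * c (i - 1) = c i + (r i : ZMod (p ^ f' - 1)))
    (hd : ∀ i, (p : ZMod (p ^ f' - 1)) * d (i - 1) = d i + (s i : ZMod (p ^ f' - 1))) :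
    let N := p ^ f' - 1
    let C0 := goodTuples F f N fun i => c i - d i
    let D := delMap F p f (fun i => (a i : F)) (fun i => (b i : F)) r s
    let Sr : ZMod f → ℕ := fun i =>
      ∑ j ∈ Finset.range f, p ^ (f - 1 - j) * r (i + ((j + 1 : ℕ) : ZMod f))
    let Ss : ZMod f → ℕ := fun i =>
      ∑ j ∈ Finset.range f, p ^ (f - 1 - j) * s (i + ((j + 1 : ℕ) : ZMod f))
    ((∀ i, (p ^ f - 1) ∣ Sr i) ∧ (∀ i, (p ^ f - 1) ∣ Ss i)) ∧
    Module.rank F ↥(C0 ⊓ LinearMap.ker D) ≤ 1 ∧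
    (C0 ⊓ LinearMap.ker D ≠ ⊥ ↔
      ((∏ i : ZMod f, (a i : F)) = ∏ i : ZMod f, (b i : F)) ∧
      (∀ i, Ss i / (p ^ f - 1) ≤ Sr i / (p ^ f - 1)) ∧
      c 0 - ((Sr 0 / (p ^ f - 1) : ℕ) : ZMod N) =
        d 0 - ((Ss 0 / (p ^ f - 1) : ℕ) : ZMod N)) := by
  intro N C0 D Sr Ss
  have hp2 : 2 ≤ p := hp.two_le
  have hf1 : 1 ≤ f := Nat.one_le_iff_ne_zero.mpr (NeZero.ne f)
  have hppf : 2 ≤ p ^ f := le_trans hp2 (Nat.le_self_pow (by omega) p)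
  have hq0 : 0 < p ^ f - 1 := by omega
  have hNpos : 0 < N := by
    have : 2 ≤ p ^ f' := le_trans hp2 (Nat.le_self_pow (by omega) p)
    show 0 < p ^ f' - 1; omega
  haveI : NeZero N := ⟨by omega⟩
  have hqN : p ^ f - 1 ∣ N := by
    obtain ⟨k, hk⟩ := hff'
    show p ^ f - 1 ∣ p ^ f' - 1
    rw [hk]
    exact Nat.pow_sub_one_dvd_pow_sub_one p (dvd_mul_right f k)
  have hSr : ∀ i, Sr i = wsum p f r i := fun i => Sr_eq_wsum p f r i
  have hSs : ∀ i, Ss i = wsum p f s i := fun i => Sr_eq_wsum p f s i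
  have hdvdr : ∀ i, p ^ f - 1 ∣ Sr i := by
    intro i; rw [hSr i]
    exact q_dvd_wsum p f (by omega) hqN r c hc i
  have hdvds : ∀ i, p ^ f - 1 ∣ Ss i := by
    intro i; rw [hSs i]
    exact q_dvd_wsum p f (by omega) hqN s d hd i
  -- integer versions
  have hqz : ((p ^ f - 1 : ℕ) : ℤ) = (p : ℤ) ^ f - 1 := by
    push_cast [Nat.cast_sub (by omega : 1 ≤ p ^ f)]; ring
  have hqzne : ((p : ℤ) ^ f - 1) ≠ 0 := by
    have h0 : ((p ^ f - 1 : ℕ) : ℤ) ≠ 0 := Int.natCast_ne_zero.mpr (by omega)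
    rwa [hqz] at h0
  choose ar har using hdvdr
  choose bs hbs using hdvds
  have harv : ∀ i, Sr i / (p ^ f - 1) = ar i := by
    intro i; rw [har i, Nat.mul_div_cancel_left _ hq0]
  have hbsv : ∀ i, Ss i / (p ^ f - 1) = bs i := by
    intro i; rw [hbs i, Nat.mul_div_cancel_left _ hq0]
  -- support value: any nonzero coefficient degree m at index i satisfies m + bs i = ar i
  have hsupp : ∀ (μ : ZMod f → PowerSeries F), μ ∈ LinearMap.ker D →
      ∀ i m, coeff m (μ i) ≠ 0 → bs i ≤ ar i ∧ m = ar i - bs i := by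
    intro μ hker i m hm
    have h1 := support_eq hker hp2 i m hm
    rw [← hSr i, ← hSs i, har i, hbs i] at h1
    have h2 : ((p ^ f - 1 : ℕ) : ℤ) * m = ((p ^ f - 1 : ℕ) : ℤ) * ar i - ((p ^ f - 1 : ℕ) : ℤ) * bs i := by
      push_cast at h1
      rw [← hqz] at h1
      linarith [h1]
    have h3 : (m : ℤ) = (ar i : ℤ) - bs i := by
      have := mul_left_cancel₀ (by rw [hqz]; exact hqzne)
        (show ((p ^ f - 1 : ℕ) : ℤ) * m = ((p ^ f - 1 : ℕ) : ℤ) * ((ar i : ℤ) - bs i) by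
          rw [h2]; ring)
      exact this
    constructor
    · omega
    · omega
  refine ⟨⟨fun i => ⟨ar i, har i⟩, fun i => ⟨bs i, hbs i⟩⟩, ?_, ?_⟩
  · -- rank ≤ 1
    set K := C0 ⊓ LinearMap.ker D with hK
    let φ : K →ₗ[F] F :=
      (PowerSeries.coeff (ar 0 - bs 0)).comp
        ((LinearMap.proj (0 : ZMod f)).comp K.subtype)
    have hinj : Function.Injective φ := by
      rw [injective_iff_map_eq_zero]
      rintro ⟨μ, hμ⟩ hφ
      obtain ⟨hC0mem, hker⟩ := Submodule.mem_inf.mp hμ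
      ext1
      show μ = 0
      by_contra hne
      obtain ⟨i₀, m₀, hm₀⟩ := exists_coeff_ne_zero hne
      obtain ⟨m, hm⟩ := reach hker (by omega) i₀ m₀ hm₀ 0
      obtain ⟨hle, hmeq⟩ := hsupp μ hker 0 m hm
      rw [hmeq] at hm
      exact hm hφ
    calc Module.rank F K ≤ Module.rank F F := LinearMap.rank_le_of_injective φ hinj
    _ = 1 := Module.rank_self F
  · constructor
    · -- forward
      intro hne
      obtain ⟨μ, hμ, hμ0⟩ := Submodule.ne_bot_iff _ |>.mp hne
      obtain ⟨hC0mem, hker⟩ := Submodule.mem_inf.mp hμ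
      have hC0' : ∀ i n, coeff n (μ i) ≠ 0 → (n : ZMod N) = c i - d i := hC0mem
      obtain ⟨i₀, m₀, hm₀⟩ := exists_coeff_ne_zero hμ0
      have hall : ∀ i, ∃ m, coeff m (μ i) ≠ 0 :=
        reach hker (by omega) i₀ m₀ hm₀
      choose mm hmm using hall
      have hmmval : ∀ i, bs i ≤ ar i ∧ mm i = ar i - bs i := fun i => hsupp μ hker i (mm i) (hmm i)
      have hcoefrel : ∀ i, (a i : F) * coeff (mm i) (μ i)
          = (b i : F) * coeff (mm (i - 1)) (μ (i - 1)) := by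
        intro i
        obtain ⟨m', hm', -, hrel⟩ := step_back hker (by omega) i (mm i) (hmm i)
        obtain ⟨hle', hmeq'⟩ := hsupp μ hker (i - 1) m' hm'
        obtain ⟨hle'', hmeq''⟩ := hmmval (i - 1)
        rw [hmeq', ← hmeq''] at hrel
        exact hrel
      refine ⟨?_, ?_, ?_⟩
      · -- products
        have hprod : (∏ i : ZMod f, (a i : F)) * ∏ i : ZMod f, coeff (mm i) (μ i)
            = (∏ i : ZMod f, (b i : F)) * ∏ i : ZMod f, coeff (mm (i - 1)) (μ (i - 1)) := by
          rw [← Finset.prod_mul_distrib, ← Finset.prod_mul_distrib]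
          exact Finset.prod_congr rfl fun i _ => hcoefrel i
        rw [prod_sub_one (fun i => coeff (mm i) (μ i))] at hprod
        have hlne : (∏ i : ZMod f, coeff (mm i) (μ i)) ≠ 0 :=
          Finset.prod_ne_zero_iff.mpr fun i _ => hmm i
        exact mul_right_cancel₀ hlne hprod
      · -- inequalities
        intro i
        rw [harv i, hbsv i]
        exact (hmmval i).1
      · -- character condition
        have h0 := hC0' 0 (mm 0) (hmm 0)
        obtain ⟨hle0, hm0⟩ := hmmval 0
        rw [hm0, Nat.cast_sub hle0] at h0
        rw [harv 0, hbsv 0]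
        linear_combination -h0
    · -- backward
      rintro ⟨h1, h2, h3⟩
      have hle : ∀ i, bs i ≤ ar i := by
        intro i; have := h2 i; rwa [harv i, hbsv i] at this
      set m : ZMod f → ℕ := fun i => ar i - bs i with hm
      -- recurrence
      have hArec : ∀ i : ZMod f, (p : ℤ) * ((p ^ f - 1 : ℕ) * ar (i - 1) : ℕ)
          = ((p ^ f - 1 : ℕ) * ar i : ℕ) + ((p ^ f - 1 : ℕ) : ℤ) * r i := by
        intro i
        have := keyA p f r i
        rw [← hSr i, ← hSr (i - 1), har i, har (i - 1)] at this
        have h4 : (p : ℤ) * ((p ^ f - 1) * ar (i - 1) : ℕ) + r i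
            = ((p ^ f - 1) * ar i : ℕ) + (p : ℤ) ^ f * r i := by exact_mod_cast this
        rw [hqz]
        push_cast at h4 ⊢
        linarith [h4]
      have hBrec : ∀ i : ZMod f, (p : ℤ) * ((p ^ f - 1 : ℕ) * bs (i - 1) : ℕ)
          = ((p ^ f - 1 : ℕ) * bs i : ℕ) + ((p ^ f - 1 : ℕ) : ℤ) * s i := by
        intro i
        have := keyA p f s i
        rw [← hSs i, ← hSs (i - 1), hbs i, hbs (i - 1)] at this
        have h4 : (p : ℤ) * ((p ^ f - 1) * bs (i - 1) : ℕ) + s i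
            = ((p ^ f - 1) * bs i : ℕ) + (p : ℤ) ^ f * s i := by exact_mod_cast this
        rw [hqz]
        push_cast at h4 ⊢
        linarith [h4]
      have hrec : ∀ i : ZMod f, m i + r i = p * m (i - 1) + s i := by
        intro i
        have hA := hArec i
        have hB := hBrec i
        have hz : ((p ^ f - 1 : ℕ) : ℤ) * (m i + r i)
            = ((p ^ f - 1 : ℕ) : ℤ) * (p * m (i - 1) + s i) := by
          have hmi : (m i : ℤ) = (ar i : ℤ) - bs i := by
            simp only [hm]; push_cast [Nat.cast_sub (hle i)]; ring
          have hmi1 : (m (i - 1) : ℤ) = (ar (i - 1) : ℤ) - bs (i - 1) := by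
            simp only [hm]; push_cast [Nat.cast_sub (hle (i - 1))]; ring
          push_cast at hA hB ⊢
          rw [hmi, hmi1]
          ring_nf
          ring_nf at hA hB
          linarith [hA, hB]
        have := mul_left_cancel₀ (show ((p ^ f - 1 : ℕ) : ℤ) ≠ 0 by rw [hqz]; exact hqzne) hz
        exact_mod_cast this
      -- coefficients
      set Λ : ℕ → F := fun k => ∏ j ∈ Finset.range k,
        ((a (((j + 1 : ℕ) : ZMod f)) : F)⁻¹ * (b (((j + 1 : ℕ) : ZMod f)) : F)) with hΛ
      have hΛne : ∀ k, Λ k ≠ 0 := by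
        intro k
        refine Finset.prod_ne_zero_iff.mpr fun j _ => ?_
        exact mul_ne_zero (inv_ne_zero (Units.ne_zero _)) (Units.ne_zero _)
      have hΛrange : Λ f = ∏ i : ZMod f, ((a i : F)⁻¹ * (b i : F)) := by
        have P1 := Finset.prod_range_succ' (fun j => ((a ((j : ℕ) : ZMod f) : F)⁻¹ * (b ((j : ℕ) : ZMod f) : F))) f
        have P2 := Finset.prod_range_succ (fun j => ((a ((j : ℕ) : ZMod f) : F)⁻¹ * (b ((j : ℕ) : ZMod f) : F))) f
        have hgf : ((a ((f : ℕ) : ZMod f) : F)⁻¹ * (b ((f : ℕ) : ZMod f) : F))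
            = ((a ((0 : ℕ) : ZMod f) : F)⁻¹ * (b ((0 : ℕ) : ZMod f) : F)) := by
          rw [ZMod.natCast_self]; norm_num
        rw [← prod_range_zmod (fun i => ((a i : F)⁻¹ * (b i : F)))]
        have hg0ne : ((a ((0 : ℕ) : ZMod f) : F)⁻¹ * (b ((0 : ℕ) : ZMod f) : F)) ≠ 0 :=
          mul_ne_zero (inv_ne_zero (Units.ne_zero _)) (Units.ne_zero _)
        rw [hgf] at P2
        have h12 := P1.symm.trans P2
        exact mul_right_cancel₀ hg0ne h12
      have hΛf : Λ f = 1 := by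
        rw [hΛrange, Finset.prod_mul_distrib, ← h1, Finset.prod_inv_distrib]
        exact inv_mul_cancel₀ (Finset.prod_ne_zero_iff.mpr fun i _ => Units.ne_zero _)
      set lam : ZMod f → F := fun i => Λ i.val with hlam
      have hlamne : ∀ i, lam i ≠ 0 := fun i => hΛne _
      have hlamrec : ∀ i, (a i : F) * lam i = (b i : F) * lam (i - 1) := by
        intro i
        by_cases hi : i = 0
        · subst hi
          have hv0 : ((0 : ZMod f)).val = 0 := ZMod.val_zero
          have hneg : ((0 : ZMod f) - 1) = ((f - 1 : ℕ) : ZMod f) := by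
            have : ((f - 1 : ℕ) : ZMod f) + 1 = 0 := by
              have : ((f - 1 : ℕ) : ZMod f) + ((1 : ℕ) : ZMod f) = ((f : ℕ) : ZMod f) := by
                rw [← Nat.cast_add]; congr 1; omega
              rw [ZMod.natCast_self] at this
              simpa using this
            linear_combination -this
          have hvneg : ((0 : ZMod f) - 1).val = f - 1 := by
            rw [hneg, ZMod.val_cast_of_lt (by omega)]
          have hΛsucc : Λ ((f - 1) + 1) = Λ (f - 1) *
              ((a ((((f - 1) + 1 : ℕ) : ZMod f)) : F)⁻¹ * (b ((((f - 1) + 1 : ℕ) : ZMod f)) : F)) :=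
            Finset.prod_range_succ _ (f - 1)
          have hf0 : (f - 1) + 1 = f := by omega
          rw [hf0, ZMod.natCast_self, hΛf] at hΛsucc
          -- hΛsucc : 1 = Λ (f-1) * ((a 0)⁻¹ * b 0)
          have hli : lam 0 = 1 := by
            simp only [hlam]; rw [hv0]; simp [hΛ]
          have hli1 : lam (0 - 1) = Λ (f - 1) := by
            simp only [hlam]; rw [hvneg]
          have hinv : (a (0 : ZMod f) : F) * (a (0 : ZMod f) : F)⁻¹ = 1 :=
            mul_inv_cancel₀ (Units.ne_zero _)
          rw [hli, hli1]
          linear_combination (a (0 : ZMod f) : F) * hΛsucc + Λ (f - 1) * (b (0 : ZMod f) : F) * hinv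
        · have hval : 1 ≤ i.val := by
            rcases Nat.eq_zero_or_pos i.val with h | h
            · exact absurd ((ZMod.val_eq_zero i).mp h) hi
            · omega
          set k := i.val - 1 with hk
          have hik : i = ((k + 1 : ℕ) : ZMod f) := by
            have : i.val = k + 1 := by omega
            rw [← this, ZMod.natCast_val, ZMod.cast_id]
          have hkf : k < f := by
            have := ZMod.val_lt i
            omega
          have hi1 : i - 1 = ((k : ℕ) : ZMod f) := by
            rw [hik]; push_cast; ring
          have hvi1 : (i - 1).val = k := by
            rw [hi1, ZMod.val_cast_of_lt hkf]
          have hvi : i.val = k + 1 := by omega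
          have hΛsucc : Λ (k + 1) = Λ k *
              ((a (((k + 1 : ℕ) : ZMod f)) : F)⁻¹ * (b (((k + 1 : ℕ) : ZMod f)) : F)) :=
            Finset.prod_range_succ _ k
          have hli : lam i = Λ (k + 1) := by simp only [hlam]; rw [hvi]
          have hli1 : lam (i - 1) = Λ k := by simp only [hlam]; rw [hvi1]
          have hinv : (a i : F) * (a i : F)⁻¹ = 1 := mul_inv_cancel₀ (Units.ne_zero _)
          rw [hli, hli1, hΛsucc, ← hik]
          linear_combination Λ k * (b i : F) * hinv
      -- the element
      set μ : ZMod f → PowerSeries F := fun i => C (lam i) * X ^ (m i) with hμdef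
      have hcoeffμ : ∀ i n, coeff n (μ i) = if n = m i then lam i else 0 := by
        intro i n
        rw [hμdef]
        simp only
        rw [PowerSeries.coeff_C_mul, PowerSeries.coeff_X_pow]
        split <;> simp
      have hμC0 : μ ∈ C0 := by
        intro i n hn
        rw [hcoeffμ] at hn
        by_cases h : n = m i
        · subst h
          -- prove congruence for all indices by induction on val
          have hmc : ∀ k : ℕ, ((m ((k : ℕ) : ZMod f) : ℕ) : ZMod N) = c ((k : ℕ) : ZMod f) - d ((k : ℕ) : ZMod f) := by
            intro k
            induction k with
            | zero =>
              have hm0 : (m ((0 : ℕ) : ZMod f) : ℤ) = (ar 0 : ℤ) - bs 0 := by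
                simp only [hm, Nat.cast_zero]
                push_cast [Nat.cast_sub (hle 0)]; ring
              have : ((m ((0 : ℕ) : ZMod f) : ℕ) : ZMod N) = ((ar 0 : ℕ) : ZMod N) - ((bs 0 : ℕ) : ZMod N) := by
                simp only [hm, Nat.cast_zero]
                push_cast [Nat.cast_sub (hle 0)]
                ring
              rw [this]
              rw [harv 0, hbsv 0] at h3
              simp only [Nat.cast_zero]
              linear_combination -h3
            | succ k ih =>
              have hrk := hrec ((k + 1 : ℕ) : ZMod f)
              have hck := hc ((k + 1 : ℕ) : ZMod f)
              have hdk := hd ((k + 1 : ℕ) : ZMod f)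
              have hidx : (((k + 1 : ℕ) : ZMod f)) - 1 = ((k : ℕ) : ZMod f) := by
                push_cast; ring
              rw [hidx] at hrk hck hdk
              have hE : ((m ((k + 1 : ℕ) : ZMod f) : ℕ) : ZMod N) + (r ((k + 1 : ℕ) : ZMod f) : ZMod N)
                  = (p : ZMod N) * ((m ((k : ℕ) : ZMod f) : ℕ) : ZMod N) + (s ((k + 1 : ℕ) : ZMod f) : ZMod N) := by
                exact_mod_cast congrArg (fun t : ℕ => (t : ZMod N)) hrk
              linear_combination hE + hck - hdk + (p : ZMod N) * ih
          have hival : i = ((i.val : ℕ) : ZMod f) := by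
            rw [ZMod.natCast_val, ZMod.cast_id]
          rw [hival]
          exact hmc i.val
        · rw [if_neg h] at hn
          exact absurd rfl hn
      have hμker : μ ∈ LinearMap.ker D := by
        rw [mem_ker_iff]
        intro i
        rw [hμdef]
        simp only
        rw [expandPS_C_mul_X_pow (by omega)]
        have hL : C (a i : F) * X ^ r i * (C (lam i) * X ^ m i)
            = C ((a i : F) * lam i) * X ^ (r i + m i) := by
          rw [map_mul, pow_add]; ring
        have hR : C (b i : F) * X ^ s i * (C (lam (i - 1)) * X ^ (p * m (i - 1)))
            = C ((b i : F) * lam (i - 1)) * X ^ (s i + p * m (i - 1)) := by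
          rw [map_mul, pow_add]; ring
        have hexp : r i + m i = s i + p * m (i - 1) := by linarith [hrec i]
        rw [hL, hR, hlamrec i, hexp]
      refine Submodule.ne_bot_iff _ |>.mpr ⟨μ, Submodule.mem_inf.mpr ⟨hμC0, hμker⟩, ?_⟩
      intro h0
      have hco := hcoeffμ 0 (m 0)
      rw [h0] at hco
      simp only [Pi.zero_apply, map_zero, if_pos rfl] at hco
      exact hlamne 0 hco.symm
end

section
/- dim_F H = #{ i ∈ T : [d_{i−1} − c_{i−1}] < p^{f'−1} }. (This is the computation, for a pair of rank one Breuil–Kisin modules with tame descent data of maximal refined shape, of the dimension of Hom(M, N[1/u]/N): it equals the number of transitions (i−1, i) for which the invariant γ*_i vanishes.) -/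
noncomputable section

/-- The submodule `F[[u]]` of the field of Laurent series `F((u))`, consisting of series with no
terms of negative degree. -/
def intPart (F : Type*) [Field F] : Submodule F (LaurentSeries F) where
  carrier := { x | ∀ n : ℤ, n < 0 → x.coeff n = 0 }
  zero_mem' := by intro n _; simp
  add_mem' := by
    intro x y hx hy n hn
    simp [HahnSeries.coeff_add, hx n hn, hy n hn]
  smul_mem' := by
    intro t x hx n hn
    simp [HahnSeries.coeff_smul, hx n hn]

/-- Substitution of `u^p` for `u` on Laurent series. -/
def substLaurent (F : Type*) [Field F] (p : ℕ) (hp : 0 < p) (x : LaurentSeries F) :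
    LaurentSeries F :=
  HahnSeries.embDomain
    (OrderEmbedding.ofStrictMono (fun n : ℤ => (p : ℤ) * n)
      (fun _ _ h => mul_lt_mul_of_pos_left h (by exact_mod_cast hp))) x

theorem substLaurent_zero (F : Type*) [Field F] (p : ℕ) (hp : 0 < p) :
    substLaurent F p hp 0 = 0 :=
  HahnSeries.embDomain_zero

theorem substLaurent_add (F : Type*) [Field F] (p : ℕ) (hp : 0 < p) (x y : LaurentSeries F) :
    substLaurent F p hp (x + y) = substLaurent F p hp x + substLaurent F p hp y :=
  HahnSeries.embDomain_add _ _ _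

theorem substLaurent_smul (F : Type*) [Field F] (p : ℕ) (hp : 0 < p) (t : F)
    (x : LaurentSeries F) :
    substLaurent F p hp (t • x) = t • substLaurent F p hp x :=
  HahnSeries.embDomain_smul _ _ _

/-- The space `H` of tuples `(μ_i)` of elements of `F((u))/F[[u]]` such that each `μ_i` is
represented by a Laurent series all of whose nonzero terms have degree congruent to
`c_i - d_i mod N`, and such that `a_i u^{r_i} μ_i = b_i u^{s_i} μ_{i-1}(u^p)` in
`F((u))/F[[u]]` for every `i`.  It computes `Hom(M(r,a,c), M(s,b,d)[1/u]/M(s,b,d))` for rank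
one Breuil–Kisin modules with tame descent data. -/
def Hspace (F : Type*) [Field F] (p : ℕ) (hp : 0 < p) (f N : ℕ)
    (a b : ZMod f → F) (r s : ZMod f → ℕ) (c d : ZMod f → ZMod N) :
    Submodule F (ZMod f → (LaurentSeries F ⧸ intPart F)) where
  carrier := { μ | ∃ x : ZMod f → LaurentSeries F,
      (∀ i, (Submodule.Quotient.mk (x i) : LaurentSeries F ⧸ intPart F) = μ i) ∧
      (∀ i (n : ℤ), (x i).coeff n ≠ 0 → (n : ZMod N) = c i - d i) ∧
      (∀ i, a i • ((HahnSeries.single (1 : ℤ) (1 : F)) ^ r i * x i)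
          - b i • ((HahnSeries.single (1 : ℤ) (1 : F)) ^ s i * substLaurent F p hp (x (i - 1)))
          ∈ intPart F) }
  zero_mem' := by
    refine ⟨0, fun i => by simp, fun i n h => absurd (by simp) h, fun i => by
      simp [substLaurent_zero]⟩
  add_mem' := by
    rintro μ ν ⟨x, hx1, hx2, hx3⟩ ⟨y, hy1, hy2, hy3⟩
    refine ⟨x + y, fun i => ?_, fun i n h => ?_, fun i => ?_⟩
    · simp [Submodule.Quotient.mk_add, hx1 i, hy1 i]
    · by_cases h1 : (x i).coeff n = 0
      · refine hy2 i n fun h2 => h ?_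
        simp [HahnSeries.coeff_add, h1, h2]
      · exact hx2 i n h1
    · have heq : a i • ((HahnSeries.single (1 : ℤ) (1 : F)) ^ r i * (x + y) i)
          - b i • ((HahnSeries.single (1 : ℤ) (1 : F)) ^ s i *
              substLaurent F p hp ((x + y) (i - 1)))
          = (a i • ((HahnSeries.single (1 : ℤ) (1 : F)) ^ r i * x i)
              - b i • ((HahnSeries.single (1 : ℤ) (1 : F)) ^ s i *
                  substLaurent F p hp (x (i - 1))))
            + (a i • ((HahnSeries.single (1 : ℤ) (1 : F)) ^ r i * y i)
              - b i • ((HahnSeries.single (1 : ℤ) (1 : F)) ^ s i *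
                  substLaurent F p hp (y (i - 1)))) := by
        simp only [Pi.add_apply, substLaurent_add, mul_add, smul_add]
        abel
      rw [heq]
      exact add_mem (hx3 i) (hy3 i)
  smul_mem' := by
    rintro t μ ⟨x, hx1, hx2, hx3⟩
    refine ⟨t • x, fun i => ?_, fun i n h => ?_, fun i => ?_⟩
    · simp [Submodule.Quotient.mk_smul, hx1 i]
    · refine hx2 i n fun h0 => h ?_
      simp [HahnSeries.coeff_smul, h0]
    · have heq : a i • ((HahnSeries.single (1 : ℤ) (1 : F)) ^ r i * (t • x) i)
          - b i • ((HahnSeries.single (1 : ℤ) (1 : F)) ^ s i *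
              substLaurent F p hp ((t • x) (i - 1)))
          = t • (a i • ((HahnSeries.single (1 : ℤ) (1 : F)) ^ r i * x i)
              - b i • ((HahnSeries.single (1 : ℤ) (1 : F)) ^ s i *
                  substLaurent F p hp (x (i - 1)))) := by
        simp only [Pi.smul_apply, substLaurent_smul]
        simp only [← HahnSeries.single_zero_mul_eq_smul]
        ring
      rw [heq]
      exact Submodule.smul_mem _ _ (hx3 i)

end

/-! ### Auxiliary lemmas -/

theorem mem_intPart {F : Type*} [Field F] {x : LaurentSeries F} :
    x ∈ intPart F ↔ ∀ n : ℤ, n < 0 → x.coeff n = 0 :=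
  Iff.rfl

theorem coeff_single_one_pow_mul (F : Type*) [Field F] (k : ℕ) (x : LaurentSeries F) (n : ℤ) :
    ((HahnSeries.single (1 : ℤ) (1 : F)) ^ k * x).coeff n = x.coeff (n - k) := by
  have h0 : (HahnSeries.single (1 : ℤ) (1 : F)) ^ k = HahnSeries.single (k : ℤ) 1 := by
    rw [HahnSeries.single_pow, one_pow, nsmul_eq_mul, mul_one]
  have h1 : (HahnSeries.single (k : ℤ) (1 : F) * x).coeff ((n - (k : ℤ)) + k)
      = 1 * x.coeff (n - k) := HahnSeries.coeff_single_mul_add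
  rw [sub_add_cancel] at h1
  rw [h0, h1, one_mul]

theorem substLaurent_coeff (F : Type*) [Field F] (p : ℕ) (hp : 0 < p) (x : LaurentSeries F)
    (n : ℤ) :
    (substLaurent F p hp x).coeff n = if (p : ℤ) ∣ n then x.coeff (n / (p : ℤ)) else 0 := by
  unfold substLaurent
  split_ifs with h
  · obtain ⟨m, rfl⟩ := h
    rw [Int.mul_ediv_cancel_left m (by exact_mod_cast hp.ne')]
    exact HahnSeries.embDomain_coeff (a := m)
  · exact HahnSeries.embDomain_notin_range (fun ⟨m, hm⟩ => h ⟨m, hm.symm⟩)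

theorem eqn_of_mem (F : Type*) [Field F] (p : ℕ) (hp : 0 < p) (aa bb : F) (rr ss : ℕ)
    (x y : LaurentSeries F)
    (h : aa • ((HahnSeries.single (1 : ℤ) (1 : F)) ^ rr * x)
        - bb • ((HahnSeries.single (1 : ℤ) (1 : F)) ^ ss * substLaurent F p hp y) ∈ intPart F)
    (n : ℤ) (hn : n < 0) :
    aa * x.coeff (n - rr)
      = bb * (if (p : ℤ) ∣ (n - ss) then y.coeff ((n - ss) / (p : ℤ)) else 0) := by
  have h0 := mem_intPart.mp h n hn
  rw [HahnSeries.coeff_sub, HahnSeries.coeff_smul, HahnSeries.coeff_smul,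
    coeff_single_one_pow_mul, coeff_single_one_pow_mul, substLaurent_coeff,
    smul_eq_mul, smul_eq_mul] at h0
  exact sub_eq_zero.mp h0

noncomputable def coeffL (F : Type*) [Field F] (m : ℤ) : LaurentSeries F →ₗ[F] F where
  toFun x := x.coeff m
  map_add' _ _ := HahnSeries.coeff_add
  map_smul' _ _ := by simp [HahnSeries.coeff_smul]

noncomputable def coeffQ (F : Type*) [Field F] (m : ℤ) (hm : m < 0) :
    (LaurentSeries F ⧸ intPart F) →ₗ[F] F :=
  Submodule.liftQ _ (coeffL F m) (fun x hx => LinearMap.mem_ker.mpr (hx m hm))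

theorem coeffQ_mk (F : Type*) [Field F] (m : ℤ) (hm : m < 0) (x : LaurentSeries F) :
    coeffQ F m hm (Submodule.Quotient.mk x) = x.coeff m := rfl

/-- For a pair of rank one Breuil–Kisin modules with tame descent data of maximal refined shape
(with set of transitions `T`), the dimension of `H = Hom(M, N[1/u]/N)` equals the number of
transitions `(i-1, i)` for which `[d_{i-1} - c_{i-1}] < p^{f'-1}` (i.e. for which the invariant
`γ*_i` vanishes). -/
theorem hom_to_quotient_dimension
    (p f f' e : ℕ) (hp : p.Prime) [NeZero f] (hf' : 0 < f') (hff' : f ∣ f') (he : 0 < e)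
    (F : Type*) [Field F] [Fintype F] [CharP F p]
    (a b : ZMod f → Fˣ) (c d : ZMod f → ZMod (p ^ f' - 1))
    (T : Finset (ZMod f))
    (hnt : ∀ i, i ∉ T →
      (p : ZMod (p ^ f' - 1)) * c (i - 1) = c i ∧ (p : ZMod (p ^ f' - 1)) * d (i - 1) = d i)
    (ht : ∀ i, i ∈ T →
      (p : ZMod (p ^ f' - 1)) * c (i - 1) = d i ∧ (p : ZMod (p ^ f' - 1)) * d (i - 1) = c i ∧
        c i ≠ d i) :
    let N := p ^ f' - 1
    let r : ZMod f → ℕ := fun i => if i ∈ T then N * e - (c i - d i).val else N * e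
    let s : ZMod f → ℕ := fun i => if i ∈ T then N - (d i - c i).val else 0
    let H := Hspace F p hp.pos f N (fun i => (a i : F)) (fun i => (b i : F)) r s c d
    FiniteDimensional F ↥H ∧
    Module.finrank F ↥H =
      (T.filter fun i => (d (i - 1) - c (i - 1)).val < p ^ (f' - 1)).card := by
  intro N r s H
  have hNdef : N = p ^ f' - 1 := rfl
  have hrdef : ∀ i, r i = if i ∈ T then N * e - (c i - d i).val else N * e := fun _ => rfl
  have hsdef : ∀ i, s i = if i ∈ T then N - (d i - c i).val else 0 := fun _ => rfl
  have hp2 : 2 ≤ p := hp.two_le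
  have h2pow : 2 ≤ p ^ f' := le_trans hp2 (Nat.le_self_pow (by omega) p)
  have hNpow : N + 1 = p ^ f' := by omega
  have hN1 : 1 ≤ N := by omega
  haveI : NeZero (p ^ f' - 1) := ⟨by omega⟩
  haveI : NeZero N := ⟨by omega⟩
  haveI : Nonempty (ZMod f) := ⟨0⟩
  have hγlt : ∀ i : ZMod f, (c i - d i).val < N := fun i => ZMod.val_lt _
  have hδlt : ∀ i : ZMod f, (d i - c i).val < N := fun i => ZMod.val_lt _
  have hsum : ∀ i : ZMod f, c i ≠ d i → (c i - d i).val + (d i - c i).val = N := by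
    intro i h
    have h1 : d i - c i = -(c i - d i) := by ring
    have h2 := ZMod.neg_val (c i - d i)
    rw [if_neg (sub_ne_zero.mpr h)] at h2
    have h3 := hγlt i
    rw [h1, h2]
    omega
  have hcne : ∀ i ∈ T, c i ≠ d i := fun i hi => (ht i hi).2.2
  have hrge : ∀ i : ZMod f, (N : ℤ) - ((c i - d i).val : ℤ) ≤ (r i : ℤ) := by
    intro i
    have h1 := hγlt i
    have h2 : N ≤ N * e := Nat.le_mul_of_pos_right N he
    rw [hrdef i]
    split_ifs with h <;> omega
  have hsle : ∀ i : ZMod f, (s i : ℤ) ≤ (N : ℤ) - 1 := by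
    intro i
    rw [hsdef i]
    split_ifs with h
    · have h1 : (d i - c i).val ≠ 0 := by
        intro h0
        exact hcne i h (((sub_eq_zero.mp ((ZMod.val_eq_zero _).mp h0))).symm)
      omega
    · omega
  have hsT : ∀ i ∈ T, (s i : ℤ) = ((c i - d i).val : ℤ) := by
    intro i hi
    rw [hsdef i, if_pos hi]
    have h1 := hsum i (hcne i hi)
    have h2 := hδlt i
    omega
  -- the master coefficient equation
  have eqn : ∀ x : ZMod f → LaurentSeries F,
      (∀ i, (a i : F) • ((HahnSeries.single (1 : ℤ) (1 : F)) ^ r i * x i)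
          - (b i : F) • ((HahnSeries.single (1 : ℤ) (1 : F)) ^ s i
              * substLaurent F p hp.pos (x (i - 1))) ∈ intPart F) →
      ∀ (j : ZMod f) (n : ℤ), n < 0 →
        (a j : F) * (x j).coeff (n - r j)
          = (b j : F) * (if (p : ℤ) ∣ (n - s j) then (x (j - 1)).coeff ((n - s j) / (p : ℤ))
              else 0) := by
    intro x h3 j n hn
    exact eqn_of_mem F p hp.pos _ _ _ _ _ _ (h3 j) n hn
  have hpm2 : ∀ m : ℤ, m ≤ 0 → (p : ℤ) * m ≤ 2 * m := fun m hm =>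
    mul_le_mul_of_nonpos_right (by exact_mod_cast hp2) hm
  -- propagation of a nonzero coefficient one step forward
  have prop : ∀ x : ZMod f → LaurentSeries F,
      (∀ i, (a i : F) • ((HahnSeries.single (1 : ℤ) (1 : F)) ^ r i * x i)
          - (b i : F) • ((HahnSeries.single (1 : ℤ) (1 : F)) ^ s i
              * substLaurent F p hp.pos (x (i - 1))) ∈ intPart F) →
      ∀ (i : ZMod f) (m : ℤ), (x i).coeff m ≠ 0 → (p : ℤ) * m + (s (i + 1) : ℤ) < 0 →
        (x (i + 1)).coeff ((p : ℤ) * m + (s (i + 1) : ℤ) - (r (i + 1) : ℤ)) ≠ 0 := by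
    intro x h3 i m hm hlt h0
    have h := eqn x h3 (i + 1) ((p : ℤ) * m + (s (i + 1) : ℤ)) hlt
    simp only [add_sub_cancel_right] at h
    rw [if_pos ⟨m, rfl⟩,
      Int.mul_ediv_cancel_left m (by exact_mod_cast hp.pos.ne' : (p : ℤ) ≠ 0)] at h
    rw [h0, mul_zero] at h
    rcases mul_eq_zero.mp h.symm with h' | h'
    · exact Units.ne_zero _ h'
    · exact hm h'
  -- no nonzero coefficients at degree ≤ -N
  have deep : ∀ x : ZMod f → LaurentSeries F,
      (∀ i, (a i : F) • ((HahnSeries.single (1 : ℤ) (1 : F)) ^ r i * x i)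
          - (b i : F) • ((HahnSeries.single (1 : ℤ) (1 : F)) ^ s i
              * substLaurent F p hp.pos (x (i - 1))) ∈ intPart F) →
      ∀ (i : ZMod f) (m : ℤ), m ≤ -(N : ℤ) → (x i).coeff m = 0 := by
    intro x h3
    set B := Finset.univ.inf' Finset.univ_nonempty (fun i : ZMod f => (x i).order) with hBdef
    have hB : ∀ (i : ZMod f) (m : ℤ), (x i).coeff m ≠ 0 → B ≤ m := fun i m h =>
      le_trans (Finset.inf'_le _ (Finset.mem_univ i)) (HahnSeries.order_le_of_coeff_ne_zero h)
    have main : ∀ (k : ℕ) (i : ZMod f) (m : ℤ), m ≤ -(N : ℤ) → m < B + k →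
        (x i).coeff m = 0 := by
      intro k
      induction k with
      | zero =>
        intro i m hm hlt
        by_contra hne
        have := hB i m hne
        push_cast at hlt
        omega
      | succ k ih =>
        intro i m hm hlt
        by_contra hne
        have h1 := hpm2 m (by omega)
        have h2 := hsle (i + 1)
        have hlt2 : (p : ℤ) * m + (s (i + 1) : ℤ) < 0 := by omega
        have hchild := prop x h3 i m hne hlt2
        have h3r : (0 : ℤ) ≤ (r (i + 1) : ℤ) := Int.natCast_nonneg _
        push_cast at hlt
        exact hchild (ih (i + 1) _ (by omega) (by push_cast; omega))
    intro i m hm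
    exact main ((m - B).toNat + 1) i m hm (by push_cast; omega)
  -- identification of a shallow degree from its residue
  have resid : ∀ (i : ZMod f) (m : ℤ), -(N : ℤ) < m → m < 0 →
      ((m : ZMod (p ^ f' - 1)) = c i - d i) → m = ((c i - d i).val : ℤ) - N := by
    intro i m h1 h2 hc
    have h3 : ((m + N).toNat : ℤ) = m + N := Int.toNat_of_nonneg (by omega)
    have key0 : ((m + N).toNat : ZMod (p ^ f' - 1)) = c i - d i := by
      have h4 : (((m + N).toNat : ℤ) : ZMod (p ^ f' - 1)) = c i - d i := by
        rw [h3]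
        push_cast
        rw [hNdef, ZMod.natCast_self, add_zero, hc]
      exact_mod_cast h4
    have h5 := ZMod.val_cast_of_lt (show (m + N).toNat < p ^ f' - 1 by omega)
    rw [key0] at h5
    omega
  -- structure: nonzero negative coefficients only occur at good transition spots
  have key : ∀ x : ZMod f → LaurentSeries F,
      (∀ (i : ZMod f) (n : ℤ), (x i).coeff n ≠ 0 → ((n : ZMod (p ^ f' - 1)) = c i - d i)) →
      (∀ i, (a i : F) • ((HahnSeries.single (1 : ℤ) (1 : F)) ^ r i * x i)
          - (b i : F) • ((HahnSeries.single (1 : ℤ) (1 : F)) ^ s i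
              * substLaurent F p hp.pos (x (i - 1))) ∈ intPart F) →
      ∀ (i : ZMod f) (m : ℤ), m < 0 → (x i).coeff m ≠ 0 →
        (i + 1 ∈ T ∧ (d i - c i).val < p ^ (f' - 1) ∧ m = ((c i - d i).val : ℤ) - N) := by
    intro x h2 h3 i m hm hne
    have hgt : -(N : ℤ) < m := by
      by_contra hcon
      push_neg at hcon
      exact hne (deep x h3 i m (by omega))
    have hmeq : m = ((c i - d i).val : ℤ) - N := resid i m hgt hm (h2 i m hne)
    have hnp : 0 ≤ (p : ℤ) * m + (s (i + 1) : ℤ) := by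
      by_contra hcon
      push_neg at hcon
      have hchild := prop x h3 i m hne hcon
      have hr0 : (0 : ℤ) ≤ (r (i + 1) : ℤ) := Int.natCast_nonneg _
      have hm' : (p : ℤ) * m + (s (i + 1) : ℤ) - (r (i + 1) : ℤ) < 0 := by omega
      have hgt' : -(N : ℤ) < (p : ℤ) * m + (s (i + 1) : ℤ) - (r (i + 1) : ℤ) := by
        by_contra hcon2
        push_neg at hcon2
        exact hchild (deep x h3 (i + 1) _ (by omega))
      have hmeq' := resid (i + 1) _ hgt' hm' (h2 (i + 1) _ hchild)
      have hr1 := hrge (i + 1)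
      omega
    have hT1 : i + 1 ∈ T := by
      by_contra hcon
      have hs0 : s (i + 1) = 0 := by rw [hsdef, if_neg hcon]
      rw [hs0] at hnp
      have := hpm2 m (le_of_lt hm)
      push_cast at hnp
      omega
    obtain ⟨hc1, hc2, hc3⟩ := ht (i + 1) hT1
    simp only [add_sub_cancel_right] at hc1 hc2
    have hcd : c (i + 1) - d (i + 1) = (p : ZMod (p ^ f' - 1)) * (d i - c i) := by
      rw [← hc1, ← hc2]; ring
    have hδ0 : (d i - c i).val ≠ 0 := by
      intro h0
      have hz : d i - c i = 0 := (ZMod.val_eq_zero _).mp h0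
      rw [hz, mul_zero] at hcd
      exact hc3 (sub_eq_zero.mp hcd)
    have hcine : c i ≠ d i := by
      intro h0; exact hδ0 (by rw [h0, sub_self, ZMod.val_zero])
    have hsum_i := hsum i hcine
    have hval : (((d i - c i).val : ℕ) : ZMod (p ^ f' - 1)) = d i - c i :=
      ZMod.natCast_rightInverse _
    have hγ1 : (c (i + 1) - d (i + 1)).val = (p * (d i - c i).val) % (p ^ f' - 1) := by
      have hcast : c (i + 1) - d (i + 1) = ((p * (d i - c i).val : ℕ) : ZMod (p ^ f' - 1)) := by
        rw [hcd, Nat.cast_mul, hval]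
      rw [hcast, ZMod.val_natCast]
    have hsi := hsT (i + 1) hT1
    have hZ : (p : ℤ) * ((d i - c i).val : ℤ) ≤ ((c (i + 1) - d (i + 1)).val : ℤ) := by
      have hδc : ((d i - c i).val : ℤ) = (N : ℤ) - ((c i - d i).val : ℤ) := by
        have := hγlt i; omega
      rw [hmeq, hsi] at hnp
      have hring : (p : ℤ) * (((c i - d i).val : ℤ) - (N : ℤ))
          = -((p : ℤ) * ((N : ℤ) - ((c i - d i).val : ℤ))) := by ring
      rw [hδc]
      linarith [hnp, hring.le, hring.ge]
    have hγlt1 := hγlt (i + 1)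
    have hmodle : (p * (d i - c i).val) % (p ^ f' - 1) ≤ p * (d i - c i).val := Nat.mod_le _ _
    have hZn : p * (d i - c i).val ≤ (c (i + 1) - d (i + 1)).val := by exact_mod_cast hZ
    have hpδlt : p * (d i - c i).val < p ^ f' - 1 := by omega
    refine ⟨hT1, ?_, hmeq⟩
    have hpow : p * p ^ (f' - 1) = p ^ f' := by
      conv_rhs => rw [show f' = (f' - 1) + 1 by omega]
      rw [pow_succ']
    by_contra hcon
    push_neg at hcon
    have hmul : p * p ^ (f' - 1) ≤ p * (d i - c i).val := Nat.mul_le_mul_left _ hcon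
    omega
  -- converse arithmetic facts at good transitions
  have goodT : ∀ j : ZMod f, j ∈ T → (d (j - 1) - c (j - 1)).val < p ^ (f' - 1) →
      ((c (j - 1) - d (j - 1)).val + (d (j - 1) - c (j - 1)).val = N ∧
        (c j - d j).val = p * (d (j - 1) - c (j - 1)).val) := by
    intro j hj hlt
    obtain ⟨hc1, hc2, hc3⟩ := ht j hj
    have hcd : c j - d j = (p : ZMod (p ^ f' - 1)) * (d (j - 1) - c (j - 1)) := by
      rw [← hc1, ← hc2]; ring
    have hδ0 : (d (j - 1) - c (j - 1)).val ≠ 0 := by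
      intro h0
      have hz : d (j - 1) - c (j - 1) = 0 := (ZMod.val_eq_zero _).mp h0
      rw [hz, mul_zero] at hcd
      exact hc3 (sub_eq_zero.mp hcd)
    have hcine : c (j - 1) ≠ d (j - 1) := by
      intro h0; exact hδ0 (by rw [h0, sub_self, ZMod.val_zero])
    have hsum' := hsum (j - 1) hcine
    have hval : (((d (j - 1) - c (j - 1)).val : ℕ) : ZMod (p ^ f' - 1)) = d (j - 1) - c (j - 1) :=
      ZMod.natCast_rightInverse _
    have hγ1 : (c j - d j).val = (p * (d (j - 1) - c (j - 1)).val) % (p ^ f' - 1) := by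
      have hcast : c j - d j = ((p * (d (j - 1) - c (j - 1)).val : ℕ) : ZMod (p ^ f' - 1)) := by
        rw [hcd, Nat.cast_mul, hval]
      rw [hcast, ZMod.val_natCast]
    have hpow : p * p ^ (f' - 1) = p ^ f' := by
      conv_rhs => rw [show f' = (f' - 1) + 1 by omega]
      rw [pow_succ']
    have h1 : (d (j - 1) - c (j - 1)).val + 1 ≤ p ^ (f' - 1) := hlt
    have h2 : p * ((d (j - 1) - c (j - 1)).val + 1) ≤ p * p ^ (f' - 1) :=
      Nat.mul_le_mul_left _ h1
    have h3 : p * ((d (j - 1) - c (j - 1)).val + 1) = p * (d (j - 1) - c (j - 1)).val + p := by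
      ring
    have hsmall : p * (d (j - 1) - c (j - 1)).val < p ^ f' - 1 := by omega
    exact ⟨hsum', by rw [hγ1, Nat.mod_eq_of_lt hsmall]⟩
  -- construct the linear equivalence
  suffices hE : Nonempty (↥H ≃ₗ[F]
      ((↥(T.filter fun i => (d (i - 1) - c (i - 1)).val < p ^ (f' - 1))) → F)) by
    obtain ⟨eqv⟩ := hE
    exact ⟨Module.Finite.equiv eqv.symm, by
      rw [eqv.finrank_eq, Module.finrank_fintype_fun_eq_card, Fintype.card_coe]⟩
  refine ⟨LinearEquiv.ofBijective
    (LinearMap.pi (fun j : ↥(T.filter fun i => (d (i - 1) - c (i - 1)).val < p ^ (f' - 1)) =>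
      (coeffQ F (((c ((j : ZMod f) - 1) - d ((j : ZMod f) - 1)).val : ℤ) - N)
          (by have := hγlt ((j : ZMod f) - 1); omega)).comp
        ((LinearMap.proj ((j : ZMod f) - 1)).comp H.subtype))) ⟨?_, ?_⟩⟩
  · -- injectivity
    rw [injective_iff_map_eq_zero]
    rintro ⟨μ, hμ⟩ hz
    obtain ⟨x, hx1, hx2, hx3⟩ := hμ
    have hxz : ∀ (i : ZMod f) (n : ℤ), n < 0 → (x i).coeff n = 0 := by
      intro i n hn
      by_contra hne
      obtain ⟨hT1, hlt1, hmeq⟩ := key x hx2 hx3 i n hn hne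
      have hj : i + 1 ∈ T.filter fun i' => (d (i' - 1) - c (i' - 1)).val < p ^ (f' - 1) :=
        Finset.mem_filter.mpr ⟨hT1, by simpa only [add_sub_cancel_right] using hlt1⟩
      have h0 := congr_fun hz ⟨i + 1, hj⟩
      simp only [LinearMap.pi_apply, LinearMap.comp_apply, Submodule.coe_subtype,
        LinearMap.proj_apply, Pi.zero_apply] at h0
      rw [← hx1 (i + 1 - 1), coeffQ_mk] at h0
      rw [add_sub_cancel_right] at h0
      rw [← hmeq] at h0
      exact hne h0
    have hall : ∀ i, μ i = 0 := by
      intro i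
      rw [← hx1 i, Submodule.Quotient.mk_eq_zero]
      exact fun n hn => hxz i n hn
    exact Subtype.ext (funext hall)
  · -- surjectivity
    intro v
    set xv : ZMod f → LaurentSeries F := fun i =>
      if h : i + 1 ∈ T.filter (fun i' => (d (i' - 1) - c (i' - 1)).val < p ^ (f' - 1)) then
        HahnSeries.single (((c i - d i).val : ℤ) - (N : ℤ)) (v ⟨i + 1, h⟩)
      else 0 with hxv
    have hxvc : ∀ (i : ZMod f) (n : ℤ), (xv i).coeff n ≠ 0 →
        ((n : ZMod (p ^ f' - 1)) = c i - d i) := by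
      intro i n hne
      rw [hxv] at hne
      dsimp only at hne
      split_ifs at hne with h
      · rcases eq_or_ne n (((c i - d i).val : ℤ) - (N : ℤ)) with h1 | h1
        · subst h1
          push_cast
          rw [hNdef, ZMod.natCast_self, sub_zero]
          exact ZMod.natCast_rightInverse _
        · rw [HahnSeries.coeff_single_of_ne h1] at hne
          exact absurd rfl hne
      · simp at hne
    have hxv3 : ∀ i, (a i : F) • ((HahnSeries.single (1 : ℤ) (1 : F)) ^ r i * xv i)
        - (b i : F) • ((HahnSeries.single (1 : ℤ) (1 : F)) ^ s i
            * substLaurent F p hp.pos (xv (i - 1))) ∈ intPart F := by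
      intro i
      rw [mem_intPart]
      intro n hn
      rw [HahnSeries.coeff_sub, HahnSeries.coeff_smul, HahnSeries.coeff_smul,
        coeff_single_one_pow_mul, coeff_single_one_pow_mul, substLaurent_coeff]
      have h1 : (xv i).coeff (n - (r i : ℤ)) = 0 := by
        rw [hxv]
        dsimp only
        split_ifs with h
        · apply HahnSeries.coeff_single_of_ne
          have := hrge i
          omega
        · simp
      have h2 : (if (p : ℤ) ∣ n - (s i : ℤ) then (xv (i - 1)).coeff ((n - (s i : ℤ)) / (p : ℤ))
          else 0) = 0 := by
        split_ifs with hdvd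
        · rw [hxv]
          dsimp only
          split_ifs with h
          · have h' := h
            rw [sub_add_cancel] at h'
            obtain ⟨hjT, hjlt⟩ := Finset.mem_filter.mp h'
            obtain ⟨hsum', hγeq⟩ := goodT i hjT hjlt
            apply HahnSeries.coeff_single_of_ne
            intro heq
            have hmul : n - (s i : ℤ) = ((((c (i - 1) - d (i - 1)).val : ℤ)) - (N : ℤ)) * p := by
              rw [← heq]
              exact (Int.ediv_mul_cancel hdvd).symm
            have hsi := hsT i hjT
            have hc1 : ((c i - d i).val : ℤ) = (p : ℤ) * ((d (i - 1) - c (i - 1)).val : ℤ) := by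
              exact_mod_cast hγeq
            have hc2 : ((c (i - 1) - d (i - 1)).val : ℤ) + ((d (i - 1) - c (i - 1)).val : ℤ)
                = (N : ℤ) := by exact_mod_cast hsum'
            have hn0 : n = 0 := by linear_combination hmul + hsi + hc1 + (p : ℤ) * hc2
            omega
          · simp
        · rfl
      rw [h1, h2]
      simp
    refine ⟨⟨fun i => Submodule.Quotient.mk (xv i), ⟨xv, fun i => rfl, hxvc, hxv3⟩⟩, ?_⟩
    funext j
    obtain ⟨j, hj⟩ := j
    simp only [LinearMap.pi_apply, LinearMap.comp_apply, Submodule.coe_subtype,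
      LinearMap.proj_apply]
    rw [coeffQ_mk, hxv]
    dsimp only
    have hc : (j - 1) + 1 ∈ T.filter (fun i' => (d (i' - 1) - c (i' - 1)).val < p ^ (f' - 1)) := by
      rwa [sub_add_cancel]
    rw [dif_pos hc, HahnSeries.coeff_single_same]
    exact congrArg v (Subtype.ext (sub_add_cancel j 1))
end

section
/- Let h ≥ 1 and e' ≥ 0 be integers such that s_i ≤ e'h for all i (in the paper this holds when the rank one module M(s,b,d) has height at most h). Then every element (μ_i) of H is annihilated by u^{⌊e'h/(p−1)⌋}; equivalently, each μ_i has a representative Laurent series all of whose nonzero terms have degree at least −⌊e'h/(p−1)⌋. -/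
noncomputable section BKaux
namespace BKaux
variable {F : Type*} [Field F]

/-- coefficient of `u^r * y`. -/
theorem upow_coeff (r : ℕ) (y : LaurentSeries F) (n : ℤ) :
    ((HahnSeries.single (1 : ℤ) (1 : F)) ^ r * y).coeff n = y.coeff (n - r) := by
  rw [HahnSeries.single_pow, one_pow]
  have h1 : (r • (1:ℤ)) = (r : ℤ) := by simp
  rw [h1]
  conv_lhs => rw [show n = (n - r) + (r : ℤ) by ring]
  rw [HahnSeries.coeff_single_mul_add, one_mul]

theorem subst_coeff (p : ℕ) (hp : 0 < p) (y : LaurentSeries F) (m : ℤ) :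
    (substLaurent F p hp y).coeff ((p:ℤ) * m) = y.coeff m :=
  HahnSeries.embDomain_coeff

theorem intPart_coeff {z : LaurentSeries F} (hz : z ∈ intPart F) :
    ∀ n : ℤ, n < 0 → z.coeff n = 0 := hz

theorem mem_intPart {z : LaurentSeries F} (hz : ∀ n : ℤ, n < 0 → z.coeff n = 0) :
    z ∈ intPart F := hz

/-- the strictly negative part of a Laurent series. -/
def negPart (x : LaurentSeries F) : LaurentSeries F :=
  ⟨fun n => if n < 0 then x.coeff n else 0, x.isPWO_support'.mono (by
    intro n hn
    simp only [Function.mem_support] at hn ⊢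
    intro h
    simp [h] at hn)⟩

theorem negPart_coeff (x : LaurentSeries F) (n : ℤ) :
    (negPart x).coeff n = if n < 0 then x.coeff n else 0 := rfl

theorem sub_negPart_mem (x : LaurentSeries F) : x - negPart x ∈ intPart F := by
  refine mem_intPart fun n hn => ?_
  rw [HahnSeries.coeff_sub, negPart_coeff, if_pos hn, sub_self]

theorem upow_mem (r : ℕ) {z : LaurentSeries F} (hz : z ∈ intPart F) :
    (HahnSeries.single (1 : ℤ) (1 : F)) ^ r * z ∈ intPart F := by
  refine mem_intPart fun n hn => ?_
  rw [upow_coeff]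
  exact intPart_coeff hz _ (by omega)

theorem subst_mem (p : ℕ) (hp : 0 < p) {z : LaurentSeries F} (hz : z ∈ intPart F) :
    substLaurent F p hp z ∈ intPart F := by
  refine mem_intPart fun n hn => ?_
  rcases em (∃ m : ℤ, (p:ℤ) * m = n) with ⟨m, rfl⟩ | hr
  · rw [subst_coeff]
    refine intPart_coeff hz m ?_
    have hp' : (0:ℤ) < p := by exact_mod_cast hp
    nlinarith
  · exact HahnSeries.embDomain_notin_range (by rintro ⟨m, rfl⟩; exact hr ⟨m, rfl⟩)

theorem subst_sub (p : ℕ) (hp : 0 < p) (x y : LaurentSeries F) :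
    substLaurent F p hp (x - y) = substLaurent F p hp x - substLaurent F p hp y := by
  have h := substLaurent_add F p hp (x - y) y
  rw [sub_add_cancel] at h
  rw [h]; ring

end BKaux
end BKaux

/-- If `s_i ≤ e'h` for all `i` (as holds when the rank one Breuil–Kisin module `M(s,b,d)` has
height at most `h`), then every element `(μ_i)` of `H = Hom(M(r,a,c), M(s,b,d)[1/u]/M(s,b,d))`
is annihilated by `u^{⌊e'h/(p-1)⌋}`; equivalently, each `μ_i` has a representative Laurent
series all of whose nonzero terms have degree at least `-⌊e'h/(p-1)⌋`. -/
theorem hom_to_quotient_torsion_bound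
    (p f f' h e' : ℕ) (hp : p.Prime) [NeZero f] (hf' : 0 < f') (hff' : f ∣ f') (hh : 1 ≤ h)
    (F : Type*) [Field F] [Fintype F] [CharP F p]
    (a b : ZMod f → Fˣ) (r s : ZMod f → ℕ)
    (c d : ZMod f → ZMod (p ^ f' - 1))
    (hc : ∀ i, (p : ZMod (p ^ f' - 1)) * c (i - 1) = c i + (r i : ZMod (p ^ f' - 1)))
    (hd : ∀ i, (p : ZMod (p ^ f' - 1)) * d (i - 1) = d i + (s i : ZMod (p ^ f' - 1)))
    (hs : ∀ i, s i ≤ e' * h) :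
    ∀ μ ∈ Hspace F p hp.pos f (p ^ f' - 1) (fun i => (a i : F)) (fun i => (b i : F)) r s c d,
      ∃ x : ZMod f → LaurentSeries F,
        (∀ i, (Submodule.Quotient.mk (x i) : LaurentSeries F ⧸ intPart F) = μ i) ∧
        ∀ i (n : ℤ), (x i).coeff n ≠ 0 → -((e' * h / (p - 1) : ℕ) : ℤ) ≤ n := by
  classical
  intro μ hμ
  obtain ⟨x, hx1, _hx2, hx3⟩ := hμ
  set B : ℕ := e' * h / (p - 1) with hBdef
  set y : ZMod f → LaurentSeries F := fun i => BKaux.negPart (x i) with hy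
  have hyx : ∀ i, x i - y i ∈ intPart F := fun i => BKaux.sub_negPart_mem (x i)
  have hmk : ∀ i, (Submodule.Quotient.mk (y i) : LaurentSeries F ⧸ intPart F) = μ i := by
    intro i
    rw [← hx1 i]
    rw [Submodule.Quotient.eq, ← neg_sub]
    exact neg_mem (hyx i)
  -- the relation holds for `y` as well
  have hrelY : ∀ i, (a i : F) • ((HahnSeries.single (1 : ℤ) (1 : F)) ^ r i * y i)
      - (b i : F) • ((HahnSeries.single (1 : ℤ) (1 : F)) ^ s i *
          substLaurent F p hp.pos (y (i - 1))) ∈ intPart F := by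
    intro i
    have e : (a i : F) • ((HahnSeries.single (1 : ℤ) (1 : F)) ^ r i * x i)
        - (b i : F) • ((HahnSeries.single (1 : ℤ) (1 : F)) ^ s i *
            substLaurent F p hp.pos (x (i - 1)))
        = ((a i : F) • ((HahnSeries.single (1 : ℤ) (1 : F)) ^ r i * y i)
            - (b i : F) • ((HahnSeries.single (1 : ℤ) (1 : F)) ^ s i *
                substLaurent F p hp.pos (y (i - 1))))
          + ((a i : F) • ((HahnSeries.single (1 : ℤ) (1 : F)) ^ r i * (x i - y i))
            - (b i : F) • ((HahnSeries.single (1 : ℤ) (1 : F)) ^ s i *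
                substLaurent F p hp.pos (x (i - 1) - y (i - 1)))) := by
      rw [BKaux.subst_sub]
      simp only [mul_sub, smul_sub]
      abel
    have hextra : (a i : F) • ((HahnSeries.single (1 : ℤ) (1 : F)) ^ r i * (x i - y i))
        - (b i : F) • ((HahnSeries.single (1 : ℤ) (1 : F)) ^ s i *
            substLaurent F p hp.pos (x (i - 1) - y (i - 1))) ∈ intPart F :=
      sub_mem (Submodule.smul_mem _ _ (BKaux.upow_mem _ (hyx i)))
        (Submodule.smul_mem _ _ (BKaux.upow_mem _ (BKaux.subst_mem _ _ (hyx (i - 1)))))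
    have h1 := hx3 i
    rw [e] at h1
    have h2 := sub_mem h1 hextra
    simpa using h2
  -- arithmetic preliminaries
  have hp2 : 2 ≤ p := hp.two_le
  have hdivlt : e' * h < (B + 1) * (p - 1) :=
    (Nat.div_lt_iff_lt_mul (by omega)).1 (Nat.lt_succ_self B)
  have hB : (e' : ℤ) * h < ((B : ℤ) + 1) * ((p : ℤ) - 1) := by
    have h1 : ((e' * h : ℕ) : ℤ) < (((B + 1) * (p - 1) : ℕ) : ℤ) := by exact_mod_cast hdivlt
    push_cast [Nat.cast_sub (show 1 ≤ p by omega)] at h1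
    linarith
  -- the global minimal order
  have hne : (Finset.univ : Finset (ZMod f)).Nonempty := Finset.univ_nonempty
  set M : ℤ := Finset.univ.inf' hne (fun i => (y i).order) with hMdef
  have hMle : ∀ i, M ≤ (y i).order := fun i => Finset.inf'_le _ (Finset.mem_univ i)
  have hMbound : -(B : ℤ) ≤ M := by
    by_contra hM
    push_neg at hM
    have hMle' : M ≤ -(B : ℤ) - 1 := by omega
    obtain ⟨j, -, hj⟩ := Finset.exists_mem_eq_inf' hne (fun i => (y i).order)
    rw [← hMdef] at hj
    have hyj : y j ≠ 0 := by
      intro h0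
      rw [h0, HahnSeries.order_zero] at hj
      rw [hj] at hMle'
      have hB0 : (0:ℤ) ≤ (B:ℤ) := Int.ofNat_nonneg B
      omega
    have hcoeffj : (y j).coeff M ≠ 0 := by
      rw [hj]
      exact fun h0 => hyj (HahnSeries.coeff_order_eq_zero.mp h0)
    set i : ZMod f := j + 1 with hi
    have hij : i - 1 = j := by rw [hi]; ring
    set N0 : ℤ := (p : ℤ) * M + (s i : ℤ) with hN0def
    have hsi : (s i : ℤ) ≤ (e' : ℤ) * h := by exact_mod_cast hs i
    have hPZ : (2 : ℤ) ≤ (p : ℤ) := by exact_mod_cast hp2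
    have hBnn : (0 : ℤ) ≤ (B : ℤ) := Int.ofNat_nonneg B
    have hpM : (p : ℤ) * M ≤ (p : ℤ) * (-(B : ℤ) - 1) :=
      mul_le_mul_of_nonneg_left hMle' (by linarith)
    have hN0 : N0 < 0 := by rw [hN0def]; nlinarith
    have hcz := BKaux.intPart_coeff (hrelY i) N0 hN0
    simp only [HahnSeries.coeff_sub, HahnSeries.coeff_smul, smul_eq_mul,
      BKaux.upow_coeff] at hcz
    have hNs : N0 - (s i : ℤ) = (p : ℤ) * M := by rw [hN0def]; ring
    rw [hNs, BKaux.subst_coeff, hij, sub_eq_zero] at hcz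
    have hbne : (b i : F) * (y j).coeff M ≠ 0 :=
      mul_ne_zero (b i).ne_zero hcoeffj
    have hcoeffi : (y i).coeff (N0 - r i) ≠ 0 := by
      intro h0
      rw [h0, mul_zero] at hcz
      exact hbne hcz.symm
    have hlt : N0 - (r i : ℤ) < (y i).order := by
      refine lt_of_lt_of_le ?_ (hMle i)
      have hr : (0 : ℤ) ≤ (r i : ℤ) := Int.ofNat_nonneg _
      rw [hN0def]
      nlinarith
    exact hcoeffi (HahnSeries.coeff_eq_zero_of_lt_order hlt)
  refine ⟨y, hmk, fun i n hn => ?_⟩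
  have := HahnSeries.order_le_of_coeff_ne_zero hn
  have := hMle i
  omega
end

section
/- Assume e' := Ne for an integer e ≥ 1, and that 0 ≤ r_i ≤ e' and 0 ≤ s_i ≤ e' for all i. Then dim_F H ≤ ⌈e/(p−1)⌉ · f. (This is the explicit form of the bound dim kExt¹(M, N) ≤ ⌈e/(p−1)⌉f for rank one Breuil–Kisin modules of height at most one with tame descent data, since the kernel of the map from extensions of Breuil–Kisin modules to extensions of étale φ-modules embeds into H.) -/
section AuxLemmas

variable {F : Type*} [Field F]

theorem mem_intPart_iff {x : LaurentSeries F} :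
    x ∈ intPart F ↔ ∀ n : ℤ, n < 0 → x.coeff n = 0 := Iff.rfl

theorem aux_single_pow_mul_coeff (r : ℕ) (y : LaurentSeries F) (n : ℤ) :
    ((HahnSeries.single (1 : ℤ) (1 : F)) ^ r * y).coeff n = y.coeff (n - r) := by
  rw [HahnSeries.single_pow, one_pow]
  have h := HahnSeries.coeff_single_mul_add (r := (1 : F)) (x := y)
    (b := (r • (1 : ℤ))) (a := n - r)
  have harg : (n - (r : ℤ)) + r • (1 : ℤ) = n := by simp
  rw [harg] at h
  simpa using h

theorem aux_subst_coeff (p : ℕ) (hp : 0 < p) (y : LaurentSeries F) (m : ℤ) :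
    (substLaurent F p hp y).coeff ((p : ℤ) * m) = y.coeff m :=
  HahnSeries.embDomain_coeff (a := m)

theorem aux_subst_coeff_zero (p : ℕ) (hp : 0 < p) (y : LaurentSeries F) (k : ℤ)
    (h : ¬ ((p : ℤ) ∣ k)) : (substLaurent F p hp y).coeff k = 0 := by
  apply HahnSeries.embDomain_notin_range
  rintro ⟨m, hm⟩
  exact h ⟨m, hm.symm⟩

noncomputable def coefQAux (F : Type*) [Field F] (n : ℤ) (hn : n < 0) :
    (LaurentSeries F ⧸ intPart F) →ₗ[F] F :=
  Submodule.liftQ _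
    { toFun := fun x => x.coeff n
      map_add' := fun x y => by simp [HahnSeries.coeff_add]
      map_smul' := fun m x => by simp [HahnSeries.coeff_smul] }
    (fun x hx => hx n hn)

theorem coefQAux_mk (F : Type*) [Field F] (n : ℤ) (hn : n < 0) (x : LaurentSeries F) :
    coefQAux F n hn (Submodule.Quotient.mk x) = x.coeff n := rfl

end AuxLemmas

set_option maxHeartbeats 1000000

/-- If `e' = Ne` with `e ≥ 1` and `0 ≤ r_i, s_i ≤ e'` for all `i`, then
`dim_F H ≤ ⌈e/(p-1)⌉ · f`.  This is the explicit form of the bound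
`dim kExt¹(M, N) ≤ ⌈e/(p-1)⌉f` for rank one Breuil–Kisin modules of height at most one with
tame descent data, since the kernel of the map from extensions of Breuil–Kisin modules to
extensions of étale `φ`-modules embeds into `H = Hom(M, N[1/u]/N)`. -/
theorem ker_ext_dimension_bound
    (p f f' e : ℕ) (hp : p.Prime) [NeZero f] (hf' : 0 < f') (hff' : f ∣ f') (he : 1 ≤ e)
    (F : Type*) [Field F] [Fintype F] [CharP F p]
    (a b : ZMod f → Fˣ) (r s : ZMod f → ℕ)
    (c d : ZMod f → ZMod (p ^ f' - 1))
    (hc : ∀ i, (p : ZMod (p ^ f' - 1)) * c (i - 1) = c i + (r i : ZMod (p ^ f' - 1)))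
    (hd : ∀ i, (p : ZMod (p ^ f' - 1)) * d (i - 1) = d i + (s i : ZMod (p ^ f' - 1)))
    (hr : ∀ i, r i ≤ (p ^ f' - 1) * e) (hs : ∀ i, s i ≤ (p ^ f' - 1) * e) :
    Module.rank F
        ↥(Hspace F p hp.pos f (p ^ f' - 1) (fun i => (a i : F)) (fun i => (b i : F)) r s c d)
      ≤ ((e ⌈/⌉ (p - 1)) * f : ℕ) := by
  classical
  have hp1 : 1 < p := hp.one_lt
  have hN1 : 1 ≤ (p ^ f' - 1) := by
    have h2 : 2 ≤ p ^ f' := Nat.one_lt_pow hf'.ne' hp1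
    omega
  haveI : NeZero (p ^ f' - 1) := ⟨by omega⟩
  set K := e ⌈/⌉ (p - 1) with hKdef
  have hpK : e ≤ K * (p - 1) := by
    have h := le_smul_ceilDiv (b := e) (Nat.sub_pos_of_lt hp1)
    simpa [smul_eq_mul, mul_comm] using h
  -- choice of representative degrees t i
  set t : ZMod f → ℕ := fun i => if (d i - c i).val = 0 then (p ^ f' - 1) else (d i - c i).val with htdef
  have ht1 : ∀ i, 1 ≤ t i ∧ t i ≤ (p ^ f' - 1) := by
    intro i
    by_cases h : (d i - c i).val = 0
    · have ht : t i = (p ^ f' - 1) := if_pos h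
      rw [ht]; exact ⟨hN1, le_rfl⟩
    · have ht : t i = (d i - c i).val := if_neg h
      rw [ht]; exact ⟨Nat.pos_of_ne_zero h, (ZMod.val_lt _).le⟩
  have ht2 : ∀ i, ((t i : ℕ) : ZMod (p ^ f' - 1)) = d i - c i := by
    intro i
    by_cases h : (d i - c i).val = 0
    · have h0 : d i - c i = 0 := (ZMod.val_eq_zero (n := (p ^ f' - 1)) (d i - c i)).mp h
      have ht : t i = (p ^ f' - 1) := if_pos h
      rw [ht, h0, ZMod.natCast_self]
    · have ht : t i = (d i - c i).val := if_neg h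
      rw [ht, ZMod.natCast_val, ZMod.cast_id]
  have hdeg_neg : ∀ (i : ZMod f) (j : Fin K), -((t i : ℤ) + ((p ^ f' - 1 : ℕ) : ℤ) * (j.1 : ℤ)) < 0 := by
    intro i j
    have h1 : (1 : ℤ) ≤ (t i : ℤ) := by exact_mod_cast (ht1 i).1
    have h2 : (0 : ℤ) ≤ ((p ^ f' - 1 : ℕ) : ℤ) * (j.1 : ℤ) := by positivity
    linarith
  let Φ : Hspace F p hp.pos f (p ^ f' - 1) (fun i => (a i : F)) (fun i => (b i : F)) r s c d →ₗ[F]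
      ((ZMod f × Fin K) → F) :=
    LinearMap.pi fun q => (coefQAux F (-((t q.1 : ℤ) + ((p ^ f' - 1 : ℕ) : ℤ) * (q.2.1 : ℤ))) (hdeg_neg q.1 q.2)) ∘ₗ
      (LinearMap.proj q.1) ∘ₗ (Submodule.subtype _)
  have hinj : Function.Injective Φ := by
    rw [← LinearMap.ker_eq_bot, LinearMap.ker_eq_bot']
    rintro ⟨μ, hμ⟩ hΦ
    obtain ⟨x, hx1, hx2, hx3⟩ := hμ
    -- the basic coefficient equation
    have E : ∀ (i : ZMod f) (n : ℤ), n < 0 →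
        (a i : F) * (x i).coeff (n - r i)
          = (b i : F) * (substLaurent F p hp.pos (x (i - 1))).coeff (n - s i) := by
      intro i n hn
      have h3 : ((a i : F) • ((HahnSeries.single (1 : ℤ) (1 : F)) ^ r i * x i)
          - (b i : F) • ((HahnSeries.single (1 : ℤ) (1 : F)) ^ s i *
              substLaurent F p hp.pos (x (i - 1)))).coeff n = 0 :=
        (mem_intPart_iff.mp (hx3 i)) n hn
      rw [HahnSeries.coeff_sub, HahnSeries.coeff_smul, HahnSeries.coeff_smul,
        aux_single_pow_mul_coeff, aux_single_pow_mul_coeff, sub_eq_zero] at h3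
      simpa [smul_eq_mul] using h3
    have claimA : ∀ (i : ZMod f) (m : ℤ), (p : ℤ) * m + (s i : ℤ) < 0 →
        ((x i).coeff ((p : ℤ) * m + (s i : ℤ) - (r i : ℤ)) = 0 ↔ (x (i - 1)).coeff m = 0) := by
      intro i m hm
      have hE := E i ((p : ℤ) * m + (s i : ℤ)) hm
      rw [show (p : ℤ) * m + (s i : ℤ) - (s i : ℤ) = (p : ℤ) * m by ring,
        aux_subst_coeff] at hE
      have ha : (a i : F) ≠ 0 := (a i).ne_zero
      have hb : (b i : F) ≠ 0 := (b i).ne_zero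
      constructor
      · intro h
        rw [h, mul_zero] at hE
        exact (mul_eq_zero.mp hE.symm).resolve_left hb
      · intro h
        rw [h, mul_zero] at hE
        exact (mul_eq_zero.mp hE).resolve_left ha
    -- a uniform lower bound on the supports
    obtain ⟨B, hB⟩ : ∃ B : ℤ, ∀ i n, (x i).coeff n ≠ 0 → B ≤ n := by
      refine ⟨Finset.univ.inf' Finset.univ_nonempty
        (fun i => if h : x i = 0 then 0 else (x i).order), fun i n hne => ?_⟩
      have hxi : x i ≠ 0 := fun h0 => hne (by simp [h0])
      refine le_trans (Finset.inf'_le _ (Finset.mem_univ i)) ?_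
      rw [dif_neg hxi]
      exact HahnSeries.order_le_of_coeff_ne_zero hne
    have hppos : (0 : ℤ) < (p : ℤ) - 1 := by
      have : (1 : ℤ) < (p : ℤ) := by exact_mod_cast hp1
      linarith
    -- one propagation step
    have step : ∀ (i : ZMod f) (m : ℤ), ((p : ℤ) - 1) * m + (((p ^ f' - 1) * e : ℕ) : ℤ) < 0 →
        (x i).coeff m ≠ 0 →
        ∃ m' : ℤ, (x (i + 1)).coeff m' ≠ 0 ∧ m' < m ∧
          ((p : ℤ) - 1) * m' + (((p ^ f' - 1) * e : ℕ) : ℤ) < 0 := by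
      intro i m hcond hne
      have hNe0 : (0 : ℤ) ≤ (((p ^ f' - 1) * e : ℕ) : ℤ) := by positivity
      have hm0 : m < 0 := by nlinarith
      have hsle : ((s (i + 1) : ℕ) : ℤ) ≤ (((p ^ f' - 1) * e : ℕ) : ℤ) := by exact_mod_cast hs (i + 1)
      have hr0 : (0 : ℤ) ≤ ((r (i + 1) : ℕ) : ℤ) := by positivity
      have hpm : (p : ℤ) * m = ((p : ℤ) - 1) * m + m := by ring
      have hm' : (p : ℤ) * m + (s (i + 1) : ℤ) < 0 := by linarith
      have hA := claimA (i + 1) m hm'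
      rw [add_sub_cancel_right] at hA
      refine ⟨(p : ℤ) * m + (s (i + 1) : ℤ) - (r (i + 1) : ℤ), fun h0 => hne (hA.mp h0), ?_, ?_⟩
      · linarith
      · have hlt : (p : ℤ) * m + (s (i + 1) : ℤ) - (r (i + 1) : ℤ) < m := by linarith
        nlinarith
    -- degrees far in the negative give vanishing coefficients
    have claimB : ∀ (i : ZMod f) (m : ℤ),
        ((p : ℤ) - 1) * m + (((p ^ f' - 1) * e : ℕ) : ℤ) < 0 → (x i).coeff m = 0 := by
      have main : ∀ k : ℕ, ∀ (i : ZMod f) (m : ℤ), (m - B).toNat ≤ k →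
          ((p : ℤ) - 1) * m + (((p ^ f' - 1) * e : ℕ) : ℤ) < 0 → (x i).coeff m = 0 := by
        intro k
        induction k with
        | zero =>
          intro i m hk hcond
          by_contra hne
          obtain ⟨m', hne', hlt', _⟩ := step i m hcond hne
          have h1 := hB _ _ hne'
          have h2 := hB _ _ hne
          omega
        | succ k IH =>
          intro i m hk hcond
          by_contra hne
          obtain ⟨m', hne', hlt', hcond'⟩ := step i m hcond hne
          have h1 := hB _ _ hne'
          have h2 := hB _ _ hne
          exact hne' (IH (i + 1) m' (by omega) hcond')
      exact fun i m hcond => main (m - B).toNat i m le_rfl hcond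
    -- every negative degree in the support lies in the window
    have window : ∀ (i : ZMod f) (n : ℤ), n < 0 → (x i).coeff n ≠ 0 →
        ∃ j : Fin K, n = -((t i : ℤ) + ((p ^ f' - 1 : ℕ) : ℤ) * (j.1 : ℤ)) := by
      intro i n hn hne
      have hres := hx2 i n hne
      have hge : (0 : ℤ) ≤ ((p : ℤ) - 1) * n + (((p ^ f' - 1) * e : ℕ) : ℤ) := by
        by_contra h
        push_neg at h
        exact hne (claimB i n h)
      have hdvd : ((p ^ f' - 1 : ℕ) : ℤ) ∣ (n + (t i : ℤ)) := by
        have h0 : (((n + (t i : ℤ)) : ℤ) : ZMod (p ^ f' - 1)) = 0 := by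
          push_cast
          rw [hres, ht2 i]
          ring
        exact (ZMod.intCast_zmod_eq_zero_iff_dvd _ _).mp h0
      obtain ⟨z, hz⟩ := hdvd
      have hNz : (1 : ℤ) ≤ ((p ^ f' - 1 : ℕ) : ℤ) := by exact_mod_cast hN1
      have hti1 : (1 : ℤ) ≤ (t i : ℤ) := by exact_mod_cast (ht1 i).1
      have htiN : ((t i : ℕ) : ℤ) ≤ ((p ^ f' - 1 : ℕ) : ℤ) := by exact_mod_cast (ht1 i).2
      have hz0 : z ≤ 0 := by nlinarith
      have hKe : (e : ℤ) ≤ (K : ℤ) * ((p : ℤ) - 1) := by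
        have h := hpK
        have h2 : ((K * (p - 1) : ℕ) : ℤ) = (K : ℤ) * ((p : ℤ) - 1) := by
          rw [Nat.cast_mul, Nat.cast_sub hp1.le, Nat.cast_one]
        calc (e : ℤ) ≤ ((K * (p - 1) : ℕ) : ℤ) := by exact_mod_cast h
          _ = (K : ℤ) * ((p : ℤ) - 1) := h2
      have hNe : (((p ^ f' - 1) * e : ℕ) : ℤ) = ((p ^ f' - 1 : ℕ) : ℤ) * (e : ℤ) := by push_cast; ring
      have hzK : -(K : ℤ) < z := by
        by_contra h
        push_neg at h
        have hNK : ((p ^ f' - 1 : ℕ) : ℤ) * (e : ℤ) ≤ ((p ^ f' - 1 : ℕ) : ℤ) * ((K : ℤ) * ((p : ℤ) - 1)) :=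
          mul_le_mul_of_nonneg_left hKe (by positivity)
        have hzz : ((p : ℤ) - 1) * (((p ^ f' - 1 : ℕ) : ℤ) * z) ≤ ((p : ℤ) - 1) * (((p ^ f' - 1 : ℕ) : ℤ) * (-(K : ℤ))) :=
          mul_le_mul_of_nonneg_left
            (mul_le_mul_of_nonneg_left h (by positivity)) hppos.le
        have ht' : ((p : ℤ) - 1) * (t i : ℤ) ≥ ((p : ℤ) - 1) * 1 :=
          mul_le_mul_of_nonneg_left hti1 hppos.le
        have hPn : ((p : ℤ) - 1) * n = ((p : ℤ) - 1) * (((p ^ f' - 1 : ℕ) : ℤ) * z)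
            - ((p : ℤ) - 1) * (t i : ℤ) := by
          rw [← mul_sub]
          congr 1
          linarith
        rw [hNe] at hge
        nlinarith [hge, hPn, hzz, hNK, ht']
      refine ⟨⟨(-z).toNat, by omega⟩, ?_⟩
      have hcast : (((-z).toNat : ℕ) : ℤ) = -z := Int.toNat_of_nonneg (by omega)
      simp only [hcast]
      linarith [hz]
    -- conclude injectivity
    apply Subtype.ext
    funext i
    show μ i = 0
    rw [← hx1 i, Submodule.Quotient.mk_eq_zero]
    intro n hn
    by_contra hne
    obtain ⟨j, hj⟩ := window i n hn hne
    have hΦij : coefQAux F (-((t i : ℤ) + ((p ^ f' - 1 : ℕ) : ℤ) * (j.1 : ℤ))) (hdeg_neg i j)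
        (Submodule.Quotient.mk (x i)) = 0 := by
      rw [hx1 i]
      exact congrFun hΦ (i, j)
    rw [coefQAux_mk] at hΦij
    rw [hj] at hne
    exact hne hΦij
  have h1 : Module.rank F
      ↥(Hspace F p hp.pos f (p ^ f' - 1) (fun i => (a i : F)) (fun i => (b i : F)) r s c d)
      ≤ Module.rank F ((ZMod f × Fin K) → F) := Φ.rank_le_of_injective hinj
  have h2 : Module.rank F ((ZMod f × Fin K) → F) = ((K * f : ℕ) : Cardinal) := by
    rw [rank_fun', Fintype.card_prod, ZMod.card, Fintype.card_fin]
    norm_cast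
    ring
  exact h1.trans_eq h2
end
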